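/- arXiv:1401.1980 — 15 statements merged into one kernel-verified Lean document; each statement's English description precedes it below -/
import Mathlib

section
/- Z(G) = ⟨a^k, b^{s'}⟩, i.e., the center of G is the subgroup generated by a^k and b^{s'}, where k = m/gcd(r−1, m) and s' is the multiplicative order of r modulo m. -/
/-- Conjugation by powers of `b`. -/
private lemma metacyclic_conj_pow {G : Type*} [Group G] (a b : G) (r : ℕ)
    (hcon : b⁻¹ * a * b = a ^ r) :
    ∀ j n : ℕ, (b ^ j)⁻¹ * a ^ n * b ^ j = a ^ (n * r ^ j) := by
  have h1 : ∀ n : ℕ, b⁻¹ * a ^ n * b = a ^ (n * r) := by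
    intro n
    have : (b⁻¹ * a * b⁻¹⁻¹) ^ n = b⁻¹ * a ^ n * b⁻¹⁻¹ := conj_pow
    rw [inv_inv] at this
    rw [← this, hcon, ← pow_mul, mul_comm r n]
  intro j
  induction j with
  | zero => simp
  | succ j ih =>
    intro n
    have : (b ^ (j + 1))⁻¹ * a ^ n * b ^ (j + 1)
        = b⁻¹ * ((b ^ j)⁻¹ * a ^ n * b ^ j) * b := by
      rw [pow_succ]; group
    rw [this, ih, h1, pow_succ, ← mul_assoc]

/-- Moving powers of `a` past powers of `b` to the left, where `b * a * b⁻¹ = a ^ c`. -/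
private lemma metacyclic_swap {G : Type*} [Group G] (a b : G) (c : ℕ)
    (hc : b * a * b⁻¹ = a ^ c) :
    ∀ j n : ℕ, b ^ j * a ^ n = a ^ (n * c ^ j) * b ^ j := by
  have h1 : ∀ n : ℕ, b * a ^ n = a ^ (n * c) * b := by
    intro n
    have : (b * a * b⁻¹) ^ n = b * a ^ n * b⁻¹ := conj_pow
    rw [hc, ← pow_mul, mul_comm c n] at this
    rw [this]; group
  intro j
  induction j with
  | zero => simp
  | succ j ih =>
    intro n
    calc b ^ (j + 1) * a ^ n = b ^ j * (b * a ^ n) := by rw [pow_succ]; group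
      _ = b ^ j * a ^ (n * c) * b := by rw [h1]; group
      _ = a ^ (n * c * c ^ j) * b ^ j * b := by rw [ih]
      _ = a ^ (n * c ^ (j + 1)) * b ^ (j + 1) := by
          rw [pow_succ b, mul_assoc]
          congr 2
          rw [pow_succ, mul_comm (c^j) c, ← mul_assoc]

set_option maxHeartbeats 1000000 in
/-- For the finite metacyclic group
`G = ⟨a, b | a^m = 1, b^s = a^t, b⁻¹ab = a^r⟩`, the center of `G` is the subgroup
generated by `a^k` and `b^{s'}`, where `k = m / gcd (r-1) m` and `s'` is the
multiplicative order of `r` modulo `m`. -/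
theorem center_eq_closure_of_metacyclic {G : Type*} [Group G] [Fintype G]
    (m s t r : ℕ) (hm : 0 < m) (hs : 0 < s) (ht : 0 < t) (hr : 0 < r)
    (hrsm : r ^ s ≡ 1 [MOD m]) (hmt : m ∣ t * (r - 1))
    (a b : G) (hgen : Subgroup.closure ({a, b} : Set G) = ⊤)
    (ham : a ^ m = 1) (hba : b ^ s = a ^ t) (hcon : b⁻¹ * a * b = a ^ r)
    (horda : orderOf a = m)
    (hordb : ∀ j : ℕ, b ^ j ∈ Subgroup.zpowers a ↔ s ∣ j)
    (k : ℕ) (hk : k = m / Nat.gcd (r - 1) m)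
    (s' : ℕ) (hs' : s' = orderOf (r : ZMod m)) :
    Subgroup.center G = Subgroup.closure ({a ^ k, b ^ s'} : Set G) := by
  have conjp := metacyclic_conj_pow a b r hcon
  -- basic facts
  have hgpos : 0 < Nat.gcd (r - 1) m := Nat.gcd_pos_of_pos_right _ hm
  have hpoweq : ∀ x y : ℕ, a ^ x = a ^ y ↔ x ≡ y [MOD m] := by
    intro x y; rw [pow_eq_pow_iff_modEq, horda]
  -- `c := r ^ (s-1)` gives `b * a * b⁻¹ = a ^ c`
  set c : ℕ := r ^ (s - 1) with hc
  have hbab : b * a * b⁻¹ = a ^ c := by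
    have h1 : (b ^ 1)⁻¹ * a ^ c * b ^ 1 = a ^ (c * r ^ 1) := conjp 1 c
    have h2 : c * r ^ 1 = r ^ s := by
      rw [hc, pow_one, ← pow_succ, Nat.sub_add_cancel hs]
    rw [pow_one] at h1
    have h3 : a ^ (c * r ^ 1) = a := by
      have := (hpoweq (c * r ^ 1) 1).mpr (by rw [h2]; exact hrsm)
      simpa using this
    rw [h3] at h1
    calc b * a * b⁻¹ = b * (b⁻¹ * a ^ c * b) * b⁻¹ := by rw [h1]
      _ = a ^ c := by group
  have swap := metacyclic_swap a b c hbab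
  -- every element is of the form a^i * b^j
  have decomp : ∀ g : G, ∃ i j : ℕ, g = a ^ i * b ^ j := by
    intro g
    have hg : g ∈ Subgroup.closure ({a, b} : Set G) := by rw [hgen]; trivial
    induction hg using Subgroup.closure_induction with
    | mem x hx =>
      rcases hx with h | h
      · exact ⟨1, 0, by simp [h]⟩
      · exact ⟨0, 1, by simp [Set.eq_of_mem_singleton h]⟩
    | one => exact ⟨0, 0, by simp⟩
    | mul x y hx hy ihx ihy =>
      obtain ⟨i, j, rfl⟩ := ihx
      obtain ⟨i', j', rfl⟩ := ihy
      refine ⟨i + i' * c ^ j, j + j', ?_⟩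
      rw [pow_add, pow_add]
      calc a ^ i * b ^ j * (a ^ i' * b ^ j')
          = a ^ i * (b ^ j * a ^ i') * b ^ j' := by group
        _ = a ^ i * (a ^ (i' * c ^ j) * b ^ j) * b ^ j' := by rw [swap]
        _ = a ^ i * a ^ (i' * c ^ j) * (b ^ j * b ^ j') := by group
    | inv x hx ihx =>
      obtain ⟨i, j, rfl⟩ := ihx
      have hnb : 0 < orderOf b := orderOf_pos b
      set n : ℕ := orderOf b with hn
      refine ⟨i * (m - 1) * c ^ (j * (n - 1)), j * (n - 1), ?_⟩
      have key : (a ^ i * b ^ j) * (b ^ (j * (n - 1)) * a ^ (i * (m - 1))) = 1 := by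
        have h1 : b ^ j * b ^ (j * (n - 1)) = 1 := by
          rw [← pow_add]
          have hn1 : n - 1 + 1 = n := Nat.succ_pred_eq_of_pos hnb
          have : j + j * (n - 1) = n * j := by
            conv_rhs => rw [← hn1]
            ring
          rw [this, pow_mul, pow_orderOf_eq_one, one_pow]
        have h2 : a ^ i * a ^ (i * (m - 1)) = 1 := by
          rw [← pow_add]
          have hm1 : m - 1 + 1 = m := Nat.succ_pred_eq_of_pos hm
          have : i + i * (m - 1) = m * i := by
            conv_rhs => rw [← hm1]
            ring
          rw [this, pow_mul, ham, one_pow]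
        calc a ^ i * b ^ j * (b ^ (j * (n - 1)) * a ^ (i * (m - 1)))
            = a ^ i * (b ^ j * b ^ (j * (n - 1))) * a ^ (i * (m - 1)) := by group
          _ = a ^ i * a ^ (i * (m - 1)) := by rw [h1]; group
          _ = 1 := h2
      have hinv : (a ^ i * b ^ j)⁻¹ = b ^ (j * (n - 1)) * a ^ (i * (m - 1)) :=
        inv_eq_of_mul_eq_one_right key
      rw [hinv, swap]
  -- arithmetic characterizations
  set g0 : ℕ := Nat.gcd (r - 1) m with hg0
  have hd1 : g0 ∣ r - 1 := Nat.gcd_dvd_left _ _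
  have hd2 : g0 ∣ m := Nat.gcd_dvd_right _ _
  have hkg : k * g0 = m := by rw [hk]; exact Nat.div_mul_cancel hd2
  obtain ⟨d, hd⟩ := hd1
  have hak_dvd : m ∣ k * (r - 1) := ⟨d, by rw [hd, ← mul_assoc, hkg]⟩
  have hdvd_k : ∀ i : ℕ, m ∣ i * (r - 1) → k ∣ i := by
    intro i hi
    have hco : Nat.Coprime k ((r - 1) / g0) := by
      rw [hk, hg0, Nat.gcd_comm]
      exact Nat.coprime_div_gcd_div_gcd (by rw [Nat.gcd_comm]; exact hgpos)
    have hdq : (r - 1) / g0 = d := by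
      rw [hd]; exact Nat.mul_div_cancel_left d hgpos
    rw [hdq] at hco
    obtain ⟨e, he⟩ := hi
    have hcan : g0 * (i * d) = g0 * (k * e) := by
      calc g0 * (i * d) = i * (g0 * d) := by ring
        _ = i * (r - 1) := by rw [← hd]
        _ = m * e := he
        _ = k * g0 * e := by rw [hkg]
        _ = g0 * (k * e) := by ring
    have : i * d = k * e := Nat.eq_of_mul_eq_mul_left hgpos hcan
    exact hco.dvd_of_dvd_mul_right ⟨e, this⟩
  have hchar_j : ∀ j : ℕ, r ^ j ≡ 1 [MOD m] ↔ s' ∣ j := by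
    intro j
    rw [hs', orderOf_dvd_iff_pow_eq_one, ← Nat.cast_one (R := ZMod m),
      ← Nat.cast_pow, ZMod.natCast_eq_natCast_iff]
  have hchar_i : ∀ i : ℕ, i ≡ i * r [MOD m] ↔ m ∣ i * (r - 1) := by
    intro i
    rw [Nat.modEq_iff_dvd' (Nat.le_mul_of_pos_right i hr), Nat.mul_sub, Nat.mul_one]
  -- commuting with both generators implies central
  have hcent : ∀ g : G, Commute g a → Commute g b → g ∈ Subgroup.center G := by
    intro g hca hcb
    rw [Subgroup.mem_center_iff]
    intro h
    have hh : h ∈ Subgroup.closure ({a, b} : Set G) := by rw [hgen]; trivial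
    induction hh using Subgroup.closure_induction with
    | mem x hx =>
      rcases hx with h' | h'
      · rw [h']; exact hca.symm.eq
      · rw [Set.eq_of_mem_singleton h']; exact hcb.symm.eq
    | one => simp
    | mul x y hx hy ihx ihy =>
      rw [mul_assoc, ihy, ← mul_assoc, ihx, mul_assoc]
    | inv x hx ihx =>
      have hcxg : Commute x g := ihx
      exact hcxg.inv_left.eq
  apply le_antisymm
  · -- center ⊆ closure
    intro g hg
    obtain ⟨i, j, rfl⟩ := decomp g
    have hz := Subgroup.mem_center_iff.mp hg
    -- commuting with b forces k ∣ i
    have hzb : b * a ^ i = a ^ i * b := by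
      have h1 := hz b
      have h2 : b * a ^ i * b ^ j = a ^ i * b * b ^ j := by
        calc b * a ^ i * b ^ j = b * (a ^ i * b ^ j) := by group
          _ = a ^ i * b ^ j * b := h1
          _ = a ^ i * b * b ^ j := by group
      exact mul_right_cancel h2
    have hir : a ^ (i * r) = a ^ i := by
      have h1 := conjp 1 i
      rw [pow_one, pow_one] at h1
      rw [← h1]
      calc b⁻¹ * a ^ i * b = b⁻¹ * (a ^ i * b) := by group
        _ = b⁻¹ * (b * a ^ i) := by rw [hzb]
        _ = a ^ i := by group
    have hki : k ∣ i := hdvd_k i ((hchar_i i).mp ((hpoweq (i * r) i).mp hir).symm)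
    -- commuting with a forces s' ∣ j
    have hza : b ^ j * a = a * b ^ j := by
      have h1 := hz a
      have h2 : a ^ i * (b ^ j * a) = a ^ i * (a * b ^ j) := by
        calc a ^ i * (b ^ j * a) = a ^ i * b ^ j * a := by group
          _ = a * (a ^ i * b ^ j) := (h1).symm
          _ = a ^ i * (a * b ^ j) := by
              rw [← mul_assoc, ← mul_assoc]
              congr 1
              exact ((Commute.refl a).pow_right i).eq
      exact mul_left_cancel h2
    have hrj : a ^ (r ^ j) = a ^ 1 := by
      have h1 := conjp j 1
      rw [one_mul, pow_one] at h1
      rw [← h1, pow_one]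
      calc (b ^ j)⁻¹ * a * b ^ j = (b ^ j)⁻¹ * (a * b ^ j) := by group
        _ = (b ^ j)⁻¹ * (b ^ j * a) := by rw [hza]
        _ = a := by group
    have hsj : s' ∣ j := (hchar_j j).mp ((hpoweq (r ^ j) 1).mp hrj)
    obtain ⟨u, rfl⟩ := hki
    obtain ⟨v, rfl⟩ := hsj
    rw [pow_mul, pow_mul]
    have hmem1 : a ^ k ∈ Subgroup.closure ({a ^ k, b ^ s'} : Set G) :=
      Subgroup.subset_closure (Set.mem_insert _ _)
    have hmem2 : b ^ s' ∈ Subgroup.closure ({a ^ k, b ^ s'} : Set G) :=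
      Subgroup.subset_closure (Set.mem_insert_of_mem _ rfl)
    exact Subgroup.mul_mem _ (Subgroup.pow_mem _ hmem1 u) (Subgroup.pow_mem _ hmem2 v)
  · -- closure ⊆ center
    rw [Subgroup.closure_le]
    rintro x (rfl | rfl)
    · -- a ^ k is central
      refine hcent _ ((Commute.refl a).pow_left k) ?_
      have h1 := conjp 1 k
      rw [pow_one, pow_one] at h1
      have h2 : a ^ (k * r) = a ^ k :=
        (hpoweq _ _).mpr (((hchar_i k).mpr hak_dvd).symm)
      have h3 : b⁻¹ * a ^ k * b = a ^ k := by rw [h1, h2]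
      show a ^ k * b = b * a ^ k
      calc a ^ k * b = b * (b⁻¹ * a ^ k * b) := by group
        _ = b * a ^ k := by rw [h3]
    · -- b ^ s' is central
      refine hcent _ ?_ ((Commute.refl b).pow_left s')
      have h1 := conjp s' 1
      rw [one_mul, pow_one] at h1
      have h2 : a ^ (r ^ s') = a ^ 1 :=
        (hpoweq _ _).mpr ((hchar_j s').mpr dvd_rfl)
      rw [pow_one] at h2
      have h3 : (b ^ s')⁻¹ * a * b ^ s' = a := by rw [h1, h2]
      show b ^ s' * a = a * b ^ s'
      calc b ^ s' * a = b ^ s' * ((b ^ s')⁻¹ * a * b ^ s') := by rw [h3]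
        _ = a * b ^ s' := by group
end

section
/- If u and v are integers such that a^u·b^v lies in the center Z(G), then k divides u and s' divides v, where k = m/gcd(r−1, m) and s' is the multiplicative order of r modulo m. -/
/-- If `u`, `v` are integers such that `a^u · b^v` lies in the center of
the metacyclic group `G = ⟨a, b | a^m = 1, b^s = a^t, b⁻¹ab = a^r⟩`, then `k ∣ u` and
`s' ∣ v`, where `k = m / gcd (r−1) m` and `s'` is the multiplicative order of `r` mod `m`. -/
theorem dvd_of_mem_center {G : Type*} [Group G] [Fintype G]
    (m s t r : ℕ) (hm : 0 < m) (hs : 0 < s) (ht : 0 < t) (hr : 0 < r)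
    (hrsm : r ^ s ≡ 1 [MOD m]) (hmt : m ∣ t * (r - 1))
    (a b : G) (hgen : Subgroup.closure ({a, b} : Set G) = ⊤)
    (ham : a ^ m = 1) (hba : b ^ s = a ^ t) (hcon : b⁻¹ * a * b = a ^ r)
    (horda : orderOf a = m)
    (hordb : ∀ j : ℕ, b ^ j ∈ Subgroup.zpowers a ↔ s ∣ j)
    (k : ℕ) (hk : k = m / Nat.gcd (r - 1) m)
    (s' : ℕ) (hs' : s' = orderOf (r : ZMod m))
    (u v : ℤ) (huv : a ^ u * b ^ v ∈ Subgroup.center G) :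
    (k : ℤ) ∣ u ∧ (s' : ℤ) ∣ v := by
  have hcomm_a := Subgroup.mem_center_iff.mp huv a
  have hcomm_b := Subgroup.mem_center_iff.mp huv b
  -- a commutes with b ^ v
  have h1 : a * b ^ v = b ^ v * a := by
    have h : a ^ u * (a * b ^ v) = a ^ u * (b ^ v * a) := by
      have ha : a * a ^ u = a ^ u * a := (Commute.self_zpow a u).eq
      calc a ^ u * (a * b ^ v) = a * (a ^ u * b ^ v) := by rw [← mul_assoc, ← ha, mul_assoc]
        _ = a ^ u * b ^ v * a := hcomm_a
        _ = a ^ u * (b ^ v * a) := by group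
    exact mul_left_cancel h
  -- b commutes with a ^ u
  have h2 : b * a ^ u = a ^ u * b := by
    have h : (b * a ^ u) * b ^ v = (a ^ u * b) * b ^ v := by
      calc (b * a ^ u) * b ^ v = b * (a ^ u * b ^ v) := by group
        _ = a ^ u * b ^ v * b := hcomm_b
        _ = a ^ u * (b ^ v * b) := by group
        _ = a ^ u * (b * b ^ v) := by rw [(Commute.self_zpow b v).eq]
        _ = (a ^ u * b) * b ^ v := by group
    exact mul_right_cancel h
  constructor
  · -- k ∣ u
    have h3 : b⁻¹ * a ^ u * b = a ^ u := by
      rw [mul_assoc, ← h2, ← mul_assoc, inv_mul_cancel, one_mul]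
    have h4 : b⁻¹ * a ^ u * b = a ^ ((r : ℤ) * u) := by
      have : b⁻¹ * a ^ u * (b⁻¹)⁻¹ = (b⁻¹ * a * (b⁻¹)⁻¹) ^ u := conj_zpow.symm
      rw [inv_inv] at this
      rw [this, hcon, ← zpow_natCast a r, ← zpow_mul]
    have h5 : a ^ ((r : ℤ) * u) = a ^ u := by rw [← h4, h3]
    have h6 : (r : ℤ) * u ≡ u [ZMOD m] := by
      have := zpow_eq_zpow_iff_modEq.mp h5
      rwa [horda] at this
    have hdvd : (m : ℤ) ∣ u * ((r : ℤ) - 1) := by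
      have h7 := Int.ModEq.dvd h6.symm
      have : (r : ℤ) * u - u = u * ((r : ℤ) - 1) := by ring
      rwa [this] at h7
    -- now number theory
    set g := Nat.gcd (r - 1) m with hg
    have hgpos : 0 < g := Nat.gcd_pos_of_pos_right _ hm
    have hcop : Nat.Coprime (m / g) ((r - 1) / g) :=
      (Nat.coprime_div_gcd_div_gcd hgpos).symm
    have hm' : (m : ℤ) = (g : ℤ) * (k : ℤ) := by
      rw [hk]
      exact_mod_cast (Nat.div_mul_cancel (Nat.gcd_dvd_right (r-1) m)).symm.trans
        (Nat.mul_comm _ _)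
    have hr1 : ((r : ℤ) - 1) = (g : ℤ) * (((r - 1) / g : ℕ) : ℤ) := by
      have h8 : ((r - 1 : ℕ) : ℤ) = (r : ℤ) - 1 := by
        have : 1 ≤ r := hr
        omega
      rw [← h8]
      exact_mod_cast (Nat.div_mul_cancel (Nat.gcd_dvd_left (r-1) m)).symm.trans
        (Nat.mul_comm _ _)
    rw [hm', hr1] at hdvd
    have hdvd2 : (k : ℤ) ∣ u * (((r - 1) / g : ℕ) : ℤ) := by
      have hgne : (g : ℤ) ≠ 0 := by exact_mod_cast hgpos.ne'
      have : (g : ℤ) * (k : ℤ) ∣ (g : ℤ) * (u * (((r - 1) / g : ℕ) : ℤ)) := by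
        convert hdvd using 1; ring
      exact (mul_dvd_mul_iff_left hgne).mp this
    have hcop' : IsCoprime ((k : ℤ)) ((((r - 1) / g : ℕ) : ℤ)) := by
      rw [Nat.isCoprime_iff_coprime]
      rw [hk]
      exact hcop
    exact hcop'.dvd_of_dvd_mul_right hdvd2
  · -- s' ∣ v
    have hconj : ∀ j : ℕ, (b ^ j)⁻¹ * a * b ^ j = a ^ (r ^ j) := by
      intro j
      induction j with
      | zero => simp
      | succ n ih =>
        have : (b ^ (n+1))⁻¹ * a * b ^ (n+1) = b⁻¹ * ((b ^ n)⁻¹ * a * b ^ n) * b := by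
          rw [pow_succ]
          group
        rw [this, ih]
        calc b⁻¹ * a ^ (r ^ n) * b = (b⁻¹ * a * b) ^ (r ^ n) := by
              have := (conj_pow (i := r ^ n) (a := b⁻¹) (b := a))
              rw [inv_inv] at this
              exact this.symm
          _ = (a ^ r) ^ (r ^ n) := by rw [hcon]
          _ = a ^ (r ^ (n + 1)) := by rw [← pow_mul, ← pow_succ']
    set n := v.natAbs with hn
    have hcn : Commute a (b ^ (n : ℤ)) := by
      rcases Int.natAbs_eq v with he | he
      · rw [← he]; exact h1
      · have hb : b ^ (n : ℤ) = (b ^ v)⁻¹ := by rw [he, zpow_neg, inv_inv]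
        rw [hb]
        exact Commute.inv_right h1
    have hcn' : Commute a (b ^ n) := by rwa [zpow_natCast] at hcn
    have hfix : a ^ (r ^ n) = a ^ 1 := by
      rw [pow_one, ← hconj n, mul_assoc, hcn'.eq, ← mul_assoc, inv_mul_cancel, one_mul]
    have hmod : r ^ n ≡ 1 [MOD m] := by
      have := pow_eq_pow_iff_modEq.mp hfix
      rwa [horda] at this
    have hz : (r : ZMod m) ^ n = 1 := by
      have h9 : ((r ^ n : ℕ) : ZMod m) = ((1 : ℕ) : ZMod m) :=
        (ZMod.natCast_eq_natCast_iff _ _ _).mpr hmod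
      push_cast at h9
      exact h9
    have hd : orderOf (r : ZMod m) ∣ n := orderOf_dvd_of_pow_eq_one hz
    rw [hs']
    exact Int.dvd_natAbs.mp (Int.natCast_dvd_natCast.mpr hd)
end

section
/- The quotient G/Z(G) is isomorphic to the semidirect product (ℤ/kℤ) ⋊ (ℤ/s'ℤ), where the generator of ℤ/s'ℤ acts on ℤ/kℤ by multiplication by r; equivalently, G/Z(G) is the split metacyclic group with presentation ⟨c, d | c^k = 1, d^{s'} = 1, d⁻¹cd = c^r⟩. -/
private lemma conj_pow_nat {G : Type*} [Group G] {a b : G} {r : ℕ}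
    (h : b⁻¹ * a * b = a ^ r) (j i : ℕ) :
    (b ^ j)⁻¹ * a ^ i * b ^ j = a ^ (i * r ^ j) := by
  induction j generalizing i with
  | zero => simp
  | succ j ih =>
    have h1 : b⁻¹ * a ^ i * b = a ^ (i * r) := by
      have h2 : b⁻¹ * a ^ i * b = (b⁻¹ * a * b) ^ i := by
        have h3 := conj_pow (i := i) (a := b⁻¹) (b := a)
        rw [inv_inv] at h3
        exact h3.symm
      rw [h2, h, ← pow_mul, mul_comm]
    calc (b ^ (j+1))⁻¹ * a ^ i * b ^ (j+1)
        = (b ^ j)⁻¹ * (b⁻¹ * a ^ i * b) * b ^ j := by rw [pow_succ]; group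
      _ = (b ^ j)⁻¹ * a ^ (i * r) * b ^ j := by rw [h1]
      _ = a ^ (i * r * r ^ j) := ih _
      _ = a ^ (i * r ^ (j+1)) := by rw [mul_assoc, ← pow_succ']

private lemma pow_eq_of_cast_eq {Q : Type*} [Group Q] {g : Q} {n : ℕ} (hg : g ^ n = 1)
    {i j : ℕ} (h : (i : ZMod n) = (j : ZMod n)) : g ^ i = g ^ j := by
  have hmod : i % n = j % n := (ZMod.natCast_eq_natCast_iff i j n).mp h
  rw [pow_eq_pow_mod i hg, pow_eq_pow_mod j hg, hmod]

private def zmodPowHom {Q : Type*} [Group Q] (n : ℕ) [NeZero n] (g : Q) (hg : g ^ n = 1) :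
    Multiplicative (ZMod n) →* Q where
  toFun x := g ^ (Multiplicative.toAdd x).val
  map_one' := by simp
  map_mul' x y := by
    simp only [toAdd_mul, ← pow_add]
    apply pow_eq_of_cast_eq hg
    simp [ZMod.natCast_val, ZMod.cast_id]

@[simp] private lemma zmodPowHom_apply {Q : Type*} [Group Q] (n : ℕ) [NeZero n] (g : Q)
    (hg : g ^ n = 1) (x : Multiplicative (ZMod n)) :
    zmodPowHom n g hg x = g ^ (Multiplicative.toAdd x).val := rfl

/-- The quotient `G/Z(G)` of the metacyclic group
`G = ⟨a, b | a^m = 1, b^s = a^t, b⁻¹ab = a^r⟩` is isomorphic to the semidirect product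
`(ℤ/kℤ) ⋊ (ℤ/s'ℤ)`, where the generator of `ℤ/s'ℤ` acts on `ℤ/kℤ` by multiplication by
`r` (so the class `x` acts by multiplication by `r^x`); here `k = m / gcd (r−1) m` and
`s'` is the multiplicative order of `r` mod `m`. -/
theorem quotient_center_iso_semidirect {G : Type*} [Group G] [Fintype G]
    (m s t r : ℕ) (hm : 0 < m) (hs : 0 < s) (ht : 0 < t) (hr : 0 < r)
    (hrsm : r ^ s ≡ 1 [MOD m]) (hmt : m ∣ t * (r - 1))
    (a b : G) (hgen : Subgroup.closure ({a, b} : Set G) = ⊤)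
    (ham : a ^ m = 1) (hba : b ^ s = a ^ t) (hcon : b⁻¹ * a * b = a ^ r)
    (horda : orderOf a = m)
    (hordb : ∀ j : ℕ, b ^ j ∈ Subgroup.zpowers a ↔ s ∣ j)
    (k : ℕ) (hk : k = m / Nat.gcd (r - 1) m)
    (s' : ℕ) (hs' : s' = orderOf (r : ZMod m))
    (φ : Multiplicative (ZMod s') →* MulAut (Multiplicative (ZMod k)))
    (hφ : ∀ (x : ZMod s') (y : ZMod k),
      φ (Multiplicative.ofAdd x) (Multiplicative.ofAdd y) =
        Multiplicative.ofAdd ((r : ZMod k) ^ x.val * y)) :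
    Nonempty ((G ⧸ Subgroup.center G) ≃*
      (Multiplicative (ZMod k) ⋊[φ] Multiplicative (ZMod s'))) := by
  obtain ⟨r', rfl⟩ : ∃ r', r = r' + 1 := ⟨r - 1, by omega⟩
  simp only [Nat.add_sub_cancel] at hk hmt
  -- basic positivity and instances
  have hgd : 0 < Nat.gcd r' m := Nat.gcd_pos_of_pos_right _ hm
  have hkpos : 0 < k := by
    rw [hk]; exact Nat.div_pos (Nat.le_of_dvd hm (Nat.gcd_dvd_right _ _)) hgd
  haveI : NeZero k := ⟨hkpos.ne'⟩
  have hrsZ : ((r' + 1 : ℕ) : ZMod m) ^ s = 1 := by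
    have h := (ZMod.natCast_eq_natCast_iff ((r' + 1) ^ s) 1 m).mpr hrsm
    rwa [Nat.cast_pow, Nat.cast_one] at h
  have hs'pos : 0 < s' := by
    rw [hs', orderOf_pos_iff, isOfFinOrder_iff_pow_eq_one]
    exact ⟨s, hs, hrsZ⟩
  haveI : NeZero s' := ⟨hs'pos.ne'⟩
  have hrs'm : (r' + 1) ^ s' ≡ 1 [MOD m] := by
    have h : ((r' + 1 : ℕ) : ZMod m) ^ s' = 1 := by
      rw [hs']; exact pow_orderOf_eq_one _
    have h2 : (((r' + 1) ^ s' : ℕ) : ZMod m) = ((1 : ℕ) : ZMod m) := by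
      rw [Nat.cast_pow, Nat.cast_one]; exact h
    exact (ZMod.natCast_eq_natCast_iff _ _ m).mp h2
  -- the conjugation lemma in G
  have hconj := conj_pow_nat hcon
  -- m ∣ k * r'
  have hmk : m ∣ k * r' := by
    have h1 : k * Nat.gcd r' m = m := by
      rw [hk]; exact Nat.div_mul_cancel (Nat.gcd_dvd_right r' m)
    obtain ⟨u, hu⟩ := Nat.gcd_dvd_left r' m
    refine ⟨u, ?_⟩
    conv_lhs => rw [hu]
    rw [← mul_assoc, h1]
  have hakr : a ^ (k * (r' + 1)) = a ^ k := by
    have h1 : a ^ (k * r') = 1 := by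
      obtain ⟨c, hc⟩ := hmk
      rw [hc, pow_mul, ham, one_pow]
    have h2 : k * (r' + 1) = k + k * r' := by ring
    rw [h2, pow_add, h1, mul_one]
  -- a^k is central
  have hakZ : a ^ k ∈ Subgroup.center G := by
    rw [Subgroup.mem_center_iff]
    intro g
    have hle : Subgroup.closure ({a, b} : Set G) ≤ Subgroup.centralizer {a ^ k} := by
      rw [Subgroup.closure_le]
      rintro x (rfl | rfl)
      · rw [SetLike.mem_coe, Subgroup.mem_centralizer_iff]
        rintro y rfl
        exact (Commute.pow_left (Commute.refl x) k).eq
      · rw [SetLike.mem_coe, Subgroup.mem_centralizer_iff]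
        rintro y rfl
        have h1 := hconj 1 k
        simp only [pow_one] at h1
        rw [hakr] at h1
        calc a ^ k * x = x * (x⁻¹ * a ^ k * x) := by group
          _ = x * a ^ k := by rw [h1]
    have hx : g ∈ Subgroup.centralizer {a ^ k} := hle (hgen ▸ Subgroup.mem_top g)
    exact ((Subgroup.mem_centralizer_iff.mp hx) _ rfl).symm
  -- b^{s'} is central
  have hbsZ : b ^ s' ∈ Subgroup.center G := by
    rw [Subgroup.mem_center_iff]
    intro g
    have hle : Subgroup.closure ({a, b} : Set G) ≤ Subgroup.centralizer {b ^ s'} := by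
      rw [Subgroup.closure_le]
      rintro x (rfl | rfl)
      · rw [SetLike.mem_coe, Subgroup.mem_centralizer_iff]
        rintro y rfl
        have h1 := hconj s' 1
        simp only [one_mul] at h1
        have h2 : x ^ ((r' + 1) ^ s') = x ^ 1 := by
          apply pow_eq_of_cast_eq ham
          exact (ZMod.natCast_eq_natCast_iff _ _ m).mpr hrs'm
        rw [h2, pow_one] at h1
        calc b ^ s' * x = b ^ s' * ((b ^ s')⁻¹ * x * b ^ s') := by rw [h1]
          _ = x * b ^ s' := by group
      · rw [SetLike.mem_coe, Subgroup.mem_centralizer_iff]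
        rintro y rfl
        exact (Commute.pow_left (Commute.refl x) s').eq
    have hx : g ∈ Subgroup.centralizer {b ^ s'} := hle (hgen ▸ Subgroup.mem_top g)
    exact ((Subgroup.mem_centralizer_iff.mp hx) _ rfl).symm
  -- quotient map
  set Z := Subgroup.center G with hZ
  let π : G →* G ⧸ Z := QuotientGroup.mk' Z
  have hπa : (π a) ^ k = 1 := by
    rw [← map_pow]
    exact (QuotientGroup.eq_one_iff _).mpr hakZ
  have hπb : ((π b)⁻¹) ^ s' = 1 := by
    rw [inv_pow, ← map_pow, inv_eq_one]
    exact (QuotientGroup.eq_one_iff _).mpr hbsZ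
  let f₁ := zmodPowHom k (π a) hπa
  let f₂ := zmodPowHom s' (π b)⁻¹ hπb
  -- conjugation in the quotient
  have hconjQ : ∀ (j i : ℕ),
      ((π b) ^ j)⁻¹ * (π a) ^ i * (π b) ^ j = (π a) ^ (i * (r' + 1) ^ j) := by
    have hconQ : (π b)⁻¹ * π a * π b = (π a) ^ (r' + 1) := by
      rw [← map_inv, ← map_mul, ← map_mul, hcon, map_pow]
    exact conj_pow_nat hconQ
  -- compatibility for the lift
  have hcompat : ∀ h : Multiplicative (ZMod s'),
      f₁.comp (MulEquiv.toMonoidHom (φ h)) =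
        (MulEquiv.toMonoidHom (MulAut.conj (f₂ h))).comp f₁ := by
    intro h
    refine MonoidHom.ext fun n => ?_
    simp only [MonoidHom.comp_apply, MulEquiv.coe_toMonoidHom, MulAut.conj_apply]
    have hφ' : φ h n = Multiplicative.ofAdd
        (((r' + 1 : ℕ) : ZMod k) ^ (Multiplicative.toAdd h).val * Multiplicative.toAdd n) := by
      conv_lhs => rw [← ofAdd_toAdd h, ← ofAdd_toAdd n]
      exact hφ _ _
    rw [hφ']
    have hf2 : f₂ h = ((π b) ^ (Multiplicative.toAdd h).val)⁻¹ := by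
      show ((π b)⁻¹) ^ (Multiplicative.toAdd h).val = _
      rw [inv_pow]
    rw [hf2, inv_inv]
    show (π a) ^ ((((r' + 1 : ℕ) : ZMod k) ^ (Multiplicative.toAdd h).val *
        Multiplicative.toAdd n).val) = _
    rw [show f₁ n = (π a) ^ (Multiplicative.toAdd n).val from rfl]
    rw [hconjQ (Multiplicative.toAdd h).val (Multiplicative.toAdd n).val]
    apply pow_eq_of_cast_eq hπa
    push_cast [ZMod.natCast_val, ZMod.cast_id]
    ring
  let f := SemidirectProduct.lift f₁ f₂ hcompat
  -- surjectivity
  have hquotsurj : Function.Surjective π := QuotientGroup.mk'_surjective Z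
  have hsurj : Function.Surjective f := by
    rw [← MonoidHom.range_eq_top, eq_top_iff]
    have hQgen : Subgroup.closure ({π a, π b} : Set (G ⧸ Z)) = ⊤ := by
      have hmap := Subgroup.map_top_of_surjective π hquotsurj
      rw [← hgen, MonoidHom.map_closure] at hmap
      rw [← hmap]
      congr 1
      rw [Set.image_pair]
    rw [← hQgen, Subgroup.closure_le]
    rintro x (rfl | rfl)
    · refine ⟨SemidirectProduct.inl (Multiplicative.ofAdd (1 : ZMod k)), ?_⟩
      rw [SemidirectProduct.lift_inl]
      show (π a) ^ ((Multiplicative.toAdd (Multiplicative.ofAdd (1 : ZMod k))).val) = π a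
      rw [toAdd_ofAdd]
      conv_rhs => rw [← pow_one (π a)]
      apply pow_eq_of_cast_eq hπa
      simp [ZMod.natCast_val, ZMod.cast_id]
    · refine ⟨(SemidirectProduct.inr (Multiplicative.ofAdd (1 : ZMod s')))⁻¹, ?_⟩
      rw [map_inv, SemidirectProduct.lift_inr]
      show (((π b)⁻¹) ^ ((Multiplicative.toAdd (Multiplicative.ofAdd (1 : ZMod s'))).val))⁻¹ = π b
      rw [toAdd_ofAdd]
      have h1 : ((π b)⁻¹) ^ (1 : ZMod s').val = ((π b)⁻¹) ^ 1 := by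
        apply pow_eq_of_cast_eq hπb
        simp [ZMod.natCast_val, ZMod.cast_id]
      rw [h1, pow_one, inv_inv]
  -- injectivity
  have hinj : Function.Injective f := by
    rw [injective_iff_map_eq_one]
    intro x hx
    rw [← SemidirectProduct.inl_left_mul_inr_right x] at hx ⊢
    rw [map_mul, SemidirectProduct.lift_inl, SemidirectProduct.lift_inr] at hx
    set i := (Multiplicative.toAdd x.left).val with hidef
    set j := (Multiplicative.toAdd x.right).val with hjdef
    have hij : i < k := ZMod.val_lt _
    have hjj : j < s' := ZMod.val_lt _
    have hxx : π (a ^ i * (b ^ j)⁻¹) = 1 := by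
      rw [map_mul, map_pow, map_inv, map_pow, ← inv_pow]
      exact hx
    have hz : a ^ i * (b ^ j)⁻¹ ∈ Z := (QuotientGroup.eq_one_iff _).mp hxx
    have hcomm := Subgroup.mem_center_iff.mp hz
    -- commuting with b forces i = 0
    have hbcomm : b * a ^ i = a ^ i * b := by
      have hb := hcomm b
      have hcbj : b * (b ^ j)⁻¹ = (b ^ j)⁻¹ * b :=
        ((Commute.refl b).pow_right j).inv_right.eq
      have h1 : b * a ^ i * (b ^ j)⁻¹ = a ^ i * b * (b ^ j)⁻¹ := by
        calc b * a ^ i * (b ^ j)⁻¹ = b * (a ^ i * (b ^ j)⁻¹) := by rw [mul_assoc]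
          _ = (a ^ i * (b ^ j)⁻¹) * b := hb
          _ = a ^ i * ((b ^ j)⁻¹ * b) := by rw [mul_assoc]
          _ = a ^ i * (b * (b ^ j)⁻¹) := by rw [hcbj]
          _ = a ^ i * b * (b ^ j)⁻¹ := by rw [mul_assoc]
      exact mul_right_cancel h1
    have hir : a ^ (i * (r' + 1)) = a ^ (i * 1) := by
      have h1 := hconj 1 i
      simp only [pow_one] at h1
      rw [mul_one]
      calc a ^ (i * (r' + 1)) = b⁻¹ * a ^ i * b := h1.symm
        _ = b⁻¹ * (a ^ i * b) := by rw [mul_assoc]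
        _ = b⁻¹ * (b * a ^ i) := by rw [← hbcomm]
        _ = a ^ i := by group
    have hmdvd : m ∣ i * r' := by
      have hmodeq : i * (r' + 1) ≡ i * 1 [MOD m] := by
        rw [← horda]
        exact pow_eq_pow_iff_modEq.mp hir
      have h2 : i * 1 ≤ i * (r' + 1) := Nat.mul_le_mul_left i (by omega)
      have := (Nat.modEq_iff_dvd' h2).mp hmodeq.symm
      have h3 : i * (r' + 1) - i * 1 = i * r' := by
        have : i * (r' + 1) = i * r' + i := by ring
        omega
      rwa [h3] at this
    have hki : k ∣ i := by
      have hco : Nat.Coprime (m / Nat.gcd r' m) (r' / Nat.gcd r' m) :=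
        (Nat.coprime_div_gcd_div_gcd hgd).symm
      have h1 : (m / Nat.gcd r' m) * Nat.gcd r' m ∣ i * (r' / Nat.gcd r' m) * Nat.gcd r' m := by
        rw [Nat.div_mul_cancel (Nat.gcd_dvd_right r' m), mul_assoc,
          Nat.div_mul_cancel (Nat.gcd_dvd_left r' m)]
        exact hmdvd
      have h2 : m / Nat.gcd r' m ∣ i * (r' / Nat.gcd r' m) :=
        (Nat.mul_dvd_mul_iff_right hgd).mp h1
      rw [← hk] at h2 hco
      exact hco.dvd_of_dvd_mul_right h2
    have hi0 : i = 0 := Nat.eq_zero_of_dvd_of_lt hki hij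
    rw [hi0, pow_zero, one_mul] at hz
    have hcomm2 := Subgroup.mem_center_iff.mp hz
    have ha := hcomm2 a
    have hja : (b ^ j)⁻¹ * a * b ^ j = a := by
      rw [← ha]; group
    have hrj : a ^ ((r' + 1) ^ j) = a ^ 1 := by
      have h1 := hconj j 1
      simp only [pow_one, one_mul] at h1
      rw [← h1, hja, pow_one]
    have hrjm : (r' + 1) ^ j ≡ 1 [MOD m] := by
      rw [← horda]
      have := pow_eq_pow_iff_modEq.mp hrj
      simpa using this
    have hrjz : ((r' + 1 : ℕ) : ZMod m) ^ j = 1 := by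
      have h := (ZMod.natCast_eq_natCast_iff ((r' + 1) ^ j) 1 m).mpr hrjm
      rwa [Nat.cast_pow, Nat.cast_one] at h
    have hsj : s' ∣ j := by
      rw [hs']
      exact orderOf_dvd_of_pow_eq_one hrjz
    have hj0 : j = 0 := Nat.eq_zero_of_dvd_of_lt hsj hjj
    have hl : x.left = 1 := by
      have h1 : Multiplicative.toAdd x.left = 0 := (ZMod.val_eq_zero _).mp hi0
      rw [← ofAdd_toAdd x.left, h1, ofAdd_zero]
    have hrr : x.right = 1 := by
      have h1 : Multiplicative.toAdd x.right = 0 := (ZMod.val_eq_zero _).mp hj0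
      rw [← ofAdd_toAdd x.right, h1, ofAdd_zero]
    rw [hl, hrr]
    simp
  exact ⟨(MulEquiv.ofBijective f ⟨hinj, hsurj⟩).symm⟩
end

section
/- The derived subgroup of G is G' = ⟨a^{r−1}⟩, the cyclic subgroup generated by a^{r−1}. -/
lemma comm_of_closure_eq_top {H : Type*} [Group H] {S : Set H}
    (hS : Subgroup.closure S = ⊤) (hc : ∀ x ∈ S, ∀ y ∈ S, Commute x y)
    (g₁ g₂ : H) : Commute g₁ g₂ := by
  have h1 : g₁ ∈ Subgroup.closure S := hS ▸ Subgroup.mem_top g₁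
  have h2 : g₂ ∈ Subgroup.closure S := hS ▸ Subgroup.mem_top g₂
  induction h1, h2 using Subgroup.closure_induction₂ with
  | mem x y hx hy => exact hc x hx y hy
  | one_left x hx => exact Commute.one_left x
  | one_right x hx => exact Commute.one_right x
  | mul_left x y z hx hy hz h1 h2 => exact h1.mul_left h2
  | mul_right y z x hy hz hx h1 h2 => exact h1.mul_right h2
  | inv_left x y hx hy h => exact h.inv_left
  | inv_right x y hx hy h => exact h.inv_right

/-- The derived subgroup of the metacyclic group
`G = ⟨a, b | a^m = 1, b^s = a^t, b⁻¹ab = a^r⟩` is the cyclic subgroup generated by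
`a^{r−1}`. -/
theorem commutator_eq_zpowers {G : Type*} [Group G] [Fintype G]
    (m s t r : ℕ) (hm : 0 < m) (hs : 0 < s) (ht : 0 < t) (hr : 0 < r)
    (hrsm : r ^ s ≡ 1 [MOD m]) (hmt : m ∣ t * (r - 1))
    (a b : G) (hgen : Subgroup.closure ({a, b} : Set G) = ⊤)
    (ham : a ^ m = 1) (hba : b ^ s = a ^ t) (hcon : b⁻¹ * a * b = a ^ r)
    (horda : orderOf a = m)
    (hordb : ∀ j : ℕ, b ^ j ∈ Subgroup.zpowers a ↔ s ∣ j) :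
    commutator G = Subgroup.zpowers (a ^ (r - 1)) := by
  set N := Subgroup.zpowers (a ^ (r - 1)) with hN
  have hr1 : (r - 1) + 1 = r := Nat.succ_pred_eq_of_pos hr
  have hs1 : (s - 1) + 1 = s := Nat.succ_pred_eq_of_pos hs
  have hpa : a ^ r = a * a ^ (r - 1) := by rw [← pow_succ', hr1]
  have hpb : b ^ s = b * b ^ (s - 1) := by rw [← pow_succ', hs1]
  have hkey : a⁻¹ * (b⁻¹ * a * b) = a ^ (r - 1) := by
    rw [hcon, hpa, inv_mul_cancel_left]
  -- conjugation by b⁻¹ : b⁻¹ * a^n * b = a^(r*n)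
  have hconj1 : ∀ n : ℕ, b⁻¹ * a ^ n * b = a ^ (r * n) := by
    intro n
    have h := @conj_pow G _ n b⁻¹ a
    rw [inv_inv, hcon, ← pow_mul] at h
    exact h.symm
  -- iterated: (b^j)⁻¹ * a * b^j = a ^ (r^j)
  have hconjj : ∀ j : ℕ, (b ^ j)⁻¹ * a * b ^ j = a ^ (r ^ j) := by
    intro j
    induction j with
    | zero => simp
    | succ j ih =>
      have h : (b ^ (j+1))⁻¹ * a * b ^ (j+1) = b⁻¹ * ((b ^ j)⁻¹ * a * b ^ j) * b := by
        rw [pow_succ]; group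
      rw [h, ih, hconj1, ← pow_succ']
  -- conjugation by b : b * a * b⁻¹ = a ^ (r^(s-1))
  have hb : a ^ t * (b ^ (s - 1))⁻¹ = b := by
    rw [← hba, hpb, mul_inv_cancel_right]
  have hbab : b * a * b⁻¹ = a ^ (r ^ (s - 1)) := by
    conv_lhs => rw [← hb]
    calc a ^ t * (b ^ (s-1))⁻¹ * a * (a ^ t * (b ^ (s-1))⁻¹)⁻¹
        = a ^ t * ((b ^ (s-1))⁻¹ * a * b ^ (s-1)) * (a ^ t)⁻¹ := by group
      _ = a ^ t * a ^ (r ^ (s-1)) * (a ^ t)⁻¹ := by rw [hconjj]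
      _ = a ^ (r ^ (s-1)) := by
          rw [← pow_add, add_comm, pow_add, mul_inv_cancel_right]
  have haN : a ^ (r - 1) ∈ N := Subgroup.mem_zpowers _
  have hNb1 : b⁻¹ * a ^ (r - 1) * b = (a ^ (r - 1)) ^ r := by
    rw [hconj1, mul_comm, pow_mul]
  have hNb2 : b * a ^ (r - 1) * b⁻¹ = (a ^ (r - 1)) ^ (r ^ (s - 1)) := by
    have h := @conj_pow G _ (r - 1) b a
    rw [← h, hbab, ← pow_mul, ← pow_mul, mul_comm]
  -- conjugation stability of N
  have hNa : ∀ n ∈ N, a * n * a⁻¹ ∈ N := by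
    rintro n ⟨k, rfl⟩
    have hc : Commute a ((a ^ (r-1)) ^ k) := ((Commute.refl a).pow_right _).zpow_right _
    rw [hc.eq, mul_inv_cancel_right]
    exact Subgroup.zpow_mem _ haN k
  have hNai : ∀ n ∈ N, a⁻¹ * n * a ∈ N := by
    rintro n ⟨k, rfl⟩
    have hc : Commute a⁻¹ ((a ^ (r-1)) ^ k) :=
      (((Commute.refl a).pow_right _).zpow_right _).inv_left
    rw [hc.eq, inv_mul_cancel_right]
    exact Subgroup.zpow_mem _ haN k
  have hNbb : ∀ n ∈ N, b * n * b⁻¹ ∈ N := by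
    rintro n ⟨k, rfl⟩
    have h := @conj_zpow G _ k b (a ^ (r - 1))
    rw [hNb2] at h
    rw [← h]
    exact Subgroup.zpow_mem _ (Subgroup.pow_mem _ haN _) k
  have hNbi : ∀ n ∈ N, b⁻¹ * n * b ∈ N := by
    rintro n ⟨k, rfl⟩
    have h := @conj_zpow G _ k b⁻¹ (a ^ (r - 1))
    rw [inv_inv, hNb1] at h
    rw [← h]
    exact Subgroup.zpow_mem _ (Subgroup.pow_mem _ haN _) k
  have hNnormal : N.Normal := by
    rw [← Subgroup.normalizer_eq_top_iff, eq_top_iff, ← hgen, Subgroup.closure_le]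
    rintro g (rfl | rfl) <;> rw [SetLike.mem_coe, Subgroup.mem_normalizer_iff] <;> intro n
    · exact ⟨fun hn => hNa n hn, fun hn => by
        have := hNai _ hn
        simpa [mul_assoc] using this⟩
    · exact ⟨fun hn => hNbb n hn, fun hn => by
        have := hNbi _ hn
        simpa [mul_assoc] using this⟩
  haveI := hNnormal
  apply le_antisymm
  · -- commutator G ≤ N : quotient is abelian
    have hcomm_ab : Commute ((a : G ⧸ N)) ((b : G ⧸ N)) := by
      rw [Commute, SemiconjBy, ← QuotientGroup.mk_mul, ← QuotientGroup.mk_mul]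
      apply QuotientGroup.eq.mpr
      have h : (a * b)⁻¹ * (b * a) = (a⁻¹ * (b⁻¹ * a * b))⁻¹ := by group
      rw [h, hkey]
      exact N.inv_mem haN
    have habel : ∀ x y : G ⧸ N, Commute x y := by
      apply comm_of_closure_eq_top (S := (QuotientGroup.mk' N) '' ({a, b} : Set G))
      · rw [← MonoidHom.map_closure, hgen]
        exact Subgroup.map_top_of_surjective _ (QuotientGroup.mk'_surjective N)
      · rintro x ⟨x', (rfl|rfl), rfl⟩ y ⟨y', (rfl|rfl), rfl⟩
        · exact Commute.refl _
        · exact hcomm_ab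
        · exact hcomm_ab.symm
        · exact Commute.refl _
    rw [commutator_def, Subgroup.commutator_le]
    intro g₁ _ g₂ _
    rw [← QuotientGroup.ker_mk' N, MonoidHom.mem_ker, map_commutatorElement]
    exact commutatorElement_eq_one_iff_commute.mpr (habel _ _)
  · -- N ≤ commutator G
    rw [hN, Subgroup.zpowers_le]
    open scoped commutatorElement in
    have h : a ^ (r - 1) = ⁅a⁻¹, b⁻¹⁆ := by
      rw [commutatorElement_def, ← hkey]; group
    rw [h, commutator_def]
    exact Subgroup.commutator_mem_commutator (Subgroup.mem_top _) (Subgroup.mem_top _)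
end

section
/- G' ∩ Z(G) = ⟨a^{m/gcd(r−1, k)}⟩, and in particular the cardinality of G' ∩ Z(G) equals gcd(r−1, k), where k = m/gcd(r−1, m). -/
open Subgroup
open scoped commutatorElement

lemma mem_center_of_gen {G : Type*} [Group G] {a b : G}
    (hgen : Subgroup.closure ({a, b} : Set G) = ⊤)
    {x : G} (h1 : a * x = x * a) (h2 : b * x = x * b) : x ∈ Subgroup.center G := by
  rw [Subgroup.mem_center_iff]
  intro g
  have hg : g ∈ Subgroup.closure ({a, b} : Set G) := by rw [hgen]; trivial
  induction hg using Subgroup.closure_induction with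
  | mem y hy => rcases hy with rfl | rfl
                · exact h1
                · exact h2
  | one => simp
  | mul y z _ _ hy hz => rw [mul_assoc, hz, ← mul_assoc, hy, mul_assoc]
  | inv y _ hy =>
      have : Commute y x := hy
      exact this.inv_left


/-- In the metacyclic group `G = ⟨a, b | a^m = 1, b^s = a^t, b⁻¹ab = a^r⟩`
one has `G' ∩ Z(G) = ⟨a^{m / gcd (r−1) k}⟩`, and in particular `|G' ∩ Z(G)| = gcd (r−1) k`,
where `k = m / gcd (r−1) m`. -/
theorem commutator_inf_center {G : Type*} [Group G] [Fintype G]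
    (m s t r : ℕ) (hm : 0 < m) (hs : 0 < s) (ht : 0 < t) (hr : 0 < r)
    (hrsm : r ^ s ≡ 1 [MOD m]) (hmt : m ∣ t * (r - 1))
    (a b : G) (hgen : Subgroup.closure ({a, b} : Set G) = ⊤)
    (ham : a ^ m = 1) (hba : b ^ s = a ^ t) (hcon : b⁻¹ * a * b = a ^ r)
    (horda : orderOf a = m)
    (hordb : ∀ j : ℕ, b ^ j ∈ Subgroup.zpowers a ↔ s ∣ j)
    (k : ℕ) (hk : k = m / Nat.gcd (r - 1) m) :
    commutator G ⊓ Subgroup.center G = Subgroup.zpowers (a ^ (m / Nat.gcd (r - 1) k)) ∧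
      Nat.card ↥(commutator G ⊓ Subgroup.center G) = Nat.gcd (r - 1) k := by
  set d := Nat.gcd (r - 1) m with hd
  set g := Nat.gcd (r - 1) k with hg
  set M := m / g with hM
  have hd0 : 0 < d := Nat.gcd_pos_of_pos_right _ hm
  have hdk : d * k = m := by rw [hk]; exact Nat.mul_div_cancel' (Nat.gcd_dvd_right _ _)
  have hk0 : 0 < k := by
    rcases Nat.eq_zero_or_pos k with h | h
    · exfalso; rw [h, mul_zero] at hdk; omega
    · exact h
  have hkdvd : k ∣ m := ⟨d, by rw [mul_comm]; exact hdk.symm⟩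
  -- e and coprimality
  set e := (r - 1) / d with he
  have hde : d * e = r - 1 := Nat.mul_div_cancel' (Nat.gcd_dvd_left _ _)
  have hco : Nat.Coprime e k := by
    rw [he, hk, hd]
    exact Nat.coprime_div_gcd_div_gcd hd0
  have hcast : ((r:ℤ) - 1) = ((r - 1 : ℕ) : ℤ) := by rw [Nat.cast_sub hr]; simp
  -- key divisibility lemma
  have keyZ : ∀ n : ℤ, (m:ℤ) ∣ n * ((r:ℤ) - 1) ↔ (k:ℤ) ∣ n := by
    intro n
    rw [hcast, ← hde, ← hdk]
    push_cast
    constructor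
    · intro h
      have h3 : (d:ℤ) * k ∣ (d:ℤ) * (n * e) := by
        calc (d:ℤ) * k ∣ n * ((d:ℤ) * e) := h
        _ = (d:ℤ) * (n * e) := by ring
      have h2 : (k:ℤ) ∣ n * e :=
        (mul_dvd_mul_iff_left (a := (d:ℤ)) (by exact_mod_cast hd0.ne')).mp h3
      exact ((Nat.isCoprime_iff_coprime.mpr hco.symm)).dvd_of_dvd_mul_right h2
    · intro h
      obtain ⟨w, rfl⟩ := h
      exact ⟨w * e, by ring⟩
  have ordZ : ∀ n : ℤ, a ^ n = 1 ↔ (m:ℤ) ∣ n := by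
    intro n
    rw [← horda]
    exact orderOf_dvd_iff_zpow_eq_one.symm
  -- conjugation formulas
  have hconjz : ∀ z : ℤ, b⁻¹ * a ^ z * b = a ^ (z * r) := by
    intro z
    have h : (b⁻¹ * a * b⁻¹⁻¹) ^ z = b⁻¹ * a ^ z * b⁻¹⁻¹ := conj_zpow
    rw [inv_inv] at h
    rw [← h, hcon, ← zpow_natCast a r, ← zpow_mul, mul_comm]
  -- commuting with b
  have hcommb : ∀ j : ℤ, (b * a ^ j = a ^ j * b) ↔ (k:ℤ) ∣ j := by
    intro j
    have h := hconjz j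
    have e1 : (b * a ^ j = a ^ j * b) ↔ a ^ (j * (r:ℤ)) = a ^ j := by
      rw [← h]
      constructor
      · intro hh
        rw [mul_assoc, ← hh, ← mul_assoc, inv_mul_cancel, one_mul]
      · intro hh
        have h5 : a ^ j * b = b * a ^ j := by
          calc a ^ j * b = b * (b⁻¹ * a ^ j * b) := by group
          _ = b * a ^ j := by rw [hh]
        exact h5.symm
    have h3 : j * ((r:ℤ) - 1) = j * r - j := by ring
    rw [e1, ← mul_inv_eq_one, ← zpow_sub, ← h3, ordZ, keyZ]
  have hcentral : ∀ j : ℤ, (k:ℤ) ∣ j → a ^ j ∈ Subgroup.center G := by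
    intro j hj
    exact mem_center_of_gen hgen (Commute.self_zpow a j).eq ((hcommb j).mpr hj)
  have hcentral' : ∀ j : ℤ, a ^ j ∈ Subgroup.center G → (k:ℤ) ∣ j := by
    intro j hj
    exact (hcommb j).mp (Subgroup.mem_center_iff.mp hj b)
  -- the subgroup K
  set K := Subgroup.zpowers (a ^ d) with hK
  have hpow : ∀ (n : ℕ) (z : ℤ), (a ^ n) ^ z = a ^ ((n:ℤ) * z) := by
    intro n z
    rw [← zpow_natCast a n, ← zpow_mul]
  have memK : ∀ x : G, x ∈ K ↔ ∃ z : ℤ, x = a ^ ((d:ℤ) * z) := by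
    intro x
    rw [Subgroup.mem_zpowers_iff]
    constructor
    · rintro ⟨z, rfl⟩; exact ⟨z, (hpow d z).symm ▸ rfl⟩
    · rintro ⟨z, rfl⟩; exact ⟨z, hpow d z⟩
  -- r^s ≡ 1 facts
  have hrs : (m:ℤ) ∣ (r:ℤ) ^ s - 1 := by
    have h := hrsm.dvd
    have h2 := dvd_neg.mpr h
    rw [neg_sub] at h2
    push_cast at h2 ⊢
    exact h2
  have hzr : ∀ z : ℤ, a ^ (z * (r:ℤ) ^ s) = a ^ z := by
    intro z
    rw [← mul_inv_eq_one, ← zpow_sub]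
    rw [ordZ]
    have : z * (r:ℤ) ^ s - z = z * ((r:ℤ) ^ s - 1) := by ring
    rw [this]
    exact Dvd.dvd.mul_left hrs z
  have hbab : ∀ z : ℤ, b * a ^ z * b⁻¹ = a ^ (z * (r:ℤ) ^ (s - 1)) := by
    intro z
    have h := hconjz (z * (r:ℤ) ^ (s - 1))
    have hss : z * (r:ℤ) ^ (s - 1) * r = z * (r:ℤ) ^ s := by
      rw [mul_assoc, ← pow_succ, Nat.sub_add_cancel hs]
    rw [hss, hzr z] at h
    rw [← h]
    group
  -- K is normal
  have hna : a ∈ Subgroup.normalizer (K : Set G) := by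
    rw [Subgroup.mem_normalizer_iff]
    intro h
    constructor
    · intro hh
      obtain ⟨z, rfl⟩ := (memK h).mp hh
      have h6 : a * a ^ ((d:ℤ) * z) * a⁻¹ = a ^ ((d:ℤ) * z) := by
        group
      rw [h6]; exact hh
    · intro hh
      obtain ⟨z, hz⟩ := (memK _).mp hh
      have h6 : h = a⁻¹ * (a * h * a⁻¹) * a := by group
      rw [h6, hz]
      have h7 : a⁻¹ * a ^ ((d:ℤ) * z) * a = a ^ ((d:ℤ) * z) := by
        group
      rw [h7]
      exact (memK _).mpr ⟨z, rfl⟩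
  have hnb : b ∈ Subgroup.normalizer (K : Set G) := by
    rw [Subgroup.mem_normalizer_iff]
    intro h
    constructor
    · intro hh
      obtain ⟨z, rfl⟩ := (memK h).mp hh
      rw [hbab]
      exact (memK _).mpr ⟨z * (r:ℤ) ^ (s - 1), by rw [mul_assoc]⟩
    · intro hh
      obtain ⟨z, hz⟩ := (memK _).mp hh
      have h6 : h = b⁻¹ * (b * h * b⁻¹) * b := by group
      rw [h6, hz, hconjz]
      exact (memK _).mpr ⟨z * (r:ℤ), by rw [mul_assoc]⟩
  have hnorm : Subgroup.normalizer (K : Set G) = ⊤ := by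
    rw [eq_top_iff, ← hgen, Subgroup.closure_le]
    rintro x (rfl | rfl)
    · exact hna
    · exact hnb
  haveI hKn : K.Normal := Subgroup.normalizer_eq_top_iff.mp hnorm
  -- a^(r-1) ∈ K
  have harK : (a : G) ^ (r - 1) ∈ K := by
    rw [← hde, pow_mul]
    exact Subgroup.pow_mem K (Subgroup.mem_zpowers _) e
  -- quotient is abelian: commutator G ≤ K
  have hcomm_le : commutator G ≤ K := by
    set π := QuotientGroup.mk' K with hπ
    have hgenQ : Subgroup.closure ({π a, π b} : Set (G ⧸ K)) = ⊤ := by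
      have h1 := MonoidHom.map_closure π ({a, b} : Set G)
      rw [hgen, Set.image_pair] at h1
      rw [← h1]
      rw [← MonoidHom.range_eq_map]
      exact MonoidHom.range_eq_top_of_surjective π (QuotientGroup.mk'_surjective K)
    have hc : π b * π a = π a * π b := by
      rw [← map_mul, ← map_mul]
      rw [QuotientGroup.mk'_eq_mk']
      refine ⟨a ^ (r - 1), harK, ?_⟩
      have : (a:G) ^ (r - 1) = a⁻¹ * a ^ (r:ℕ) := by
        rw [← zpow_natCast a (r - 1), ← hcast, ← zpow_natCast a r]
        rw [← zpow_neg_one, ← zpow_add]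
        try group
      rw [this, ← hcon]
      try group
    have hca : π a ∈ Subgroup.center (G ⧸ K) := mem_center_of_gen hgenQ rfl hc
    have hcb : π b ∈ Subgroup.center (G ⧸ K) := mem_center_of_gen hgenQ hc.symm rfl
    have hcenterQ : ∀ x : G ⧸ K, x ∈ Subgroup.center (G ⧸ K) := by
      have : Subgroup.closure ({π a, π b} : Set (G ⧸ K)) ≤ Subgroup.center (G ⧸ K) := by
        rw [Subgroup.closure_le]
        rintro x (rfl | rfl) <;> assumption
      rw [hgenQ] at this
      exact fun x => this (Subgroup.mem_top x)
    rw [_root_.commutator_def, Subgroup.commutator_le]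
    intro g1 _ g2 _
    rw [← QuotientGroup.eq_one_iff]
    show π ⁅g1, g2⁆ = 1
    rw [map_commutatorElement]
    exact commutatorElement_eq_one_iff_commute.mpr
      (Subgroup.mem_center_iff.mp (hcenterQ (π g2)) (π g1))
  -- K ≤ commutator G
  have hle_comm : K ≤ commutator G := by
    rw [hK, Subgroup.zpowers_le]
    have har : (a : G) ^ (r - 1) ∈ commutator G := by
      have h1 : ⁅b⁻¹, a⁆ = a ^ (r - 1) := by
        rw [commutatorElement_def, inv_inv]
        have h2 : b⁻¹ * a * b = a ^ (r:ℕ) := hcon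
        rw [h2, ← zpow_natCast a (r - 1), ← hcast, ← zpow_natCast a r, ← zpow_neg_one,
          ← zpow_add]
        try group
      rw [← h1, _root_.commutator_def]
      exact Subgroup.commutator_mem_commutator (Subgroup.mem_top _) (Subgroup.mem_top _)
    -- Bezout
    have hbez := Nat.gcd_eq_gcd_ab (r - 1) m
    have : (a : G) ^ (d:ℤ) = (a ^ (r - 1)) ^ (Nat.gcdA (r - 1) m) := by
      rw [hd, hbez, zpow_add, zpow_mul, zpow_mul]
      rw [zpow_natCast a (r-1), zpow_natCast a m, ham, one_zpow, mul_one]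
    have h3 : (a : G) ^ d ∈ commutator G := by
      rw [← zpow_natCast a d, this]
      exact Subgroup.zpow_mem _ har _
    exact h3
  have hKcomm : commutator G = K := le_antisymm hcomm_le hle_comm
  -- arithmetic on g, M
  have hgdk : g = Nat.gcd d k := by
    rw [hg, hd, Nat.gcd_assoc, Nat.gcd_eq_right hkdvd]
  have hg0 : 0 < g := by rw [hgdk]; exact Nat.gcd_pos_of_pos_right _ hk0
  have hgm : g ∣ m := dvd_trans (Nat.gcd_dvd_right (r - 1) k) hkdvd
  have hMg : M * g = m := Nat.div_mul_cancel hgm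
  have hlcmM : Nat.lcm d k = M := by
    have h1 : Nat.gcd d k * Nat.lcm d k = d * k := Nat.gcd_mul_lcm d k
    rw [hdk, ← hgdk] at h1
    have h2 : g * M = m := by rw [mul_comm]; exact hMg
    exact Nat.eq_of_mul_eq_mul_left hg0 (h1.trans h2.symm)
  have hdM : d ∣ M := hlcmM ▸ Nat.dvd_lcm_left d k
  have hkM : k ∣ M := hlcmM ▸ Nat.dvd_lcm_right d k
  have hMdvd : ∀ j : ℤ, (d:ℤ) ∣ j → (k:ℤ) ∣ j → (M:ℤ) ∣ j := by
    intro j h1 h2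
    have h3 := Int.coe_lcm_dvd h1 h2
    have hl : Int.lcm (d:ℤ) (k:ℤ) = Nat.lcm d k := by simp [Int.lcm]
    rwa [hl, hlcmM] at h3
  -- the intersection
  have hfinal : K ⊓ Subgroup.center G = Subgroup.zpowers (a ^ M) := by
    apply le_antisymm
    · rintro x ⟨hxK, hxC⟩
      obtain ⟨z, rfl⟩ := (memK x).mp hxK
      have h1 : (k:ℤ) ∣ (d:ℤ) * z := hcentral' _ hxC
      have h2 : (M:ℤ) ∣ (d:ℤ) * z := hMdvd _ (Dvd.dvd.mul_right (dvd_refl _) z) h1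
      obtain ⟨w, hw⟩ := h2
      rw [hw, ← hpow M w]
      exact Subgroup.zpow_mem _ (Subgroup.mem_zpowers _) w
    · rw [Subgroup.zpowers_le]
      constructor
      · obtain ⟨c, hc⟩ := hdM
        rw [hc, pow_mul]
        exact Subgroup.pow_mem K (Subgroup.mem_zpowers _) c
      · have : (a : G) ^ (M:ℤ) ∈ Subgroup.center G := by
          apply hcentral
          exact_mod_cast hkM
        rwa [zpow_natCast] at this
  rw [hKcomm, hfinal]
  refine ⟨rfl, ?_⟩
  rw [Nat.card_zpowers, orderOf_pow, horda]
  have hMm : M ∣ m := ⟨g, hMg.symm⟩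
  rw [Nat.gcd_eq_right hMm]
  rw [hM]
  exact Nat.div_div_self hgm hm.ne'
end

section
/- If G is a finite metacyclic group, then the cardinality of the Schur multiplier of G/Z(G), i.e., of the second group homology H₂(G/Z(G); ℤ) with trivial coefficients, is at most the cardinality of G' ∩ Z(G). (This is the key inequality showing, via Ganea's exact sequence, that Ganea's homomorphism H₁(G) ⊗ Z(G) → H₂(G) is an epimorphism for finite metacyclic groups.) -/
/-- The kernel of the canonical presentation `FreeGroup Q → Q`. -/
def presentationKernel (Q : Type*) [Group Q] : Subgroup (FreeGroup Q) :=
  (FreeGroup.lift (id : Q → Q)).ker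

instance (Q : Type*) [Group Q] : (presentationKernel Q).Normal :=
  MonoidHom.normal_ker _

/-- The Schur multiplier `H₂(Q; ℤ)` of a group `Q`, given by Hopf's integral homology
formula `H₂(Q; ℤ) ≅ (R ∩ [F, F]) / [F, R]` for the free presentation
`1 → R → F → Q → 1` with `F = FreeGroup Q`. -/
def SchurMultiplier (Q : Type*) [Group Q] : Type _ :=
  ↥(presentationKernel Q ⊓ commutator (FreeGroup Q)) ⧸
    (⁅(⊤ : Subgroup (FreeGroup Q)), presentationKernel Q⁆.subgroupOf
      (presentationKernel Q ⊓ commutator (FreeGroup Q)))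

noncomputable instance (Q : Type*) [Group Q] : Group (SchurMultiplier Q) :=
  inferInstanceAs (Group (_ ⧸ _))

open scoped commutatorElement

namespace SchurAux

variable {H : Type*} [Group H]

lemma conj_central {z : H} (hz : z ∈ Subgroup.center H) (d : H) : z * d * z⁻¹ = d := by
  rw [mul_inv_eq_iff_eq_mul]
  exact (Subgroup.mem_center_iff.mp hz d).symm

lemma commutator_center_left {z : H} (hz : z ∈ Subgroup.center H) (a b : H) :
    ⁅a * z, b⁆ = ⁅a, b⁆ := by
  have h := conj_central hz b
  calc ⁅a * z, b⁆ = a * (z * b * z⁻¹) * a⁻¹ * b⁻¹ := by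
        simp only [commutatorElement_def, mul_inv_rev]; group
    _ = ⁅a, b⁆ := by rw [h, commutatorElement_def]

lemma commutator_center_right {z : H} (hz : z ∈ Subgroup.center H) (a b : H) :
    ⁅a, b * z⁆ = ⁅a, b⁆ := by
  have h := conj_central hz a⁻¹
  calc ⁅a, b * z⁆ = a * b * (z * a⁻¹ * z⁻¹) * b⁻¹ := by
        simp only [commutatorElement_def, mul_inv_rev]; group
    _ = ⁅a, b⁆ := by rw [h, commutatorElement_def]

lemma commutator_pow_left {a b : H} (h : Commute a ⁅a, b⁆) (j : ℕ) :
    ⁅a ^ j, b⁆ = ⁅a, b⁆ ^ j := by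
  induction j with
  | zero => simp
  | succ j ih =>
    have key : ⁅a * a ^ j, b⁆ = a * ⁅a ^ j, b⁆ * a⁻¹ * ⁅a, b⁆ := by
      simp only [commutatorElement_def, mul_inv_rev]; group
    have h2 : a * ⁅a, b⁆ ^ j * a⁻¹ = ⁅a, b⁆ ^ j := by
      rw [mul_inv_eq_iff_eq_mul]; exact (h.pow_right j).eq
    calc ⁅a ^ (j + 1), b⁆ = ⁅a * a ^ j, b⁆ := by rw [pow_succ']
      _ = a * ⁅a, b⁆ ^ j * a⁻¹ * ⁅a, b⁆ := by rw [key, ih]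
      _ = ⁅a, b⁆ ^ j * ⁅a, b⁆ := by rw [h2]
      _ = ⁅a, b⁆ ^ (j + 1) := (pow_succ _ _).symm

lemma commute_form {A B z₁ z₂ : H}
    (h1 : ∀ v, Commute z₁ v) (h2 : ∀ v, Commute z₂ v) (hAB : Commute A B)
    (i₁ a₁ i₂ a₂ : ℤ) : Commute (z₁ * A ^ i₁ * B ^ a₁) (z₂ * A ^ i₂ * B ^ a₂) := by
  refine Commute.mul_left (Commute.mul_left (h1 _) ?_) ?_
  · exact (((h2 _).symm).mul_right ((Commute.refl A).zpow_zpow _ _)).mul_right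
      (hAB.zpow_zpow _ _)
  · exact (((h2 _).symm).mul_right (hAB.symm.zpow_zpow _ _)).mul_right
      ((Commute.refl B).zpow_zpow _ _)

def JJ (Q : Type*) [Group Q] : Subgroup (FreeGroup Q) :=
  ⁅(⊤ : Subgroup (FreeGroup Q)), presentationKernel Q⁆

instance (Q : Type*) [Group Q] : (JJ Q).Normal := Subgroup.commutator_normal _ _

lemma JJ_le_R (Q : Type*) [Group Q] : JJ Q ≤ presentationKernel Q :=
  Subgroup.commutator_le_right _ _

abbrev W (Q : Type*) [Group Q] := FreeGroup Q ⧸ JJ Q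

def piW (Q : Type*) [Group Q] : W Q →* Q :=
  QuotientGroup.lift _ (FreeGroup.lift id) (fun _ hx => JJ_le_R Q hx)

lemma piW_mk {Q : Type*} [Group Q] (f : FreeGroup Q) :
    piW Q (QuotientGroup.mk f) = FreeGroup.lift id f := rfl

lemma piW_of {Q : Type*} [Group Q] (q : Q) :
    piW Q (QuotientGroup.mk (FreeGroup.of q)) = q := by
  rw [piW_mk, FreeGroup.lift_apply_of]; rfl

lemma mk_commutator {Q : Type*} [Group Q] (f f' : FreeGroup Q) :
    (QuotientGroup.mk ⁅f, f'⁆ : W Q) = ⁅(QuotientGroup.mk f : W Q), QuotientGroup.mk f'⁆ :=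
  map_commutatorElement (QuotientGroup.mk' (JJ Q)) f f'

lemma central_of_piW_eq_one {Q : Type*} [Group Q] {w : W Q} (hw : piW Q w = 1) :
    w ∈ Subgroup.center (W Q) := by
  induction w using QuotientGroup.induction_on with
  | H f =>
    have hfR : f ∈ presentationKernel Q := by
      rw [piW_mk] at hw; exact hw
    rw [Subgroup.mem_center_iff]
    intro v
    induction v using QuotientGroup.induction_on with
    | H f' =>
      have hJ : ⁅f', f⁆ ∈ JJ Q :=
        Subgroup.commutator_mem_commutator (Subgroup.mem_top f') hfR
      have h2 : Commute (QuotientGroup.mk f' : W Q) (QuotientGroup.mk f) := by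
        rw [← commutatorElement_eq_one_iff_commute, ← mk_commutator]
        exact (QuotientGroup.eq_one_iff _).mpr hJ
      exact h2.eq

variable (G : Type*) [Group G]

noncomputable def phi0 : FreeGroup (G ⧸ Subgroup.center G) →* G :=
  FreeGroup.lift Quotient.out

lemma mk_phi0 (f : FreeGroup (G ⧸ Subgroup.center G)) :
    (QuotientGroup.mk (phi0 G f) : G ⧸ Subgroup.center G) = FreeGroup.lift id f := by
  have h : (QuotientGroup.mk' (Subgroup.center G)).comp (phi0 G) = FreeGroup.lift id :=
    FreeGroup.ext_hom _ _ (fun q => by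
      simp only [MonoidHom.comp_apply, phi0, FreeGroup.lift_apply_of, QuotientGroup.mk'_apply]
      exact QuotientGroup.out_eq' q)
  exact DFunLike.congr_fun h f

lemma phi0_central {f : FreeGroup (G ⧸ Subgroup.center G)}
    (hf : f ∈ presentationKernel (G ⧸ Subgroup.center G)) :
    phi0 G f ∈ Subgroup.center G := by
  have h : (QuotientGroup.mk (phi0 G f) : G ⧸ Subgroup.center G) = 1 := by
    rw [mk_phi0]; exact hf
  exact (QuotientGroup.eq_one_iff _).mp h

lemma JJ_le_ker_phi0 : JJ (G ⧸ Subgroup.center G) ≤ (phi0 G).ker := by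
  rw [JJ, Subgroup.commutator_le]
  intro f _ r hr
  rw [MonoidHom.mem_ker, map_commutatorElement, commutatorElement_eq_one_iff_commute]
  exact Subgroup.mem_center_iff.mp (phi0_central G hr) (phi0 G f)

noncomputable def phiW : W (G ⧸ Subgroup.center G) →* G :=
  QuotientGroup.lift _ (phi0 G) (JJ_le_ker_phi0 G)

lemma phiW_mk (f : FreeGroup (G ⧸ Subgroup.center G)) :
    phiW G (QuotientGroup.mk f) = phi0 G f := rfl

def SSub (Q : Type*) [Group Q] : Subgroup (FreeGroup Q) :=
  presentationKernel Q ⊓ commutator (FreeGroup Q)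

lemma schur_eq (Q : Type*) [Group Q] :
    SchurMultiplier Q = (↥(SSub Q) ⧸ ((JJ Q).subgroupOf (SSub Q))) := rfl

noncomputable def theta :
    (↥(SSub (G ⧸ Subgroup.center G)) ⧸
      ((JJ (G ⧸ Subgroup.center G)).subgroupOf (SSub (G ⧸ Subgroup.center G)))) →* G :=
  QuotientGroup.lift _
    ((phiW G).comp ((QuotientGroup.mk' (JJ (G ⧸ Subgroup.center G))).comp
      (SSub (G ⧸ Subgroup.center G)).subtype))
    (by
      intro x hx
      have hxJ : (x : FreeGroup (G ⧸ Subgroup.center G)) ∈ JJ (G ⧸ Subgroup.center G) :=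
        Subgroup.mem_subgroupOf.mp hx
      have := JJ_le_ker_phi0 G hxJ
      simpa [MonoidHom.mem_ker, phiW_mk] using this)

lemma theta_mk (x : ↥(SSub (G ⧸ Subgroup.center G))) :
    theta G (QuotientGroup.mk x) = phi0 G (x : FreeGroup (G ⧸ Subgroup.center G)) := rfl

end SchurAux
namespace SchurAux

lemma master {G : Type*} [Group G] [Fintype G] (k g : G) (e : ℤ)
    (hdec : ∀ x : G, ∃ i a : ℤ, x = g ^ i * k ^ a)
    (he : ⁅k, g⁆ = k ^ e) :
    Nat.card (SchurMultiplier (G ⧸ Subgroup.center G)) ≤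
      Nat.card ↥(commutator G ⊓ Subgroup.center G) := by
  classical
  obtain ⟨n, hndef⟩ : ∃ n : ℕ, n = orderOf (⁅k, g⁆ : G) := ⟨_, rfl⟩
  have hkc₀ : Commute k (⁅k, g⁆ : G) := by rw [he]; exact (Commute.refl k).zpow_right e
  have hpowid : ∀ j : ℕ, ⁅k ^ j, g⁆ = (⁅k, g⁆ : G) ^ j := fun j => commutator_pow_left hkc₀ j
  have hcenter_iff : ∀ j : ℕ, k ^ j ∈ Subgroup.center G ↔ (⁅k, g⁆ : G) ^ j = 1 := by
    intro j
    constructor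
    · intro hj
      rw [← hpowid j, commutatorElement_eq_one_iff_commute]
      exact (Subgroup.mem_center_iff.mp hj g).symm
    · intro hj
      have hcom : Commute (k ^ j) g := by
        rw [← commutatorElement_eq_one_iff_commute, hpowid j]; exact hj
      rw [Subgroup.mem_center_iff]
      intro y
      obtain ⟨i, a, rfl⟩ := hdec y
      have h1 : Commute (k ^ j) (g ^ i) := hcom.zpow_right i
      have h2 : Commute (k ^ j) (k ^ a) := ((Commute.refl k).pow_left j).zpow_right a
      exact ((h1.mul_right h2).eq).symm
  set m : G →* G ⧸ Subgroup.center G := QuotientGroup.mk' (Subgroup.center G) with hmdef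
  have hmem_iff : ∀ x : G, x ∈ Subgroup.center G ↔ m x = 1 := by
    intro x; rw [← MonoidHom.mem_ker, QuotientGroup.ker_mk']
  have horder : orderOf (m k) = n := by
    rw [hndef, orderOf_eq_orderOf_iff]
    intro j
    rw [← map_pow, ← hmem_iff, hcenter_iff]
  have hQdec : ∀ q : G ⧸ Subgroup.center G, ∃ i a : ℤ, q = (m g) ^ i * (m k) ^ a := by
    intro q
    obtain ⟨x, rfl⟩ := QuotientGroup.mk'_surjective (Subgroup.center G) q
    obtain ⟨i, a, rfl⟩ := hdec x
    exact ⟨i, a, by rw [map_mul, map_zpow, map_zpow]⟩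
  have hQe : ⁅m k, m g⁆ = (m k) ^ e := by
    rw [← map_commutatorElement, he, map_zpow]
  -- the group W
  set U : W (G ⧸ Subgroup.center G) := QuotientGroup.mk (FreeGroup.of (m k)) with hUdef
  set T : W (G ⧸ Subgroup.center G) := QuotientGroup.mk (FreeGroup.of (m g)) with hTdef
  have hπU : piW _ U = m k := piW_of _
  have hπT : piW _ T = m g := piW_of _
  set c : W (G ⧸ Subgroup.center G) := ⁅U, T⁆ with hcdef
  have hπc : piW _ c = (m k) ^ e := by
    rw [hcdef, map_commutatorElement, hπU, hπT, hQe]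
  set z₀ : W (G ⧸ Subgroup.center G) := c * (U ^ e)⁻¹ with hz₀def
  have hz₀ : z₀ ∈ Subgroup.center (W (G ⧸ Subgroup.center G)) := by
    apply central_of_piW_eq_one
    rw [hz₀def, map_mul, map_inv, map_zpow, hπc, hπU, mul_inv_cancel]
  have hcz : c = z₀ * U ^ e := by rw [hz₀def, inv_mul_cancel_right]
  have hUz₀ : Commute U z₀ := Subgroup.mem_center_iff.mp hz₀ U
  have hUc : Commute U c := by rw [hcz]; exact hUz₀.mul_right ((Commute.refl U).zpow_right e)
  have hTUT : T * U * T⁻¹ = c⁻¹ * U := by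
    rw [hcdef]; simp only [commutatorElement_def, mul_inv_rev, inv_inv]; group
  have hz₀T : T * z₀ * T⁻¹ = z₀ := by
    rw [mul_inv_eq_iff_eq_mul]; exact Subgroup.mem_center_iff.mp hz₀ T
  have hTcT : T * c * T⁻¹ = c ^ (1 - e) := by
    have h1 : T * c * T⁻¹ = (T * z₀ * T⁻¹) * (T * U * T⁻¹) ^ e := by
      have h2 := map_mul (MulAut.conj T) z₀ (U ^ e)
      have h3 := map_zpow (MulAut.conj T) U e
      simp only [MulAut.conj_apply] at h2 h3
      rw [hcz, h2, h3]
    have hsplit : c ^ (1 - e) = c ^ (-e) * c := by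
      rw [sub_eq_neg_add, zpow_add, zpow_one]
    have hcU : Commute c⁻¹ U := (hUc.symm).inv_left
    have hstep : c ^ (-e) * c = z₀ * c ^ (-e) * U ^ e := by
      calc c ^ (-e) * c = c ^ (-e) * (z₀ * U ^ e) := congrArg (fun y => c ^ (-e) * y) hcz
        _ = c ^ (-e) * z₀ * U ^ e := (mul_assoc _ _ _).symm
        _ = z₀ * c ^ (-e) * U ^ e := by rw [Subgroup.mem_center_iff.mp hz₀ (c ^ (-e))]
    rw [h1, hz₀T, hTUT, hcU.mul_zpow, inv_zpow, ← zpow_neg, hsplit, hstep, ← mul_assoc]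
  -- c has order dividing n
  have hUn : U ^ n ∈ Subgroup.center (W (G ⧸ Subgroup.center G)) := by
    apply central_of_piW_eq_one
    rw [map_pow, hπU, ← horder, pow_orderOf_eq_one]
  have hcn : c ^ n = 1 := by
    have h1 : ⁅U ^ n, T⁆ = c ^ n := by rw [commutator_pow_left hUc n, hcdef]
    rw [← h1, commutatorElement_eq_one_iff_commute]
    exact (Subgroup.mem_center_iff.mp hUn T).symm
  -- the cyclic subgroup D
  set D : Subgroup (W (G ⧸ Subgroup.center G)) := Subgroup.zpowers c with hDdef
  have hnpos : 0 < n := by rw [hndef]; exact orderOf_pos _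
  have hfinD : Finite D := by
    have hfo : IsOfFinOrder c := isOfFinOrder_iff_pow_eq_one.mpr ⟨n, hnpos, hcn⟩
    exact Set.Finite.to_subtype (finite_zpowers.mpr hfo)
  have hconjT : ∀ x ∈ D, T * x * T⁻¹ ∈ D := by
    rintro x ⟨j, rfl⟩
    have h1 : T * c ^ j * T⁻¹ = (T * c * T⁻¹) ^ j := by
      have h2 := map_zpow (MulAut.conj T) c j
      simpa only [MulAut.conj_apply] using h2
    rw [h1, hTcT, ← zpow_mul]
    exact ⟨(1 - e) * j, rfl⟩
  have hconjTinv : ∀ x ∈ D, T⁻¹ * x * T ∈ D := by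
    have hinj : Function.Injective
        (fun y : D => (⟨T * (y : W (G ⧸ Subgroup.center G)) * T⁻¹, hconjT _ y.2⟩ : D)) := by
      intro y₁ y₂ h12
      have h13 := congrArg Subtype.val h12
      simp only at h13
      exact Subtype.ext (mul_left_cancel (mul_right_cancel h13))
    have hsurj := Finite.injective_iff_surjective.mp hinj
    intro x hx
    obtain ⟨y, hy⟩ := hsurj ⟨x, hx⟩
    have h14 : T * (y : W (G ⧸ Subgroup.center G)) * T⁻¹ = x := congrArg Subtype.val hy
    have h15 : T⁻¹ * x * T = (y : W (G ⧸ Subgroup.center G)) := by rw [← h14]; group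
    rw [h15]; exact y.2
  have hconjTi : ∀ (i : ℤ), ∀ x ∈ D, T ^ i * x * (T ^ i)⁻¹ ∈ D := by
    intro i
    induction i using Int.induction_on with
    | zero => intro x hx; simpa using hx
    | succ i ih =>
      intro x hx
      have heq : T ^ ((i : ℤ) + 1) * x * (T ^ ((i : ℤ) + 1))⁻¹
          = T * (T ^ (i : ℤ) * x * (T ^ (i : ℤ))⁻¹) * T⁻¹ := by
        rw [zpow_add_one]; group
      rw [heq]; exact hconjT _ (ih x hx)
    | pred i ih =>
      intro x hx
      have heq : T ^ (-(i : ℤ) - 1) * x * (T ^ (-(i : ℤ) - 1))⁻¹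
          = T⁻¹ * (T ^ (-(i : ℤ)) * x * (T ^ (-(i : ℤ)))⁻¹) * T := by
        rw [zpow_sub_one]; group
      rw [heq]; exact hconjTinv _ (ih x hx)
  have hconjU : ∀ (a : ℤ), ∀ x ∈ D, U ^ a * x * (U ^ a)⁻¹ ∈ D := by
    rintro a x ⟨j, rfl⟩
    have hcomm : Commute (U ^ a) (c ^ j) := hUc.zpow_zpow a j
    rw [hcomm.eq, mul_inv_cancel_right]
    exact ⟨j, rfl⟩
  have hWdec : ∀ w : W (G ⧸ Subgroup.center G),
      ∃ (i a : ℤ) (z : W (G ⧸ Subgroup.center G)),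
        z ∈ Subgroup.center (W (G ⧸ Subgroup.center G)) ∧ w = z * T ^ i * U ^ a := by
    intro w
    obtain ⟨i, a, hq⟩ := hQdec (piW _ w)
    refine ⟨i, a, w * (T ^ i * U ^ a)⁻¹, central_of_piW_eq_one ?_, by group⟩
    rw [map_mul, map_inv, map_mul, map_zpow, map_zpow, hπU, hπT, ← hq, mul_inv_cancel]
  have hDnormal : D.Normal := by
    constructor
    intro x hx w
    obtain ⟨i, a, z, hz, rfl⟩ := hWdec w
    have h1 := hconjU a x hx
    have h2 := hconjTi i _ h1
    have h3 : z * T ^ i * U ^ a * x * (z * T ^ i * U ^ a)⁻¹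
        = z * (T ^ i * (U ^ a * x * (U ^ a)⁻¹) * (T ^ i)⁻¹) * z⁻¹ := by group
    rw [h3, conj_central hz]
    exact h2
  haveI := hDnormal
  have hcentralV : ∀ z, z ∈ Subgroup.center (W (G ⧸ Subgroup.center G)) →
      ∀ v, Commute ((QuotientGroup.mk' D) z) v := by
    intro z hz v
    induction v using QuotientGroup.induction_on with
    | H w =>
      show (QuotientGroup.mk' D) z * (QuotientGroup.mk' D) w = _
      rw [← map_mul]
      have : z * w = w * z := (Subgroup.mem_center_iff.mp hz w).symm
      rw [this, map_mul]
      rfl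
  have hcUT : Commute ((QuotientGroup.mk' D) T) ((QuotientGroup.mk' D) U) := by
    rw [← commutatorElement_eq_one_iff_commute]
    have h1 : (⁅(QuotientGroup.mk' D) T, (QuotientGroup.mk' D) U⁆ :
        W (G ⧸ Subgroup.center G) ⧸ D) = (QuotientGroup.mk' D) ⁅T, U⁆ :=
      (map_commutatorElement _ _ _).symm
    rw [h1, QuotientGroup.mk'_apply, QuotientGroup.eq_one_iff]
    have : (⁅T, U⁆ : W (G ⧸ Subgroup.center G)) = c⁻¹ := by
      rw [hcdef, commutatorElement_inv]
    rw [this]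
    exact D.inv_mem (Subgroup.mem_zpowers c)
  have hcommle : ∀ w₁ w₂ : W (G ⧸ Subgroup.center G), ⁅w₁, w₂⁆ ∈ D := by
    intro w₁ w₂
    obtain ⟨i₁, a₁, z₁, hz₁, rfl⟩ := hWdec w₁
    obtain ⟨i₂, a₂, z₂, hz₂, rfl⟩ := hWdec w₂
    have hone : (QuotientGroup.mk' D) ⁅z₁ * T ^ i₁ * U ^ a₁, z₂ * T ^ i₂ * U ^ a₂⁆ = 1 := by
      rw [map_commutatorElement, commutatorElement_eq_one_iff_commute]
      simp only [map_mul, map_zpow]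
      exact commute_form (hcentralV z₁ hz₁) (hcentralV z₂ hz₂) hcUT i₁ a₁ i₂ a₂
    rw [QuotientGroup.mk'_apply, QuotientGroup.eq_one_iff] at hone
    exact hone
  -- phiW maps c to ⁅k, g⁆
  have hφU : phiW G U = Quotient.out (m k) := by
    rw [hUdef, phiW_mk]
    exact FreeGroup.lift_apply_of
  have hφT : phiW G T = Quotient.out (m g) := by
    rw [hTdef, phiW_mk]
    exact FreeGroup.lift_apply_of
  have houtk : ∃ z₁ ∈ Subgroup.center G, Quotient.out (m k) = k * z₁ := by
    refine ⟨k⁻¹ * Quotient.out (m k), ?_, by group⟩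
    have h := QuotientGroup.out_eq' (m k)
    have h2 : (QuotientGroup.mk k : G ⧸ Subgroup.center G) = QuotientGroup.mk (Quotient.out (m k)) := by
      rw [h]; rfl
    exact QuotientGroup.eq.mp h2
  have houtg : ∃ z₂ ∈ Subgroup.center G, Quotient.out (m g) = g * z₂ := by
    refine ⟨g⁻¹ * Quotient.out (m g), ?_, by group⟩
    have h := QuotientGroup.out_eq' (m g)
    have h2 : (QuotientGroup.mk g : G ⧸ Subgroup.center G) = QuotientGroup.mk (Quotient.out (m g)) := by
      rw [h]; rfl
    exact QuotientGroup.eq.mp h2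
  have hφc : phiW G c = ⁅k, g⁆ := by
    obtain ⟨z₁, hz₁, hk1⟩ := houtk
    obtain ⟨z₂, hz₂, hg1⟩ := houtg
    rw [hcdef, map_commutatorElement, hφU, hφT, hk1, hg1,
      commutator_center_right hz₂, commutator_center_left hz₁]
  -- the image of any element of SSub lies in D
  have hDmem : ∀ x : ↥(SSub (G ⧸ Subgroup.center G)),
      (QuotientGroup.mk (x : FreeGroup (G ⧸ Subgroup.center G)) : W (G ⧸ Subgroup.center G)) ∈ D := by
    intro x
    have hxC : (x : FreeGroup (G ⧸ Subgroup.center G)) ∈ commutator (FreeGroup (G ⧸ Subgroup.center G)) :=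
      x.2.2
    have h2 : (QuotientGroup.mk' (JJ (G ⧸ Subgroup.center G))) (x : FreeGroup (G ⧸ Subgroup.center G)) ∈
        Subgroup.map (QuotientGroup.mk' (JJ (G ⧸ Subgroup.center G)))
          (commutator (FreeGroup (G ⧸ Subgroup.center G))) :=
      Subgroup.mem_map_of_mem _ hxC
    rw [commutator_def, Subgroup.map_commutator] at h2
    have h3 : ⁅Subgroup.map (QuotientGroup.mk' (JJ (G ⧸ Subgroup.center G))) ⊤,
        Subgroup.map (QuotientGroup.mk' (JJ (G ⧸ Subgroup.center G))) ⊤⁆ ≤ D :=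
      Subgroup.commutator_le.mpr (fun g₁ _ g₂ _ => hcommle g₁ g₂)
    exact h3 h2
  -- theta lands in commutator G ⊓ center G
  have hmem : ∀ p, theta G p ∈ commutator G ⊓ Subgroup.center G := by
    intro p
    induction p using QuotientGroup.induction_on with
    | H x =>
      rw [theta_mk]
      refine Subgroup.mem_inf.mpr ⟨?_, phi0_central G x.2.1⟩
      have h2 : phi0 G (x : FreeGroup (G ⧸ Subgroup.center G)) ∈
          Subgroup.map (phi0 G) (commutator (FreeGroup (G ⧸ Subgroup.center G))) :=
        Subgroup.mem_map_of_mem _ x.2.2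
      rw [commutator_def, Subgroup.map_commutator] at h2
      exact Subgroup.commutator_mono le_top le_top h2
  -- injectivity
  have hinj0 : ∀ x y : ↥(SSub (G ⧸ Subgroup.center G)),
      phi0 G (x : FreeGroup (G ⧸ Subgroup.center G)) = phi0 G (y : FreeGroup (G ⧸ Subgroup.center G)) →
      (QuotientGroup.mk x : ↥(SSub (G ⧸ Subgroup.center G)) ⧸
        ((JJ (G ⧸ Subgroup.center G)).subgroupOf (SSub (G ⧸ Subgroup.center G)))) = QuotientGroup.mk y := by
    intro x y hpq
    obtain ⟨jx, hjx'⟩ := hDmem x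
    obtain ⟨jy, hjy'⟩ := hDmem y
    have hjx : c ^ jx = (QuotientGroup.mk (x : FreeGroup (G ⧸ Subgroup.center G)) :
        W (G ⧸ Subgroup.center G)) := hjx'
    have hjy : c ^ jy = (QuotientGroup.mk (y : FreeGroup (G ⧸ Subgroup.center G)) :
        W (G ⧸ Subgroup.center G)) := hjy'
    have hx' : phiW G (c ^ jx) = phi0 G (x : FreeGroup (G ⧸ Subgroup.center G)) := by
      rw [hjx, phiW_mk]
    have hy' : phiW G (c ^ jy) = phi0 G (y : FreeGroup (G ⧸ Subgroup.center G)) := by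
      rw [hjy, phiW_mk]
    have h5 : (⁅k, g⁆ : G) ^ jx = (⁅k, g⁆ : G) ^ jy := by
      rw [← hφc, ← map_zpow, ← map_zpow, hx', hy', hpq]
    have h6 : (⁅k, g⁆ : G) ^ (jx - jy) = 1 := by rw [zpow_sub, h5, mul_inv_cancel]
    have h7 : (n : ℤ) ∣ (jx - jy) := by
      rw [hndef]; exact orderOf_dvd_iff_zpow_eq_one.mpr h6
    obtain ⟨t, ht⟩ := h7
    have h8 : c ^ jx = c ^ jy := by
      have h9 : c ^ (jx - jy) = 1 := by
        rw [ht, zpow_mul, zpow_natCast, hcn, one_zpow]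
      have h10 : c ^ jx = c ^ (jx - jy) * c ^ jy := by rw [← zpow_add, sub_add_cancel]
      rw [h10, h9, one_mul]
    have h11 : (QuotientGroup.mk (x : FreeGroup (G ⧸ Subgroup.center G)) : W (G ⧸ Subgroup.center G)) =
        QuotientGroup.mk (y : FreeGroup (G ⧸ Subgroup.center G)) := by
      rw [← hjx, ← hjy]; exact h8
    have h12 : ((x : FreeGroup (G ⧸ Subgroup.center G)))⁻¹ * (y : FreeGroup (G ⧸ Subgroup.center G)) ∈
        JJ (G ⧸ Subgroup.center G) := QuotientGroup.eq.mp h11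
    refine QuotientGroup.eq.mpr ?_
    rw [Subgroup.mem_subgroupOf]
    have hcoe : ((x⁻¹ * y : ↥(SSub (G ⧸ Subgroup.center G))) : FreeGroup (G ⧸ Subgroup.center G)) =
        ((x : FreeGroup (G ⧸ Subgroup.center G)))⁻¹ * (y : FreeGroup (G ⧸ Subgroup.center G)) := rfl
    rw [hcoe]
    exact h12
  have hinj : Function.Injective (theta G) := by
    intro p q
    induction p using QuotientGroup.induction_on with
    | H x =>
      induction q using QuotientGroup.induction_on with
      | H y =>
        intro hpq
        rw [theta_mk, theta_mk] at hpq
        exact hinj0 x y hpq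
  -- conclusion
  rw [schur_eq]
  exact Nat.card_le_card_of_injective
    (fun p => (⟨theta G p, hmem p⟩ : ↥(commutator G ⊓ Subgroup.center G)))
    (fun p q h => hinj (congrArg Subtype.val h))

end SchurAux

/-- If `G` is a finite metacyclic group, then the cardinality of the
Schur multiplier `H₂(G/Z(G); ℤ)` of `G/Z(G)` is at most the cardinality of `G' ∩ Z(G)`.
(This is the key inequality showing that Ganea's homomorphism
`H₁(G) ⊗ Z(G) → H₂(G)` is an epimorphism for finite metacyclic groups.) -/
theorem card_schurMultiplier_le {G : Type*} [Group G] [Fintype G]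
    (K : Subgroup G) (hKn : K.Normal) (hKc : IsCyclic K) (hQc : IsCyclic (G ⧸ K)) :
    Nat.card (SchurMultiplier (G ⧸ Subgroup.center G)) ≤
      Nat.card ↥(commutator G ⊓ Subgroup.center G) := by
  classical
  obtain ⟨k₀, hk₀⟩ := hKc.exists_generator
  obtain ⟨g₀, hg₀⟩ := hQc.exists_generator
  have hgmk : (QuotientGroup.mk (Quotient.out g₀) : G ⧸ K) = g₀ := QuotientGroup.out_eq' g₀
  have hdec : ∀ x : G, ∃ i a : ℤ, x = (Quotient.out g₀) ^ i * (k₀ : G) ^ a := by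
    intro x
    obtain ⟨i, hi⟩ := Subgroup.mem_zpowers_iff.mp (hg₀ (QuotientGroup.mk x))
    have h2 : (QuotientGroup.mk ((Quotient.out g₀) ^ i) : G ⧸ K) = QuotientGroup.mk x := by
      have h2a : (QuotientGroup.mk ((Quotient.out g₀) ^ i) : G ⧸ K) =
          (QuotientGroup.mk (Quotient.out g₀) : G ⧸ K) ^ i :=
        map_zpow (QuotientGroup.mk' K) (Quotient.out g₀) i
      rw [h2a, hgmk, hi]
    have h3 : ((Quotient.out g₀) ^ i)⁻¹ * x ∈ K := QuotientGroup.eq.mp h2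
    obtain ⟨a, ha⟩ := Subgroup.mem_zpowers_iff.mp (hk₀ ⟨((Quotient.out g₀) ^ i)⁻¹ * x, h3⟩)
    have h4 : (k₀ : G) ^ a = ((Quotient.out g₀) ^ i)⁻¹ * x := by
      have h5 := congrArg Subtype.val ha
      rw [SubgroupClass.coe_zpow] at h5
      exact h5
    exact ⟨i, a, by rw [h4]; group⟩
  have hckg : (⁅(k₀ : G), Quotient.out g₀⁆ : G) ∈ K := by
    have h5 : Quotient.out g₀ * (k₀ : G)⁻¹ * (Quotient.out g₀)⁻¹ ∈ K :=
      hKn.conj_mem _ (K.inv_mem k₀.2) (Quotient.out g₀)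
    have h6 : (⁅(k₀ : G), Quotient.out g₀⁆ : G) =
        (k₀ : G) * (Quotient.out g₀ * (k₀ : G)⁻¹ * (Quotient.out g₀)⁻¹) := by group
    rw [h6]; exact K.mul_mem k₀.2 h5
  obtain ⟨e, he'⟩ := Subgroup.mem_zpowers_iff.mp (hk₀ ⟨⁅(k₀ : G), Quotient.out g₀⁆, hckg⟩)
  have he : (⁅(k₀ : G), Quotient.out g₀⁆ : G) = (k₀ : G) ^ e := by
    have h7 := congrArg Subtype.val he'
    rw [SubgroupClass.coe_zpow] at h7
    exact h7.symm
  exact SchurAux.master (k₀ : G) (Quotient.out g₀) e hdec he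
end

section
/- If G is a finite metacyclic group whose abelianization G/G' is cyclic, then G is a semidirect product of two cyclic groups; that is, there exist subgroups K and L of G with K normal in G, K and L both cyclic, K ∩ L = 1, and KL = G. -/
open scoped Pointwise
open scoped commutatorElement

private lemma comm_mul_left' {G : Type*} [Group G] (p q y : G) :
    ⁅p * q, y⁆ = p * ⁅q, y⁆ * p⁻¹ * ⁅p, y⁆ := by
  simp only [commutatorElement_def]; group

private lemma comm_mul_right' {G : Type*} [Group G] (x p q : G) :
    ⁅x, p * q⁆ = ⁅x, p⁆ * (p * ⁅x, q⁆ * p⁻¹) := by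
  simp only [commutatorElement_def]; group

/-- If `G` is a finite metacyclic group whose abelianization `G/G'` is
cyclic, then `G` is a (inner) semidirect product of two cyclic groups: there are subgroups
`K` and `L` of `G` with `K` normal, `K` and `L` cyclic, `K ∩ L = 1` and `KL = G`. -/
theorem metacyclic_split_of_cyclic_abelianization {G : Type*} [Group G] [Fintype G]
    (K₀ : Subgroup G) (hK₀n : K₀.Normal) (hK₀c : IsCyclic K₀) (hQc : IsCyclic (G ⧸ K₀))
    (hab : IsCyclic (G ⧸ commutator G)) :
    ∃ K L : Subgroup G, K.Normal ∧ IsCyclic K ∧ IsCyclic L ∧ K ⊓ L = ⊥ ∧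
      (K : Set G) * (L : Set G) = Set.univ := by
  classical
  set A : Subgroup G := commutator G with hA
  -- the derived subgroup is contained in K₀, hence cyclic
  have hle : A ≤ K₀ := by
    letI : CommGroup (G ⧸ K₀) := IsCyclic.commGroup
    have := Abelianization.commutator_subset_ker (QuotientGroup.mk' K₀)
    simpa [QuotientGroup.ker_mk'] using this
  have hAc : IsCyclic A := Subgroup.isCyclic_of_le hle
  -- a generator of A
  obtain ⟨⟨a, haA⟩, hagen⟩ := id hAc
  have hAz : A = Subgroup.zpowers a := by
    apply le_antisymm
    · intro x hx
      obtain ⟨k, hk⟩ := hagen ⟨x, hx⟩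
      have : a ^ k = x := congrArg Subtype.val hk
      exact ⟨k, this⟩
    · rw [Subgroup.zpowers_le]; exact haA
  -- a lift of a generator of G/A
  obtain ⟨xq, hxq⟩ := hab
  obtain ⟨g, rfl⟩ := QuotientGroup.mk_surjective xq
  -- conjugation by g on A
  have hAn : A.Normal := Subgroup.commutator_normal ⊤ ⊤
  have hga : g * a * g⁻¹ ∈ A := hAn.conj_mem a haA g
  obtain ⟨r, hr⟩ : ∃ r : ℤ, a ^ r = g * a * g⁻¹ := by
    rw [hAz] at hga
    exact Subgroup.mem_zpowers_iff.mp hga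
  -- decomposition of elements of G
  have decomp : ∀ x : G, ∃ s : ℤ, ∃ j : ℕ, x = a ^ s * g ^ j := by
    intro x
    have h1 : (x : G ⧸ A) ∈ Subgroup.zpowers ((g : G) : G ⧸ A) := hxq x
    have h2 : (x : G ⧸ A) ∈ Submonoid.powers ((g : G) : G ⧸ A) :=
      mem_powers_iff_mem_zpowers.2 h1
    rw [Submonoid.mem_powers_iff] at h2
    obtain ⟨j, hj⟩ := h2
    have hmem : x * (g ^ j)⁻¹ ∈ A := by
      rw [← QuotientGroup.eq_one_iff]
      have : ((g ^ j : G) : G ⧸ A) = (x : G ⧸ A) := by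
        rw [QuotientGroup.mk_pow]; exact hj
      simp [this]
    rw [hAz, Subgroup.mem_zpowers_iff] at hmem
    obtain ⟨s, hs⟩ := hmem
    exact ⟨s, j, by rw [hs]; group⟩
  -- conjugation by powers of g
  have conjpow : ∀ j : ℕ, g ^ j * a * (g ^ j)⁻¹ = a ^ (r ^ j) := by
    intro j
    induction j with
    | zero => simp
    | succ j ih =>
      have : g ^ (j + 1) * a * (g ^ (j + 1))⁻¹ = g * (g ^ j * a * (g ^ j)⁻¹) * g⁻¹ := by
        rw [pow_succ']; group
      rw [this, ih, ← conj_zpow, ← hr, ← zpow_mul, pow_succ']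
  set N : Subgroup G := Subgroup.zpowers (a ^ (r - 1)) with hN
  -- key computation: commutators with powers of a land in N
  have key : ∀ x : G, ∀ m : ℤ, ⁅x, a ^ m⁆ ∈ N := by
    intro x m
    obtain ⟨s, j, rfl⟩ := decomp x
    have hc1 : a ^ s * g ^ j * a ^ m * (a ^ s * g ^ j)⁻¹ = a ^ (r ^ j * m) := by
      have : g ^ j * a ^ m * (g ^ j)⁻¹ = a ^ (r ^ j * m) := by
        rw [← conj_zpow, conjpow j, ← zpow_mul]
      calc a ^ s * g ^ j * a ^ m * (a ^ s * g ^ j)⁻¹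
          = a ^ s * (g ^ j * a ^ m * (g ^ j)⁻¹) * (a ^ s)⁻¹ := by group
        _ = a ^ s * a ^ (r ^ j * m) * (a ^ s)⁻¹ := by rw [this]
        _ = a ^ (r ^ j * m) := by
            rw [← zpow_add, ← zpow_sub]; ring_nf
    have hc : ⁅a ^ s * g ^ j, a ^ m⁆ = a ^ (r ^ j * m - m) := by
      rw [commutatorElement_def, hc1, ← zpow_sub]
    rw [hc]
    obtain ⟨t, ht⟩ : (r - 1) ∣ (r ^ j - 1) := by
      simpa using sub_dvd_pow_sub_pow r 1 j
    refine Subgroup.mem_zpowers_iff.mpr ⟨t * m, ?_⟩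
    rw [← zpow_mul]
    congr 1
    rw [← mul_assoc, ← ht]
    ring
  -- N is normal
  have hNn : N.Normal := by
    constructor
    intro n hn x
    rw [Subgroup.mem_zpowers_iff] at hn
    obtain ⟨k, hk⟩ := hn
    have hn' : n = a ^ ((r - 1) * k) := by rw [zpow_mul]; exact hk.symm
    have : x * n * x⁻¹ = ⁅x, a ^ ((r - 1) * k)⁆ * n := by
      rw [commutatorElement_def, ← hn']; group
    rw [this]
    exact N.mul_mem (key x _) (Subgroup.mem_zpowers_iff.mpr ⟨k, hk⟩)
  -- the commutator subgroup is contained in N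
  have hAleN : A ≤ N := by
    rw [hA, commutator_def]
    rw [Subgroup.commutator_le]
    intro x _ y _
    obtain ⟨s, i, rfl⟩ := decomp x
    obtain ⟨t, j, rfl⟩ := decomp y
    rw [comm_mul_right']
    refine N.mul_mem (key _ t) (hNn.conj_mem _ ?_ _)
    rw [comm_mul_left']
    have hgg : ⁅g ^ i, (g : G) ^ j⁆ = 1 := by
      rw [commutatorElement_eq_one_iff_commute]
      exact (Commute.refl g).pow_pow i j
    rw [hgg]
    have : a ^ s * 1 * (a ^ s)⁻¹ * ⁅a ^ s, g ^ j⁆ = ⁅a ^ s, g ^ j⁆ := by group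
    rw [this, ← commutatorElement_inv]
    exact N.inv_mem (key _ s)
  -- hence a ∈ N
  have haN : a ∈ N := hAleN (by rw [hAz]; exact Subgroup.mem_zpowers a)
  rw [Subgroup.mem_zpowers_iff] at haN
  obtain ⟨k, hk⟩ := haN
  -- order of the image of g
  haveI : Finite (G ⧸ A) := Quotient.finite _
  set n : ℕ := orderOf ((g : G) : G ⧸ A) with hn'
  have hgnA : g ^ n ∈ A := by
    rw [← QuotientGroup.eq_one_iff, QuotientGroup.mk_pow]
    exact pow_orderOf_eq_one _
  obtain ⟨s, hs⟩ : ∃ s : ℤ, a ^ s = g ^ n := by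
    rw [hAz] at hgnA; exact Subgroup.mem_zpowers_iff.mp hgnA
  -- g^n = 1
  have hgn : g ^ n = 1 := by
    have hfix : g * a ^ s * g⁻¹ = a ^ s := by
      rw [hs]; group
    have h1 : a ^ (r * s) = a ^ s := by
      rw [zpow_mul, hr, conj_zpow]
      exact hfix
    have h2 : a ^ ((r - 1) * s) = 1 := by
      rw [sub_mul, one_mul, zpow_sub, h1, mul_inv_cancel]
    have h3 : a ^ ((r - 1) * k * s) = a ^ s := by
      rw [zpow_mul, zpow_mul, hk]
    have h4 : a ^ ((r - 1) * k * s) = (a ^ ((r - 1) * s)) ^ k := by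
      rw [← zpow_mul]
      congr 1
      ring
    rw [← hs, ← h3, h4, h2, one_zpow]
  refine ⟨A, Subgroup.zpowers g, hAn, hAc, ?_, ?_, ?_⟩
  · -- zpowers g is cyclic
    refine ⟨⟨⟨g, Subgroup.mem_zpowers g⟩, ?_⟩⟩
    rintro ⟨y, hy⟩
    rw [Subgroup.mem_zpowers_iff] at hy
    obtain ⟨m, hm⟩ := hy
    refine Subgroup.mem_zpowers_iff.mpr ⟨m, Subtype.ext ?_⟩
    simpa using hm
  · -- trivial intersection
    rw [eq_bot_iff]
    intro x hx
    rw [Subgroup.mem_inf, Subgroup.mem_zpowers_iff] at hx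
    obtain ⟨hxA, m, hm⟩ := hx
    have hmk : ((g : G) : G ⧸ A) ^ m = 1 := by
      have h5 : ((x : G) : G ⧸ A) = 1 := QuotientGroup.eq_one_iff x |>.2 hxA
      rw [← hm] at h5
      simpa using h5
    obtain ⟨q, hq⟩ := orderOf_dvd_iff_zpow_eq_one.2 hmk
    rw [← hn'] at hq
    rw [Subgroup.mem_bot, ← hm, hq, zpow_mul, zpow_natCast, hgn, one_zpow]
  · -- A * zpowers g = G
    ext x
    simp only [Set.mem_univ, iff_true]
    obtain ⟨s', j, hx⟩ := decomp x
    refine Set.mem_mul.2 ⟨a ^ s', ?_, g ^ j,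
      Subgroup.mem_zpowers_iff.mpr ⟨(j : ℤ), zpow_natCast g j⟩, hx.symm⟩
    rw [hAz]; exact Subgroup.mem_zpowers_iff.mpr ⟨s', rfl⟩
end

section
/- The abelianization of G has cardinality |G/G'| = gcd(m, r−1)·s, and the image of ⟨a⟩ in G/G' has cardinality gcd(m, r−1). -/
private lemma normal_aux {G : Type*} [Group G] {a b x : G}
    (hgen : Subgroup.closure ({a, b} : Set G) = ⊤)
    (h1 : a * x * a⁻¹ ∈ Subgroup.zpowers x) (h2 : a⁻¹ * x * a ∈ Subgroup.zpowers x)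
    (h3 : b * x * b⁻¹ ∈ Subgroup.zpowers x) (h4 : b⁻¹ * x * b ∈ Subgroup.zpowers x) :
    (Subgroup.zpowers x).Normal := by
  have key : ∀ g : G, g * x * g⁻¹ ∈ Subgroup.zpowers x → g⁻¹ * x * g ∈ Subgroup.zpowers x →
      g ∈ Subgroup.normalizer (Subgroup.zpowers x : Set G) := by
    intro g hg hg'
    rw [Subgroup.mem_normalizer_iff]
    intro h
    constructor
    · intro hh
      obtain ⟨k, rfl⟩ := Subgroup.mem_zpowers_iff.mp hh
      obtain ⟨j, hj⟩ := Subgroup.mem_zpowers_iff.mp hg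
      refine Subgroup.mem_zpowers_iff.mpr ⟨j * k, ?_⟩
      rw [zpow_mul, hj, conj_zpow]
    · intro hh
      obtain ⟨k, hk⟩ := Subgroup.mem_zpowers_iff.mp hh
      obtain ⟨j, hj⟩ := Subgroup.mem_zpowers_iff.mp hg'
      have e : h = g⁻¹ * (g * h * g⁻¹) * g⁻¹⁻¹ := by group
      refine Subgroup.mem_zpowers_iff.mpr ⟨j * k, ?_⟩
      rw [e, ← hk, zpow_mul, hj, ← conj_zpow, inv_inv]
  rw [← Subgroup.normalizer_eq_top_iff, ← top_le_iff, ← hgen, Subgroup.closure_le]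
  rintro g hg
  rcases hg with rfl | rfl
  · exact key g h1 h2
  · exact key g h3 h4

open scoped commutatorElement

/-- The abelianization of the metacyclic group
`G = ⟨a, b | a^m = 1, b^s = a^t, b⁻¹ab = a^r⟩` has cardinality `gcd m (r−1) · s`, and the
image of `⟨a⟩` in `G/G'` has cardinality `gcd m (r−1)`. -/
theorem card_abelianization {G : Type*} [Group G] [Fintype G]
    (m s t r : ℕ) (hm : 0 < m) (hs : 0 < s) (ht : 0 < t) (hr : 0 < r)
    (hrsm : r ^ s ≡ 1 [MOD m]) (hmt : m ∣ t * (r - 1))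
    (a b : G) (hgen : Subgroup.closure ({a, b} : Set G) = ⊤)
    (ham : a ^ m = 1) (hba : b ^ s = a ^ t) (hcon : b⁻¹ * a * b = a ^ r)
    (horda : orderOf a = m)
    (hordb : ∀ j : ℕ, b ^ j ∈ Subgroup.zpowers a ↔ s ∣ j) :
    Nat.card (G ⧸ commutator G) = Nat.gcd m (r - 1) * s ∧
      Nat.card ((Subgroup.zpowers a).map (QuotientGroup.mk' (commutator G))) =
        Nat.gcd m (r - 1) := by
  have hs1 : s - 1 + 1 = s := Nat.succ_pred_eq_of_pos hs
  have hr1 : r - 1 + 1 = r := Nat.succ_pred_eq_of_pos hr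
  -- conjugation formulas
  have hconjk : ∀ k : ℕ, b⁻¹ * a ^ k * b = a ^ (r * k) := by
    intro k
    have e : b⁻¹ * a ^ k * b = (b⁻¹ * a * b⁻¹⁻¹) ^ k := by rw [conj_pow]; group
    rw [e, inv_inv, hcon, ← pow_mul]
  have hiter : ∀ k : ℕ, (b ^ k)⁻¹ * a * b ^ k = a ^ (r ^ k) := by
    intro k
    induction k with
    | zero => simp
    | succ n ih =>
      calc (b ^ (n+1))⁻¹ * a * b ^ (n+1) = b⁻¹ * ((b ^ n)⁻¹ * a * b ^ n) * b := by
            rw [pow_succ]; group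
        _ = b⁻¹ * a ^ (r ^ n) * b := by rw [ih]
        _ = a ^ (r * r ^ n) := hconjk _
        _ = a ^ (r ^ (n+1)) := by rw [← pow_succ']
  have hbab : b * a * b⁻¹ = a ^ (r ^ (s-1)) := by
    have h2 : a = b ^ (s-1) * a ^ (r ^ (s-1)) * (b ^ (s-1))⁻¹ := by
      rw [← hiter (s-1)]; group
    have hb1 : b * b ^ (s-1) = b ^ s := by rw [← pow_succ', hs1]
    have h3 : b * a * b⁻¹ = (b ^ s) * a ^ (r ^ (s-1)) * (b ^ s)⁻¹ := by
      conv_lhs => rw [h2]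
      rw [← hb1]; group
    rw [h3, hba]
    have hc : a ^ t * a ^ (r ^ (s-1)) = a ^ (r ^ (s-1)) * a ^ t := pow_mul_comm a t _
    rw [hc, mul_assoc]; group
  -- normality of ⟨a⟩
  have hAnormal : (Subgroup.zpowers a).Normal := by
    refine normal_aux hgen (Subgroup.mem_zpowers_iff.mpr ⟨1, by group⟩)
      (Subgroup.mem_zpowers_iff.mpr ⟨1, by group⟩) ?_ ?_
    · exact Subgroup.mem_zpowers_iff.mpr ⟨(r ^ (s-1) : ℕ), by rw [zpow_natCast, hbab]⟩
    · exact Subgroup.mem_zpowers_iff.mpr ⟨(r : ℕ), by rw [zpow_natCast, hcon]⟩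
  -- the subgroup N = ⟨a^(r-1)⟩
  have hNnormal : (Subgroup.zpowers (a ^ (r-1))).Normal := by
    refine normal_aux hgen (Subgroup.mem_zpowers_iff.mpr ⟨1, by rw [zpow_one]; group⟩)
      (Subgroup.mem_zpowers_iff.mpr ⟨1, by rw [zpow_one]; group⟩) ?_ ?_
    · refine Subgroup.mem_zpowers_iff.mpr ⟨(r ^ (s-1) : ℕ), ?_⟩
      rw [zpow_natCast, ← pow_mul, mul_comm (r-1), pow_mul, ← hbab, conj_pow]
    · refine Subgroup.mem_zpowers_iff.mpr ⟨(r : ℕ), ?_⟩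
      rw [zpow_natCast, ← pow_mul, mul_comm (r-1), pow_mul, ← hcon]
      have e : b⁻¹ * a * b = b⁻¹ * a * b⁻¹⁻¹ := by rw [inv_inv]
      rw [e, conj_pow, inv_inv]
  set N := Subgroup.zpowers (a ^ (r-1)) with hN
  haveI := hAnormal
  haveI := hNnormal
  -- cardinality of G
  set π := QuotientGroup.mk' (Subgroup.zpowers a) with hπ
  have hπa : π a = 1 := (QuotientGroup.eq_one_iff a).mpr (Subgroup.mem_zpowers a)
  have htopq : Subgroup.zpowers (π b) = ⊤ := by
    rw [eq_top_iff, ← Subgroup.map_top_of_surjective π (QuotientGroup.mk'_surjective _), ← hgen,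
      MonoidHom.map_closure, Subgroup.closure_le]
    rintro x ⟨g, hg, rfl⟩
    rcases hg with rfl | rfl
    · rw [SetLike.mem_coe, hπa]; exact one_mem _
    · exact Subgroup.mem_zpowers _
  have hords : orderOf (π b) = s := by
    refine Nat.dvd_antisymm (orderOf_dvd_iff_pow_eq_one.mpr ?_) ((hordb _).mp ?_)
    · rw [← map_pow]
      exact (QuotientGroup.eq_one_iff _).mpr ((hordb s).mpr dvd_rfl)
    · rw [← QuotientGroup.eq_one_iff (N := Subgroup.zpowers a)]
      show π (b ^ orderOf (π b)) = 1
      rw [map_pow]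
      exact pow_orderOf_eq_one _
  have hcardq : Nat.card (G ⧸ Subgroup.zpowers a) = s := by
    calc Nat.card (G ⧸ Subgroup.zpowers a) = Nat.card (⊤ : Subgroup (G ⧸ Subgroup.zpowers a)) :=
          Subgroup.card_top.symm
      _ = Nat.card (Subgroup.zpowers (π b)) := by rw [htopq]
      _ = orderOf (π b) := Nat.card_zpowers _
      _ = s := hords
  have hcardG : Nat.card G = s * m := by
    rw [Subgroup.card_eq_card_quotient_mul_card_subgroup (Subgroup.zpowers a), hcardq,
      Nat.card_zpowers, horda]
  -- commutator G = N
  have hpredr : a ^ r = a * a ^ (r-1) := by rw [← pow_succ', hr1]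
  have hNle : N ≤ commutator G := by
    rw [hN, Subgroup.zpowers_le]
    have hel : a ^ (r - 1) = ⁅a⁻¹, b⁻¹⁆ := by
      have : ⁅a⁻¹, b⁻¹⁆ = a⁻¹ * (b⁻¹ * a * b) := by
        rw [commutatorElement_def]; group
      rw [this, hcon, hpredr, inv_mul_cancel_left]
    rw [hel, commutator_def]
    exact Subgroup.commutator_mem_commutator (Subgroup.mem_top _) (Subgroup.mem_top _)
  set ρ := QuotientGroup.mk' N with hρ
  have hgenQ : Subgroup.closure ({ρ a, ρ b} : Set (G ⧸ N)) = ⊤ := by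
    rw [← Subgroup.map_top_of_surjective ρ (QuotientGroup.mk'_surjective _), ← hgen,
      MonoidHom.map_closure]
    congr 1
    rw [Set.image_insert_eq, Set.image_singleton]
  have hab : ρ a * ρ b = ρ b * ρ a := by
    have hmem : (a * b)⁻¹ * (b * a) ∈ N := by
      have e1 : (a * b)⁻¹ * (b * a) = (b⁻¹ * a * b)⁻¹ * a := by group
      have e2 : (a * b)⁻¹ * (b * a) = (a ^ (r-1))⁻¹ := by
        rw [e1, hcon, hpredr]; group
      rw [e2]
      exact inv_mem (Subgroup.mem_zpowers _)
    have : ρ (a * b) = ρ (b * a) := by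
      show ((a * b : G) : G ⧸ N) = ((b * a : G) : G ⧸ N)
      exact QuotientGroup.eq.mpr hmem
    simpa [map_mul] using this
  have hcommQ : ∀ x y : G ⧸ N, x * y = y * x := by
    have hsub : ∀ y : G ⧸ N, y ∈ Subgroup.centralizer {ρ a, ρ b} := by
      intro y
      have hle : (⊤ : Subgroup (G ⧸ N)) ≤ Subgroup.centralizer {ρ a, ρ b} := by
        rw [← hgenQ, Subgroup.closure_le]
        rintro x hx
        rw [SetLike.mem_coe, Subgroup.mem_centralizer_iff]
        rcases hx with rfl | rfl
        · rintro h (rfl | rfl)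
          · rfl
          · exact hab.symm
        · rintro h (rfl | rfl)
          · exact hab
          · rfl
      exact hle (Subgroup.mem_top y)
    intro x y
    have hx : ∀ g ∈ ({ρ a, ρ b} : Set (G ⧸ N)), g * x = x * g :=
      Subgroup.mem_centralizer_iff.mp (hsub x)
    have hle : (⊤ : Subgroup (G ⧸ N)) ≤ Subgroup.centralizer {x} := by
      rw [← hgenQ, Subgroup.closure_le]
      intro g hg
      rw [SetLike.mem_coe, Subgroup.mem_centralizer_iff]
      rintro h rfl
      exact (hx g hg).symm
    have := Subgroup.mem_centralizer_iff.mp (hle (Subgroup.mem_top y)) x rfl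
    exact this
  have hcommle : commutator G ≤ N := by
    rw [commutator_def, Subgroup.commutator_le]
    intro g _ h _
    rw [← QuotientGroup.eq_one_iff (N := N)]
    show ρ ⁅g, h⁆ = 1
    rw [map_commutatorElement]
    exact commutatorElement_eq_one_iff_commute.mpr (hcommQ _ _)
  have hcomm : commutator G = N := le_antisymm hcommle hNle
  have hdpos : 0 < Nat.gcd m (r-1) := Nat.gcd_pos_of_pos_left _ hm
  have hdm : Nat.gcd m (r-1) ∣ m := Nat.gcd_dvd_left _ _
  have hcardN : Nat.card N = m / Nat.gcd m (r-1) := by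
    rw [hN, Nat.card_zpowers, orderOf_pow, horda]
  -- first goal
  have goal1 : Nat.card (G ⧸ commutator G) = Nat.gcd m (r - 1) * s := by
    have hL := Subgroup.card_eq_card_quotient_mul_card_subgroup (commutator G)
    have hc2 : Nat.card (commutator G) = m / Nat.gcd m (r-1) := by rw [hcomm]; exact hcardN
    rw [hcardG, hc2] at hL
    have hmd : 0 < m / Nat.gcd m (r-1) := Nat.div_pos (Nat.le_of_dvd hm hdm) hdpos
    apply Nat.eq_of_mul_eq_mul_right hmd
    rw [← hL, mul_comm (Nat.gcd m (r-1)) s, mul_assoc, Nat.mul_div_cancel' hdm]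
  refine ⟨goal1, ?_⟩
  -- second goal
  set ρ' := QuotientGroup.mk' (commutator G) with hρ'
  have hord : orderOf (ρ' a) = Nat.gcd m (r-1) := by
    refine Nat.dvd_antisymm (orderOf_dvd_iff_pow_eq_one.mpr ?_) ?_
    · rw [← map_pow]
      rw [QuotientGroup.mk'_apply, QuotientGroup.eq_one_iff, hcomm, hN]
      -- a ^ gcd ∈ zpowers (a ^ (r-1)) by Bezout
      have h1 : (a : G) ^ ((Nat.gcd m (r-1) : ℕ) : ℤ) =
          ((a ^ (r-1)) : G) ^ (Nat.gcdB m (r-1)) := by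
        calc a ^ ((Nat.gcd m (r-1) : ℕ) : ℤ)
            = a ^ ((m : ℤ) * Nat.gcdA m (r-1) + ((r-1 : ℕ) : ℤ) * Nat.gcdB m (r-1)) := by
              rw [← Nat.gcd_eq_gcd_ab]
          _ = a ^ ((m : ℤ) * Nat.gcdA m (r-1)) * a ^ (((r-1 : ℕ) : ℤ) * Nat.gcdB m (r-1)) :=
              zpow_add a _ _
          _ = a ^ (((r-1 : ℕ) : ℤ) * Nat.gcdB m (r-1)) := by
              rw [zpow_mul, zpow_natCast, ham, one_zpow, one_mul]
          _ = (a ^ ((r-1 : ℕ) : ℤ)) ^ Nat.gcdB m (r-1) := by rw [← zpow_mul]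
          _ = (a ^ (r-1)) ^ Nat.gcdB m (r-1) := by rw [zpow_natCast]
      exact Subgroup.mem_zpowers_iff.mpr ⟨Nat.gcdB m (r-1), by rw [← h1, zpow_natCast]⟩
    · set k := orderOf (ρ' a) with hk
      have hmemk : a ^ k ∈ N := by
        rw [← hcomm, ← QuotientGroup.eq_one_iff (N := commutator G)]
        show ρ' (a ^ k) = 1
        rw [map_pow]
        exact pow_orderOf_eq_one _
      obtain ⟨z, hz⟩ := Subgroup.mem_zpowers_iff.mp hmemk
      have hone : a ^ (((r-1 : ℕ) : ℤ) * z - (k : ℤ)) = 1 := by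
        rw [zpow_sub, zpow_mul, zpow_natCast, zpow_natCast, hz, mul_inv_cancel]
      have hmdvd : (m : ℤ) ∣ (((r-1 : ℕ) : ℤ) * z - (k : ℤ)) := by
        rw [← horda]
        exact orderOf_dvd_iff_zpow_eq_one.mpr hone
      have hd1 : ((Nat.gcd m (r-1) : ℕ) : ℤ) ∣ ((r-1 : ℕ) : ℤ) :=
        Int.natCast_dvd_natCast.mpr (Nat.gcd_dvd_right _ _)
      have hd2 : ((Nat.gcd m (r-1) : ℕ) : ℤ) ∣ (m : ℤ) :=
        Int.natCast_dvd_natCast.mpr (Nat.gcd_dvd_left _ _)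
      have hdk : ((Nat.gcd m (r-1) : ℕ) : ℤ) ∣ (k : ℤ) := by
        have e : (k : ℤ) = ((r-1 : ℕ) : ℤ) * z - (((r-1 : ℕ) : ℤ) * z - (k : ℤ)) := by ring
        rw [e]
        exact dvd_sub (hd1.mul_right z) (hd2.trans hmdvd)
      exact_mod_cast hdk
  rw [MonoidHom.map_zpowers, Nat.card_zpowers, hord]
end

section
/- ⟨b⟩ ∩ G' = ⟨b^s⟩ if and only if gcd(m, r−1) divides t. -/
/-- In the metacyclic group `G = ⟨a, b | a^m = 1, b^s = a^t, b⁻¹ab = a^r⟩`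
one has `⟨b⟩ ∩ G' = ⟨b^s⟩` if and only if `gcd m (r−1) ∣ t`. -/
theorem zpowers_inf_commutator_iff {G : Type*} [Group G] [Fintype G]
    (m s t r : ℕ) (hm : 0 < m) (hs : 0 < s) (ht : 0 < t) (hr : 0 < r)
    (hrsm : r ^ s ≡ 1 [MOD m]) (hmt : m ∣ t * (r - 1))
    (a b : G) (hgen : Subgroup.closure ({a, b} : Set G) = ⊤)
    (ham : a ^ m = 1) (hba : b ^ s = a ^ t) (hcon : b⁻¹ * a * b = a ^ r)
    (horda : orderOf a = m)
    (hordb : ∀ j : ℕ, b ^ j ∈ Subgroup.zpowers a ↔ s ∣ j) :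
    Subgroup.zpowers b ⊓ commutator G = Subgroup.zpowers (b ^ s) ↔
      Nat.gcd m (r - 1) ∣ t := by
  classical
  set e := r - 1 with he
  set d := Nat.gcd m e with hd
  set N := Subgroup.zpowers (a ^ d) with hN
  have hdm : d ∣ m := Nat.gcd_dvd_left m e
  have hde : d ∣ e := Nat.gcd_dvd_right m e
  have hr1 : 1 + e = r := by omega
  have haeN : a ^ e ∈ N := by
    obtain ⟨k, hk⟩ := hde
    rw [hk, pow_mul]
    exact Subgroup.pow_mem N (Subgroup.mem_zpowers _) k
  have hNa : N ≤ Subgroup.zpowers a :=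
    Subgroup.zpowers_le.mpr (Subgroup.pow_mem _ (Subgroup.mem_zpowers a) d)
  -- conjugation of a^d by b⁻¹ ... b
  have hconjd : b⁻¹ * a ^ d * b = (a ^ d) ^ r := by
    have h1 : b⁻¹ * a ^ d * b = (b⁻¹ * a * b) ^ d := by
      clear hcon; induction d with
      | zero => group
      | succ n ih =>
        rw [pow_succ, pow_succ, ← ih]; group
    rw [h1, hcon, ← pow_mul, mul_comm, pow_mul]
  have hordconj : orderOf (b⁻¹ * a ^ d * b) = orderOf (a ^ d) := by
    have := orderOf_injective (MulAut.conj b⁻¹).toMonoidHom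
      (MulAut.conj b⁻¹).injective (a ^ d)
    simpa [MulAut.conj_apply] using this
  have hbN : Subgroup.zpowers (b⁻¹ * a ^ d * b) = N := by
    refine Subgroup.eq_of_le_of_card_ge ?_ ?_
    · exact Subgroup.zpowers_le.mpr
        (by rw [hconjd]; exact Subgroup.pow_mem N (Subgroup.mem_zpowers _) r)
    · rw [Nat.card_zpowers, Nat.card_zpowers, hordconj]
  -- elements commuting with a^d normalize N
  have hcomm : ∀ h ∈ N, ∀ g : G, Commute g (a ^ d) → g * h * g⁻¹ = h := by
    intro h hh g hg
    rw [Subgroup.mem_zpowers_iff] at hh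
    obtain ⟨k, rfl⟩ := hh
    have hcz : g * (a ^ d) ^ k = (a ^ d) ^ k * g := (hg.zpow_right k).eq
    rw [hcz, mul_assoc, mul_inv_cancel, mul_one]
  have hNnormal : N.Normal := by
    rw [← Subgroup.normalizer_eq_top_iff, ← top_le_iff, ← hgen, Subgroup.closure_le]
    intro x hx
    simp only [Set.mem_insert_iff, Set.mem_singleton_iff] at hx
    rcases hx with rfl | rfl
    · -- x = a
      rw [SetLike.mem_coe, Subgroup.mem_normalizer_iff]
      intro h
      constructor
      · intro hh
        rw [hcomm h hh x ((Commute.refl x).pow_right d)]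
        exact hh
      · intro hh
        have h2 : x⁻¹ * (x * h * x⁻¹) * x⁻¹⁻¹ = x * h * x⁻¹ :=
          hcomm _ hh x⁻¹ (((Commute.refl x).pow_right d).inv_left)
        have h3 : x⁻¹ * (x * h * x⁻¹) * x⁻¹⁻¹ = h := by group
        rw [← h3, h2]; exact hh
    · -- x = b
      rw [SetLike.mem_coe, Subgroup.mem_normalizer_iff]
      have hck : ∀ k : ℤ, (x⁻¹ * a ^ d * x) ^ k = x⁻¹ * (a ^ d) ^ k * x := by
        intro k
        have h0 := map_zpow (MulAut.conj x⁻¹).toMonoidHom (a ^ d) k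
        simpa [MulAut.conj_apply, mul_assoc] using h0.symm
      intro h
      constructor
      · intro hh
        rw [← hbN, Subgroup.mem_zpowers_iff] at hh
        obtain ⟨k, hk⟩ := hh
        rw [hck] at hk
        refine Subgroup.mem_zpowers_iff.mpr ⟨k, ?_⟩
        rw [← hk]; group
      · intro hh
        rw [Subgroup.mem_zpowers_iff] at hh
        obtain ⟨k, hk⟩ := hh
        rw [← hbN]
        refine Subgroup.mem_zpowers_iff.mpr ⟨k, ?_⟩
        rw [hck, hk]; group
  haveI := hNnormal
  -- the quotient is commutative, so commutator G ≤ N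
  set f := QuotientGroup.mk' N with hf
  have hfe : f (a ^ e) = 1 := (QuotientGroup.eq_one_iff _).mpr haeN
  have hkey : a * b = b * a * a ^ e := by
    have h1 : a * b = b * a ^ r := by rw [← hcon]; group
    rw [h1, ← hr1, pow_add, pow_one, mul_assoc]
  have hfab : Commute (f a) (f b) := by
    have := congrArg f hkey
    simp only [map_mul, hfe, mul_one] at this
    exact this
  have hQtop : Subgroup.closure ({f a, f b} : Set (G ⧸ N)) = ⊤ := by
    have h1 := MonoidHom.map_closure f ({a, b} : Set G)
    rw [hgen, Subgroup.map_top_of_surjective f (QuotientGroup.mk'_surjective N),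
      Set.image_pair] at h1
    exact h1.symm
  have hgen_comm : ∀ x : G ⧸ N, Commute (f a) x ∧ Commute (f b) x := by
    intro x
    constructor
    · have hle : Subgroup.closure ({f a, f b} : Set (G ⧸ N)) ≤
          Subgroup.centralizer {f a} := by
        rw [Subgroup.closure_le]
        intro y hy
        simp only [Set.mem_insert_iff, Set.mem_singleton_iff] at hy
        rcases hy with rfl | rfl
        · exact Subgroup.mem_centralizer_singleton_iff.mpr rfl
        · exact Subgroup.mem_centralizer_singleton_iff.mpr hfab.symm.eq
      have hx : x ∈ Subgroup.centralizer {f a} :=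
        hle (by rw [hQtop]; trivial)
      exact (Subgroup.mem_centralizer_singleton_iff.mp hx).symm
    · have hle : Subgroup.closure ({f a, f b} : Set (G ⧸ N)) ≤
          Subgroup.centralizer {f b} := by
        rw [Subgroup.closure_le]
        intro y hy
        simp only [Set.mem_insert_iff, Set.mem_singleton_iff] at hy
        rcases hy with rfl | rfl
        · exact Subgroup.mem_centralizer_singleton_iff.mpr hfab.eq
        · exact Subgroup.mem_centralizer_singleton_iff.mpr rfl
      have hx : x ∈ Subgroup.centralizer {f b} :=
        hle (by rw [hQtop]; trivial)
      exact (Subgroup.mem_centralizer_singleton_iff.mp hx).symm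
  have hQcomm : ∀ x y : G ⧸ N, Commute x y := by
    intro x y
    have hle : Subgroup.closure ({f a, f b} : Set (G ⧸ N)) ≤
        Subgroup.centralizer {x} := by
      rw [Subgroup.closure_le]
      intro z hz
      simp only [Set.mem_insert_iff, Set.mem_singleton_iff] at hz
      rcases hz with rfl | rfl
      · exact Subgroup.mem_centralizer_singleton_iff.mpr ((hgen_comm x).1).eq
      · exact Subgroup.mem_centralizer_singleton_iff.mpr ((hgen_comm x).2).eq
    have hy : y ∈ Subgroup.centralizer {x} := hle (by rw [hQtop]; trivial)
    exact ((Subgroup.mem_centralizer_singleton_iff.mp hy)).symm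
  have hGN : commutator G ≤ N := by
    rw [commutator_def, Subgroup.commutator_le]
    intro g1 _ g2 _
    open scoped commutatorElement in
    have h1 : f ⁅g1, g2⁆ = 1 := by
      rw [map_commutatorElement]
      exact commutatorElement_eq_one_iff_commute.mpr (hQcomm _ _)
    exact (QuotientGroup.eq_one_iff _).mp h1
  -- lower bound : N ≤ commutator G
  have haeC : a ^ e ∈ commutator G := by
    open scoped commutatorElement in
    have h1 : a ^ e = ⁅a⁻¹, b⁻¹⁆ := by
      rw [commutatorElement_def, inv_inv, inv_inv]
      have h2 : a⁻¹ * b⁻¹ * a * b = a⁻¹ * (b⁻¹ * a * b) := by group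
      rw [h2, hcon, ← hr1, pow_add, pow_one, ← mul_assoc, inv_mul_cancel, one_mul]
    rw [h1, commutator_def]
    exact Subgroup.commutator_mem_commutator (Subgroup.mem_top _) (Subgroup.mem_top _)
  have hadC : a ^ d ∈ commutator G := by
    have hbez : (d : ℤ) = m * Nat.gcdA m e + e * Nat.gcdB m e := Nat.gcd_eq_gcd_ab m e
    have h1 : a ^ (d : ℤ) = (a ^ (e : ℤ)) ^ Nat.gcdB m e := by
      rw [hbez, zpow_add, zpow_mul, zpow_mul, zpow_natCast, ham, one_zpow, one_mul]
    have h2 : a ^ d = (a ^ e) ^ Nat.gcdB m e := by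
      rw [← zpow_natCast a d, ← zpow_natCast a e, h1]
    rw [h2]
    exact Subgroup.zpow_mem _ haeC _
  have hCN : commutator G = N := le_antisymm hGN (Subgroup.zpowers_le.mpr hadC)
  rw [hCN]
  constructor
  · -- equality implies d ∣ t
    intro hEq
    have hbs : b ^ s ∈ N := by
      have h1 : b ^ s ∈ Subgroup.zpowers (b ^ s) := Subgroup.mem_zpowers _
      rw [← hEq] at h1
      exact h1.2
    rw [hba, Subgroup.mem_zpowers_iff] at hbs
    obtain ⟨k, hk⟩ := hbs
    have h5 : a ^ ((d : ℤ) * k - (t : ℤ)) = 1 := by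
      rw [zpow_sub, zpow_mul, zpow_natCast, zpow_natCast, hk, mul_inv_cancel]
    have h6 : (m : ℤ) ∣ (d : ℤ) * k - (t : ℤ) := by
      rw [← horda]
      exact orderOf_dvd_iff_zpow_eq_one.mpr h5
    have hdm' : (d : ℤ) ∣ (m : ℤ) := Int.natCast_dvd_natCast.mpr hdm
    have h7 : (d : ℤ) ∣ (t : ℤ) := by
      have h8 : (d : ℤ) ∣ (d : ℤ) * k - (t : ℤ) := hdm'.trans h6
      have h9 : (d : ℤ) ∣ (d : ℤ) * k := ⟨k, rfl⟩
      simpa using dvd_sub h9 h8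
    exact Int.natCast_dvd_natCast.mp h7
  · -- d ∣ t implies equality
    intro hdt
    obtain ⟨k, hk⟩ := hdt
    have hbsN : b ^ s ∈ N := by
      rw [hba, hk, pow_mul]
      exact Subgroup.pow_mem N (Subgroup.mem_zpowers _) k
    apply le_antisymm
    · rintro x ⟨hx1, hx2⟩
      obtain ⟨n, hn⟩ := (isOfFinOrder_of_finite b).mem_powers_iff_mem_zpowers.mpr hx1
      have hn' : b ^ n = x := hn
      have hsn : s ∣ n := (hordb n).mp (by rw [hn']; exact hNa hx2)
      obtain ⟨k2, rfl⟩ := hsn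
      exact Subgroup.mem_zpowers_iff.mpr ⟨(k2 : ℤ), by rw [zpow_natCast, ← pow_mul, hn']⟩
    · exact le_inf
        (Subgroup.zpowers_le.mpr (Subgroup.pow_mem _ (Subgroup.mem_zpowers b) s))
        (Subgroup.zpowers_le.mpr hbsN)
end

section
/- Let A and B denote the images of the subgroups ⟨a⟩ and ⟨b⟩ under the abelianization map G → G/G'. Then A ∩ B = 1 and A·B = G/G' (i.e., G/G' is the internal direct sum of A and B) if and only if gcd(m, r−1) divides t. (This is the criterion for the family consisting of ⟨a⟩, ⟨b⟩ and their conjugates to be generating and independent.) -/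
open scoped commutatorElement

/-- Let `A`, `B` be the images of `⟨a⟩` and `⟨b⟩` under the
abelianization map `G → G/G'` of the metacyclic group
`G = ⟨a, b | a^m = 1, b^s = a^t, b⁻¹ab = a^r⟩`. Then `A ∩ B = 1` and `A·B = G/G'`
(i.e. `G/G'` is the internal direct sum of `A` and `B`) if and only if
`gcd m (r−1) ∣ t`. -/
theorem independence_criterion {G : Type*} [Group G] [Fintype G]
    (m s t r : ℕ) (hm : 0 < m) (hs : 0 < s) (ht : 0 < t) (hr : 0 < r)
    (hrsm : r ^ s ≡ 1 [MOD m]) (hmt : m ∣ t * (r - 1))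
    (a b : G) (hgen : Subgroup.closure ({a, b} : Set G) = ⊤)
    (ham : a ^ m = 1) (hba : b ^ s = a ^ t) (hcon : b⁻¹ * a * b = a ^ r)
    (horda : orderOf a = m)
    (hordb : ∀ j : ℕ, b ^ j ∈ Subgroup.zpowers a ↔ s ∣ j)
    (A B : Subgroup (G ⧸ commutator G))
    (hA : A = (Subgroup.zpowers a).map (QuotientGroup.mk' (commutator G)))
    (hB : B = (Subgroup.zpowers b).map (QuotientGroup.mk' (commutator G))) :
    (A ⊓ B = ⊥ ∧ A ⊔ B = ⊤) ↔ Nat.gcd m (r - 1) ∣ t := by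
  subst hA hB
  set d := Nat.gcd m (r - 1) with hd
  -- conjugation of a by powers of b
  have hconj : ∀ n : ℕ, (b ^ n)⁻¹ * a * b ^ n = a ^ (r ^ n) := by
    intro n
    induction n with
    | zero => simp
    | succ n ih =>
      have h1 : (b ^ (n+1))⁻¹ * a * b ^ (n+1) = b⁻¹ * ((b ^ n)⁻¹ * a * b ^ n) * b := by
        rw [pow_succ]; group
      have h2 : b⁻¹ * a ^ (r ^ n) * b = (b⁻¹ * a * b) ^ (r ^ n) := by
        simpa using (conj_pow (a := b⁻¹) (b := a) (i := r ^ n)).symm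
      rw [h1, ih, h2, hcon, ← pow_mul, pow_succ, mul_comm]
  have hbsa : Commute (b ^ s) a := by rw [hba]; exact (Commute.refl a).pow_left t
  set e := r ^ (s - 1) with he
  have hbab : b * a * b⁻¹ = a ^ e := by
    have h1 : b ^ s = b * b ^ (s - 1) := by
      rw [← pow_succ', Nat.sub_add_cancel hs]
    have h3 : b * a * b⁻¹ = b ^ s * ((b ^ (s-1))⁻¹ * a * b ^ (s-1)) * (b ^ s)⁻¹ := by
      rw [h1]; group
    rw [h3, hconj (s-1), ← he, (hbsa.pow_right e).eq, mul_inv_cancel_right]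
  set N := Subgroup.zpowers (a ^ (r - 1)) with hN
  have haR : a ^ r = a ^ (r - 1) * a := by
    rw [← pow_succ, Nat.sub_add_cancel hr]
  have hconjN_b : b * a ^ (r-1) * b⁻¹ = (a ^ (r-1)) ^ e := by
    have h2 : b * a ^ (r-1) * b⁻¹ = (b * a * b⁻¹) ^ (r-1) := by
      simpa using (conj_pow (a := b) (b := a) (i := r - 1)).symm
    rw [h2, hbab, ← pow_mul, ← pow_mul, mul_comm]
  have hconjN_binv : b⁻¹ * a ^ (r-1) * b = (a ^ (r-1)) ^ r := by
    have h2 : b⁻¹ * a ^ (r-1) * b = (b⁻¹ * a * b) ^ (r-1) := by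
      simpa using (conj_pow (a := b⁻¹) (b := a) (i := r - 1)).symm
    rw [h2, hcon, ← pow_mul, ← pow_mul, mul_comm]
  -- every element of N commutes with a
  have hcommN : ∀ n ∈ N, Commute a n := by
    rintro _ ⟨k, rfl⟩
    exact ((Commute.refl a).pow_right _).zpow_right _
  -- N is normal
  have haNorm : a ∈ Subgroup.normalizer (N : Set G) := by
    rw [Subgroup.mem_normalizer_iff]
    intro h
    constructor
    · intro hh
      have : a * h * a⁻¹ = h := by rw [(hcommN h hh).eq, mul_inv_cancel_right]
      rwa [this]
    · intro hh
      have hc := (hcommN _ hh).eq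
      have h2 : a⁻¹ * (a * h * a⁻¹) * a = a * h * a⁻¹ := by
        rw [mul_assoc, ← hc]; group
      have h3 : h = a * h * a⁻¹ := by rw [← h2]; group
      rw [h3]; exact hh
  have hbNorm : b ∈ Subgroup.normalizer (N : Set G) := by
    rw [Subgroup.mem_normalizer_iff]
    intro h
    constructor
    · intro hh
      obtain ⟨k, hk⟩ := Subgroup.mem_zpowers_iff.mp hh
      rw [← hk]
      have h4 : b * (a ^ (r-1)) ^ k * b⁻¹ = ((a ^ (r-1)) ^ e) ^ k := by
        rw [← hconjN_b]
        exact (conj_zpow (i := k) (a := b) (b := a ^ (r-1))).symm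
      rw [h4, ← zpow_natCast (a ^ (r-1)) e, ← zpow_mul]
      exact Subgroup.zpow_mem _ (Subgroup.mem_zpowers _) _
    · intro hh
      obtain ⟨k, hk⟩ := Subgroup.mem_zpowers_iff.mp hh
      have h5 : h = b⁻¹ * (b * h * b⁻¹) * b := by group
      rw [h5, ← hk]
      have h6 : b⁻¹ * (a ^ (r-1)) ^ k * b = ((a ^ (r-1)) ^ r) ^ k := by
        have hcz := conj_zpow (i := k) (a := b⁻¹) (b := a ^ (r-1))
        rw [inv_inv] at hcz
        rw [← hcz, hconjN_binv]
      rw [h6, ← zpow_natCast (a ^ (r-1)) r, ← zpow_mul]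
      exact Subgroup.zpow_mem _ (Subgroup.mem_zpowers _) _
  have hNnormal : N.Normal := by
    rw [← Subgroup.normalizer_eq_top_iff]
    rw [eq_top_iff, ← hgen]
    apply (Subgroup.closure_le _).mpr
    rintro x (rfl | rfl)
    · exact haNorm
    · exact hbNorm
  haveI := hNnormal
  -- quotient by N is abelian
  set π' := QuotientGroup.mk' N with hπ'
  have hQgen : Subgroup.closure ({π' a, π' b} : Set (G ⧸ N)) = ⊤ := by
    have : ({π' a, π' b} : Set (G ⧸ N)) = π' '' {a, b} := by
      rw [Set.image_pair]
    rw [this, ← MonoidHom.map_closure, hgen, ← MonoidHom.range_eq_map]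
    exact MonoidHom.range_eq_top_of_surjective _ (QuotientGroup.mk'_surjective N)
  have habN : ⁅a, b⁆ ∈ N := by
    have : ⁅a, b⁆ = b * a ^ (r-1) * b⁻¹ := by
      rw [commutatorElement_def]
      have h6 : a * b = b * a ^ r := by
        rw [← hcon]; group
      rw [h6, haR]; group
    rw [this, hconjN_b]
    exact Subgroup.pow_mem _ (Subgroup.mem_zpowers _) _
  have habcomm : π' a * π' b = π' b * π' a := by
    have h0 : π' ⁅a, b⁆ = 1 := (QuotientGroup.eq_one_iff (⁅a, b⁆)).mpr habN
    rw [map_commutatorElement] at h0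
    exact commutatorElement_eq_one_iff_mul_comm.mp h0
  have hcenter : Subgroup.center (G ⧸ N) = ⊤ := by
    rw [eq_top_iff, ← hQgen]
    apply (Subgroup.closure_le _).mpr
    have hsub : ({π' a, π' b} : Set (G ⧸ N)) ⊆ Subgroup.center (G ⧸ N) := by
      rw [← Subgroup.centralizer_eq_top_iff_subset, eq_top_iff, ← hQgen]
      apply (Subgroup.closure_le _).mpr
      rintro x (rfl | rfl) <;>
        · rw [SetLike.mem_coe, Subgroup.mem_centralizer_iff]
          rintro y (rfl | rfl) <;>
            first
              | rfl
              | exact habcomm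
              | exact habcomm.symm
    exact hsub
  have hQcomm : ∀ x y : G ⧸ N, x * y = y * x := by
    intro x y
    have hx := Subgroup.mem_center_iff.mp (hcenter ▸ Subgroup.mem_top x)
    exact (hx y).symm
  -- commutator G = N
  have hcommutator_le : commutator G ≤ N := by
    rw [commutator_def, Subgroup.commutator_le]
    intro g _ h _
    have : π' ⁅g, h⁆ = 1 := by
      rw [map_commutatorElement, commutatorElement_eq_one_iff_mul_comm]
      exact hQcomm _ _
    rwa [← QuotientGroup.ker_mk' N, MonoidHom.mem_ker]
  have hle_commutator : N ≤ commutator G := by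
    apply Subgroup.zpowers_le.mpr
    have : a ^ (r - 1) = ⁅b⁻¹, a⁆ := by
      rw [commutatorElement_def, inv_inv]
      have : b⁻¹ * a * b = a ^ r := hcon
      rw [show b⁻¹ * a * b * a⁻¹ = (b⁻¹ * a * b) * a⁻¹ by group, this, haR,
        mul_inv_cancel_right]
    rw [this, commutator_def]
    exact Subgroup.commutator_mem_commutator (Subgroup.mem_top _) (Subgroup.mem_top _)
  have hNeq : commutator G = N := le_antisymm hcommutator_le hle_commutator
  -- membership criterion: a^k ∈ commutator G ↔ d ∣ k (integer version)
  have hr1 : ((r - 1 : ℕ) : ℤ) = (r : ℤ) - 1 := by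
    omega
  have hL1 : ∀ k : ℤ, a ^ k ∈ commutator G ↔ (d : ℤ) ∣ k := by
    intro k
    rw [hNeq]
    constructor
    · rintro ⟨j, hj⟩
      simp only at hj
      rw [← zpow_natCast a (r-1), ← zpow_mul] at hj
      have : a ^ (k - (r - 1 : ℕ) * j) = 1 := by
        rw [zpow_sub, hj, mul_inv_cancel]
      have hmdvd : (m : ℤ) ∣ k - (r - 1 : ℕ) * j := by
        rw [← horda]
        exact orderOf_dvd_iff_zpow_eq_one.mpr this
      have hdm : (d : ℤ) ∣ (m : ℤ) := Int.natCast_dvd_natCast.mpr (Nat.gcd_dvd_left _ _)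
      have hdr : (d : ℤ) ∣ ((r - 1 : ℕ) : ℤ) := Int.natCast_dvd_natCast.mpr (Nat.gcd_dvd_right _ _)
      have := dvd_add (hdm.trans hmdvd) (hdr.mul_right j)
      simpa using this
    · rintro ⟨q, rfl⟩
      have hadN : a ^ (d : ℤ) ∈ N := by
        have hbe : (d : ℤ) = m * Nat.gcdA m (r - 1) + (r - 1 : ℕ) * Nat.gcdB m (r - 1) :=
          Nat.gcd_eq_gcd_ab m (r - 1)
        rw [hbe, zpow_add, zpow_mul, zpow_mul, zpow_natCast, zpow_natCast, ham, one_zpow,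
          one_mul]
        exact Subgroup.zpow_mem _ (Subgroup.mem_zpowers _) _
      rw [zpow_mul]
      exact Subgroup.zpow_mem _ hadN _
  have hkerm : ∀ g : G, QuotientGroup.mk' (commutator G) g = 1 ↔ g ∈ commutator G := by
    intro g
    exact QuotientGroup.eq_one_iff g
  constructor
  · rintro ⟨hinf, -⟩
    have h1 : QuotientGroup.mk' (commutator G) (a ^ t) ∈
        (Subgroup.zpowers a).map (QuotientGroup.mk' (commutator G)) ⊓
        (Subgroup.zpowers b).map (QuotientGroup.mk' (commutator G)) := by
      constructor
      · exact ⟨a ^ t, Subgroup.pow_mem _ (Subgroup.mem_zpowers a) t, rfl⟩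
      · exact ⟨b ^ s, Subgroup.pow_mem _ (Subgroup.mem_zpowers b) s, by rw [hba]⟩
    rw [hinf, Subgroup.mem_bot] at h1
    have h2 : a ^ t ∈ commutator G := (hkerm _).mp h1
    have h3 : (d : ℤ) ∣ (t : ℤ) := by
      rw [← hL1]
      rwa [zpow_natCast]
    exact_mod_cast h3
  · intro hdt
    constructor
    · rw [eq_bot_iff]
      rintro x ⟨hxA, hxB⟩
      obtain ⟨u, hu, rfl⟩ := hxA
      obtain ⟨w, hw, hwx⟩ := hxB
      obtain ⟨j, rfl⟩ := hw
      -- replace the integer power of b by a natural power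
      have hbord : 0 < orderOf b := orderOf_pos b
      have hjnn : 0 ≤ j % (orderOf b : ℤ) :=
        Int.emod_nonneg _ (by exact_mod_cast hbord.ne')
      set j' : ℕ := (j % (orderOf b : ℤ)).toNat with hj'
      have hbj : b ^ j = b ^ (j' : ℕ) := by
        rw [← zpow_mod_orderOf b j, hj', ← zpow_natCast, Int.toNat_of_nonneg hjnn]
      simp only at hwx
      rw [hbj] at hwx
      -- b ^ j' * u⁻¹ ∈ commutator G
      have hker : b ^ j' * u⁻¹ ∈ commutator G := by
        rw [← (hkerm _)]
        rw [map_mul, map_inv, hwx, mul_inv_cancel]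
      have hcommA : commutator G ≤ Subgroup.zpowers a := by
        rw [hNeq]
        exact Subgroup.zpowers_le.mpr (Subgroup.pow_mem _ (Subgroup.mem_zpowers a) _)
      have hbj'A : b ^ j' ∈ Subgroup.zpowers a := by
        have h7 : b ^ j' * u⁻¹ ∈ Subgroup.zpowers a := hcommA hker
        have := Subgroup.mul_mem _ h7 hu
        simpa using this
      obtain ⟨q, hq⟩ := (hordb j').mp hbj'A
      have h8 : b ^ j' = a ^ (t * q) := by
        rw [hq, pow_mul, hba, ← pow_mul]
      have h9 : a ^ (t * q) ∈ commutator G := by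
        have : (d : ℤ) ∣ ((t * q : ℕ) : ℤ) :=
          Int.natCast_dvd_natCast.mpr (Dvd.dvd.mul_right hdt q)
        have := (hL1 _).mpr this
        rwa [zpow_natCast] at this
      rw [← hwx, Subgroup.mem_bot, hkerm, h8]
      exact h9
    · have hsup : Subgroup.zpowers a ⊔ Subgroup.zpowers b = ⊤ := by
        rw [Subgroup.zpowers_eq_closure, Subgroup.zpowers_eq_closure, ← Subgroup.closure_union,
          Set.singleton_union]
        exact hgen
      rw [← Subgroup.map_sup, hsup]
      exact Subgroup.map_top_of_surjective _ (QuotientGroup.mk'_surjective _)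
end

section
/- The subgroup ⟨a⟩ is regular: the commutator subgroup [⟨a⟩, N_G(⟨a⟩)] equals ⟨a⟩ ∩ G' (indeed N_G(⟨a⟩) = G, G' ⊆ ⟨a⟩, and [⟨a⟩, G] = G'). -/
open scoped commutatorElement

private lemma aux_comm_le {G : Type*} [Group G] (a b : G)
    (hgen : Subgroup.closure ({a, b} : Set G) = ⊤)
    (N : Subgroup G) [hN : N.Normal] (h : ⁅a, b⁆ ∈ N) : commutator G ≤ N := by
  set π := QuotientGroup.mk' N with hπ
  have hsurj : Function.Surjective π := QuotientGroup.mk'_surjective N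
  have hab : Commute (π a) (π b) := by
    rw [← commutatorElement_eq_one_iff_commute, ← map_commutatorElement]
    exact (QuotientGroup.eq_one_iff _).mpr h
  have hcl : Subgroup.closure ({π a, π b} : Set (G ⧸ N)) = ⊤ := by
    rw [← Set.image_pair, ← MonoidHom.map_closure, hgen]
    exact Subgroup.map_top_of_surjective π hsurj
  have hgencomm : ∀ g ∈ ({π a, π b} : Set (G ⧸ N)), ∀ x : G ⧸ N, Commute g x := by
    intro g hg x
    have hx : x ∈ Subgroup.closure ({π a, π b} : Set (G ⧸ N)) := hcl ▸ Subgroup.mem_top x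
    induction hx using Subgroup.closure_induction with
    | mem y hy =>
      rcases hg with hg | hg <;> rcases hy with hy | hy <;> subst hg <;> subst hy
      · exact Commute.refl _
      · exact hab
      · exact hab.symm
      · exact Commute.refl _
    | one => exact Commute.one_right g
    | mul x y _ _ hx hy => exact hx.mul_right hy
    | inv x _ hx => exact hx.inv_right
  have hcent : ∀ x y : G ⧸ N, Commute x y := by
    have hle : Subgroup.closure ({π a, π b} : Set (G ⧸ N)) ≤ Subgroup.center (G ⧸ N) := by
      rw [Subgroup.closure_le]
      intro g hg
      exact Subgroup.mem_center_iff.mpr fun x => (hgencomm g hg x).symm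
    intro x y
    have hx : x ∈ Subgroup.center (G ⧸ N) := hle (hcl ▸ Subgroup.mem_top x)
    exact (Subgroup.mem_center_iff.mp hx y).symm
  rw [commutator_def, Subgroup.commutator_le]
  intro g _ h' _
  apply (QuotientGroup.eq_one_iff _).mp
  show π ⁅g, h'⁆ = 1
  rw [map_commutatorElement, commutatorElement_eq_one_iff_commute]
  exact hcent _ _

/-- In the metacyclic group `G = ⟨a, b | a^m = 1, b^s = a^t, b⁻¹ab = a^r⟩`
the subgroup `⟨a⟩` is regular: `[⟨a⟩, N_G(⟨a⟩)] = ⟨a⟩ ∩ G'`; indeed `N_G(⟨a⟩) = G`,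
`G' ⊆ ⟨a⟩` and `[⟨a⟩, G] = G'`. -/
theorem zpowers_a_regular {G : Type*} [Group G] [Fintype G]
    (m s t r : ℕ) (hm : 0 < m) (hs : 0 < s) (ht : 0 < t) (hr : 0 < r)
    (hrsm : r ^ s ≡ 1 [MOD m]) (hmt : m ∣ t * (r - 1))
    (a b : G) (hgen : Subgroup.closure ({a, b} : Set G) = ⊤)
    (ham : a ^ m = 1) (hba : b ^ s = a ^ t) (hcon : b⁻¹ * a * b = a ^ r)
    (horda : orderOf a = m)
    (hordb : ∀ j : ℕ, b ^ j ∈ Subgroup.zpowers a ↔ s ∣ j) :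
    ⁅Subgroup.zpowers a, Subgroup.normalizer (Subgroup.zpowers a : Set G)⁆ =
        Subgroup.zpowers a ⊓ commutator G ∧
      Subgroup.normalizer (Subgroup.zpowers a : Set G) = ⊤ ∧
      commutator G ≤ Subgroup.zpowers a ∧
      ⁅Subgroup.zpowers a, (⊤ : Subgroup G)⁆ = commutator G := by
  set A := Subgroup.zpowers a with hA
  -- b⁻¹ normalizes A
  have hbinv : b⁻¹ ∈ Subgroup.normalizer (A : Set G) := by
    apply Subgroup.mem_normalizer_fintype
    rintro n hn
    rcases hn with ⟨k, rfl⟩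
    have : b⁻¹ * a ^ k * b⁻¹⁻¹ = (b⁻¹ * a * b⁻¹⁻¹) ^ k := (conj_zpow).symm
    rw [this, inv_inv, hcon]
    exact A.zpow_mem (A.pow_mem (Subgroup.mem_zpowers a) r) k
  -- normalizer = ⊤
  have hnorm : Subgroup.normalizer (A : Set G) = ⊤ := by
    rw [eq_top_iff, ← hgen, Subgroup.closure_le]
    rintro x (rfl | rfl)
    · exact Subgroup.le_normalizer (Subgroup.mem_zpowers _)
    · exact (Subgroup.inv_mem_iff _).mp hbinv
  have hANormal : A.Normal := Subgroup.normalizer_eq_top_iff.mp hnorm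
  haveI := hANormal
  -- ⁅a, b⁆ ∈ A
  have habA : ⁅a, b⁆ ∈ A := by
    rw [commutatorElement_def]
    have h1 : b * a⁻¹ * b⁻¹ ∈ A := hANormal.conj_mem a⁻¹ (A.inv_mem (Subgroup.mem_zpowers a)) b
    have : a * b * a⁻¹ * b⁻¹ = a * (b * a⁻¹ * b⁻¹) := by group
    rw [this]
    exact A.mul_mem (Subgroup.mem_zpowers a) h1
  -- commutator G ≤ A
  have hGA : commutator G ≤ A := aux_comm_le a b hgen A habA
  -- ⁅A, ⊤⁆ = commutator G
  have htop : ⁅A, (⊤ : Subgroup G)⁆ = commutator G := by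
    apply le_antisymm
    · rw [commutator_def]
      exact Subgroup.commutator_mono le_top le_top
    · exact aux_comm_le a b hgen _
        (Subgroup.commutator_mem_commutator (Subgroup.mem_zpowers a) (Subgroup.mem_top b))
  refine ⟨?_, hnorm, hGA, htop⟩
  rw [hnorm, htop, inf_of_le_right hGA]
end

section
/- If gcd(m, r−1) divides t, then there exists an integer z such that a^z normalizes the subgroup ⟨b⟩ and (a^z)⁻¹·b·a^z = b^{s+1}; in particular b^s ∈ [⟨b⟩, N_G(⟨b⟩)]. -/
/-- In the metacyclic group `G = ⟨a, b | a^m = 1, b^s = a^t, b⁻¹ab = a^r⟩`,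
if `gcd m (r−1) ∣ t` then there is an integer `z` such that `a^z` normalizes `⟨b⟩` and
`(a^z)⁻¹ · b · a^z = b^{s+1}`; in particular `b^s ∈ [⟨b⟩, N_G(⟨b⟩)]`. -/
theorem exists_normalizing_power {G : Type*} [Group G] [Fintype G]
    (m s t r : ℕ) (hm : 0 < m) (hs : 0 < s) (ht : 0 < t) (hr : 0 < r)
    (hrsm : r ^ s ≡ 1 [MOD m]) (hmt : m ∣ t * (r - 1))
    (a b : G) (hgen : Subgroup.closure ({a, b} : Set G) = ⊤)
    (ham : a ^ m = 1) (hba : b ^ s = a ^ t) (hcon : b⁻¹ * a * b = a ^ r)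
    (horda : orderOf a = m)
    (hordb : ∀ j : ℕ, b ^ j ∈ Subgroup.zpowers a ↔ s ∣ j)
    (hdvd : Nat.gcd m (r - 1) ∣ t) :
    (∃ z : ℤ, a ^ z ∈ Subgroup.normalizer (Subgroup.zpowers b : Set G) ∧
        (a ^ z)⁻¹ * b * a ^ z = b ^ (s + 1)) ∧
      b ^ s ∈ ⁅Subgroup.zpowers b, Subgroup.normalizer (Subgroup.zpowers b : Set G)⁆ := by
  have hr1 : 1 ≤ r := hr
  have hcast : ((r - 1 : ℕ) : ℤ) = (r : ℤ) - 1 := by omega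
  obtain ⟨k, hk⟩ := hdvd
  set A := Nat.gcdA m (r - 1) with hA
  set B := Nat.gcdB m (r - 1) with hB
  have hbez : (Nat.gcd m (r - 1) : ℤ) = m * A + ((r : ℤ) - 1) * B := by
    rw [Nat.gcd_eq_gcd_ab, hcast]
  set z : ℤ := -(k * B) with hz
  have hk' : (t : ℤ) = (Nat.gcd m (r - 1) : ℤ) * k := by exact_mod_cast hk
  have hdiv : (m : ℤ) ∣ z * (1 - r) - t := by
    refine ⟨-(k * A), ?_⟩
    rw [hz]
    linear_combination (-(k : ℤ)) * hbez - hk'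
  have hone : ∀ n : ℤ, (m : ℤ) ∣ n → a ^ n = 1 := by
    rintro n ⟨c, hc⟩
    rw [hc, zpow_mul, zpow_natCast, ham, one_zpow]
  have hat : a ^ (z * (1 - (r : ℤ))) = a ^ (t : ℤ) := by
    have h0 : z * (1 - (r : ℤ)) = (z * (1 - (r : ℤ)) - t) + t := by ring
    rw [h0, zpow_add, hone _ hdiv, one_mul]
  have cz : ∀ (x y : G) (n : ℤ), x⁻¹ * y ^ n * x = (x⁻¹ * y * x) ^ n := by
    intro x y n
    simpa using (conj_zpow (i := n) (a := x⁻¹) (b := y)).symm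
  have hconj : ∀ n : ℤ, b⁻¹ * a ^ n * b = a ^ ((r : ℤ) * n) := by
    intro n
    rw [cz b a n, hcon, ← zpow_natCast a r, ← zpow_mul]
  have key1 : (a ^ z)⁻¹ * b * a ^ z = b ^ (s + 1) := by
    have h2 : (a ^ z)⁻¹ * b * a ^ z = b * ((b⁻¹ * a ^ (-z) * b) * a ^ z) := by
      group
    have h4 : a ^ ((r : ℤ) * -z) * a ^ z = a ^ (t : ℤ) := by
      rw [← zpow_add, show (r : ℤ) * -z + z = z * (1 - (r : ℤ)) by ring]
      exact hat
    rw [h2, hconj, h4, zpow_natCast, ← hba, ← pow_succ']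
  have key2 : a ^ z * b * (a ^ z)⁻¹ = b * (b ^ s)⁻¹ := by
    have h2 : a ^ z * b * (a ^ z)⁻¹ = b * ((b⁻¹ * a ^ z * b) * (a ^ z)⁻¹) := by
      group
    have h4 : a ^ ((r : ℤ) * z) * (a ^ z)⁻¹ = (a ^ (t : ℤ))⁻¹ := by
      rw [← zpow_neg a z, ← zpow_add, ← hat, ← zpow_neg]
      congr 1; ring
    rw [h2, hconj, h4, zpow_natCast, ← hba]
  have key2' : a ^ z * b * (a ^ z)⁻¹ = b ^ ((1 : ℤ) - s) := by
    rw [key2, zpow_sub, zpow_one, zpow_natCast]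
  have hnorm : a ^ z ∈ Subgroup.normalizer (Subgroup.zpowers b : Set G) := by
    rw [Subgroup.mem_normalizer_iff]
    intro h
    rw [Subgroup.mem_zpowers_iff, Subgroup.mem_zpowers_iff]
    constructor
    · rintro ⟨n, rfl⟩
      refine ⟨((1 : ℤ) - s) * n, ?_⟩
      rw [zpow_mul, ← key2', conj_zpow]
    · rintro ⟨n, hn⟩
      have h5 : h = (a ^ z)⁻¹ * b ^ n * a ^ z := by
        rw [hn]; group
      refine ⟨((s : ℤ) + 1) * n, ?_⟩
      have h6 : (a ^ z)⁻¹ * b ^ n * a ^ z = ((a ^ z)⁻¹ * b * a ^ z) ^ n :=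
        cz (a ^ z) b n
      rw [zpow_mul, h5, h6, key1]
      norm_cast
  refine ⟨⟨z, hnorm, key1⟩, ?_⟩
  open scoped commutatorElement in
  have hcomm : b ^ s = ⁅b⁻¹, (a ^ z)⁻¹⁆ := by
    rw [commutatorElement_def, inv_inv, inv_inv,
      show b⁻¹ * (a ^ z)⁻¹ * b * a ^ z = b⁻¹ * ((a ^ z)⁻¹ * b * a ^ z) by group,
      key1, pow_succ', ← mul_assoc, inv_mul_cancel, one_mul]
  rw [hcomm]
  exact Subgroup.commutator_mem_commutator (Subgroup.inv_mem _ (Subgroup.mem_zpowers b))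
    (Subgroup.inv_mem _ hnorm)
end

section
/- If gcd(m, r−1) divides t, then the subgroup ⟨b⟩ is regular: the commutator subgroup [⟨b⟩, N_G(⟨b⟩)] equals ⟨b⟩ ∩ G'. -/
open scoped commutatorElement


/-- In the metacyclic group `G = ⟨a, b | a^m = 1, b^s = a^t, b⁻¹ab = a^r⟩`,
if `gcd m (r−1) ∣ t` then the subgroup `⟨b⟩` is regular: `[⟨b⟩, N_G(⟨b⟩)] = ⟨b⟩ ∩ G'`. -/
theorem zpowers_b_regular {G : Type*} [Group G] [Fintype G]
    (m s t r : ℕ) (hm : 0 < m) (hs : 0 < s) (ht : 0 < t) (hr : 0 < r)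
    (hrsm : r ^ s ≡ 1 [MOD m]) (hmt : m ∣ t * (r - 1))
    (a b : G) (hgen : Subgroup.closure ({a, b} : Set G) = ⊤)
    (ham : a ^ m = 1) (hba : b ^ s = a ^ t) (hcon : b⁻¹ * a * b = a ^ r)
    (horda : orderOf a = m)
    (hordb : ∀ j : ℕ, b ^ j ∈ Subgroup.zpowers a ↔ s ∣ j)
    (hdvd : Nat.gcd m (r - 1) ∣ t) :
    ⁅Subgroup.zpowers b, Subgroup.normalizer (Subgroup.zpowers b : Set G)⁆ =
      Subgroup.zpowers b ⊓ commutator G := by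
  classical
  -- general conjugation lemma
  have conj_zpow_eq : ∀ (x y : G) (k : ℤ), x * y ^ k * x⁻¹ = (x * y * x⁻¹) ^ k := by
    intro x y k
    have := map_zpow (MulAut.conj x) y k
    simpa [MulAut.conj_apply] using this
  have hamz : a ^ (m : ℤ) = 1 := by rw [zpow_natCast]; exact ham
  have hconjz : ∀ w : ℤ, b⁻¹ * a ^ w * b = a ^ ((r : ℤ) * w) := by
    intro w
    have h := conj_zpow_eq b⁻¹ a w
    rw [inv_inv] at h
    rw [h, hcon, ← zpow_natCast a r, ← zpow_mul]
  have hconjn : ∀ n : ℕ, b⁻¹ * a ^ n * b = a ^ (r * n) := by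
    intro n
    have h := hconjz (n : ℤ)
    rw [zpow_natCast] at h
    rw [show ((r : ℤ) * (n : ℤ)) = ((r * n : ℕ) : ℤ) by push_cast; ring, zpow_natCast] at h
    exact h
  -- Bezout data
  set g := Nat.gcd m t with hgdef
  set d := Nat.gcd m (r - 1) with hddef
  have hdg : d ∣ g := Nat.dvd_gcd (Nat.gcd_dvd_left m (r-1)) hdvd
  set e := g / d with hedef
  have hde : d * e = g := Nat.mul_div_cancel' hdg
  set A : ℤ := Nat.gcdA m (r - 1) with hAdef
  set Bz : ℤ := Nat.gcdB m (r - 1) with hBdef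
  have hBez : (d : ℤ) = m * A + ((r - 1 : ℕ) : ℤ) * Bz := Nat.gcd_eq_gcd_ab m (r - 1)
  have hc : ((r - 1 : ℕ) : ℤ) = (r : ℤ) - 1 := by omega
  set w : ℤ := Bz * (e : ℤ) with hwdef
  have key : (r : ℤ) * w - w = (g : ℤ) - (m : ℤ) * (A * e) := by
    have h2 : ((r - 1 : ℕ) : ℤ) * Bz = (d : ℤ) - m * A := by linarith [hBez]
    have h3 : (d : ℤ) * e = (g : ℤ) := by exact_mod_cast hde
    calc (r : ℤ) * w - w = (((r - 1 : ℕ) : ℤ) * Bz) * e := by rw [hwdef, hc]; ring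
      _ = ((d : ℤ) - m * A) * e := by rw [h2]
      _ = (d : ℤ) * e - m * (A * e) := by ring
      _ = (g : ℤ) - m * (A * e) := by rw [h3]
  have hcw : a ^ ((r : ℤ) * w - w) = a ^ (g : ℤ) := by
    rw [key, zpow_sub, zpow_mul, hamz, one_zpow]
    group
  -- a^g is a power of b
  set α : ℤ := Nat.gcdA m t with hαdef
  set β : ℤ := Nat.gcdB m t with hβdef
  have hBez2 : (g : ℤ) = m * α + t * β := Nat.gcd_eq_gcd_ab m t
  have hgb : a ^ (g : ℤ) = b ^ ((s : ℤ) * β) := by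
    rw [hBez2, zpow_add, zpow_mul, zpow_mul, hamz, one_zpow, one_mul,
      zpow_natCast a t, ← hba, ← zpow_natCast b s, ← zpow_mul]
  -- conjugation of b by a^w
  have hconjb : a ^ w * b * (a ^ w)⁻¹ = b * a ^ ((r : ℤ) * w - w) := by
    calc a ^ w * b * (a ^ w)⁻¹ = b * (b⁻¹ * a ^ w * b) * (a ^ w)⁻¹ := by group
      _ = b * a ^ ((r : ℤ) * w) * (a ^ w)⁻¹ := by rw [hconjz w]
      _ = b * (a ^ ((r : ℤ) * w) * (a ^ w)⁻¹) := by rw [mul_assoc]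
      _ = b * a ^ ((r : ℤ) * w - w) := by rw [show a ^ ((r:ℤ)*w) * (a ^ w)⁻¹ = a ^ ((r:ℤ)*w - w) from (zpow_sub a _ _).symm]
  have hmemB : a ^ w * b * (a ^ w)⁻¹ ∈ Subgroup.zpowers b := by
    rw [hconjb, hcw, hgb]
    exact mul_mem (Subgroup.mem_zpowers b) (zpow_mem (Subgroup.mem_zpowers b) _)
  -- a^w normalizes ⟨b⟩
  have hNw : a ^ w ∈ Subgroup.normalizer (Subgroup.zpowers b : Set G) := by
    have hsetn : a ^ w ∈ Subgroup.normalizer ((Subgroup.zpowers b : Subgroup G) : Set G) := by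
      apply Subgroup.mem_normalizer_fintype
      intro n hn
      rw [SetLike.mem_coe, Subgroup.mem_zpowers_iff] at hn
      obtain ⟨k, hk⟩ := hn
      rw [← hk, SetLike.mem_coe, conj_zpow_eq]
      exact zpow_mem hmemB k
    rw [Subgroup.mem_normalizer_iff]
    intro h
    exact hsetn h
  -- a^g lies in the commutator [⟨b⟩, N]
  have hcalc : ⁅b⁻¹, a ^ w⁆ = a ^ (g : ℤ) := by
    rw [commutatorElement_def, inv_inv, hconjz w, ← hcw, zpow_sub]
  have hgmem : a ^ (g : ℤ) ∈ ⁅Subgroup.zpowers b, Subgroup.normalizer (Subgroup.zpowers b : Set G)⁆ := by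
    rw [← hcalc]
    exact Subgroup.commutator_mem_commutator (inv_mem (Subgroup.mem_zpowers b)) hNw
  have hgmemn : a ^ g ∈ ⁅Subgroup.zpowers b, Subgroup.normalizer (Subgroup.zpowers b : Set G)⁆ := by
    rw [← zpow_natCast a g]; exact hgmem
  -- ⟨a⟩ is normal
  have hbab : b * a * b⁻¹ = a ^ (r ^ (s - 1)) := by
    have has : a ^ (r ^ s) = a := by
      have h1 : a ^ (r ^ s) = a ^ 1 := by
        rw [pow_eq_pow_iff_modEq, horda]
        exact hrsm
      rw [h1, pow_one]
    have h1 : b⁻¹ * a ^ (r ^ (s - 1)) * b = a := by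
      rw [hconjn (r ^ (s - 1)), ← pow_succ', show s - 1 + 1 = s by omega, has]
    calc b * a * b⁻¹ = b * (b⁻¹ * a ^ (r ^ (s - 1)) * b) * b⁻¹ := by rw [h1]
      _ = a ^ (r ^ (s - 1)) := by group
  have hAnormal : (Subgroup.zpowers a).Normal := by
    rw [← Subgroup.normalizer_eq_top_iff, eq_top_iff, ← hgen, Subgroup.closure_le]
    intro x hx
    simp only [Set.mem_insert_iff, Set.mem_singleton_iff] at hx
    rcases hx with rfl | rfl
    · exact Subgroup.le_normalizer (Subgroup.mem_zpowers x)
    · have hsetn : x ∈ Subgroup.normalizer ((Subgroup.zpowers a : Subgroup G) : Set G) := by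
        apply Subgroup.mem_normalizer_fintype
        intro n hn
        rw [SetLike.mem_coe, Subgroup.mem_zpowers_iff] at hn
        obtain ⟨k, hk⟩ := hn
        rw [← hk, SetLike.mem_coe, conj_zpow_eq, hbab]
        exact zpow_mem (pow_mem (Subgroup.mem_zpowers a) _) k
      rw [SetLike.mem_coe, Subgroup.mem_normalizer_iff]
      intro h
      exact hsetn h
  haveI := hAnormal
  -- the quotient by ⟨a⟩ is cyclic, generated by the image of b
  set π := QuotientGroup.mk' (Subgroup.zpowers a) with hπdef
  have hπa : π a = 1 := by
    simp only [hπdef, QuotientGroup.mk'_apply]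
    exact (QuotientGroup.eq_one_iff a).mpr (Subgroup.mem_zpowers a)
  have hπtop : Subgroup.zpowers (π b) = ⊤ := by
    rw [show Subgroup.zpowers (π b) = Subgroup.closure {π b} from Subgroup.zpowers_eq_closure (π b)]
    have h1 : Subgroup.map π ⊤ = ⊤ :=
      Subgroup.map_top_of_surjective π (QuotientGroup.mk'_surjective _)
    rw [← hgen, MonoidHom.map_closure, Set.image_pair, hπa] at h1
    have h2 : Subgroup.closure {π b} = Subgroup.closure ({1, π b} : Set (G ⧸ Subgroup.zpowers a)) := by
      apply le_antisymm
      · exact Subgroup.closure_mono (by simp)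
      · rw [Subgroup.closure_le]
        intro x hx
        simp only [Set.mem_insert_iff, Set.mem_singleton_iff] at hx
        rcases hx with rfl | rfl
        · exact one_mem _
        · exact Subgroup.subset_closure rfl
    exact h2.trans h1
  have hcommle : commutator G ≤ Subgroup.zpowers a := by
    rw [commutator_def, Subgroup.commutator_le]
    intro g1 _ g2 _
    have m1 : π g1 ∈ Subgroup.zpowers (π b) := hπtop ▸ Subgroup.mem_top _
    have m2 : π g2 ∈ Subgroup.zpowers (π b) := hπtop ▸ Subgroup.mem_top _
    obtain ⟨k1, hk1⟩ := Subgroup.mem_zpowers_iff.mp m1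
    obtain ⟨k2, hk2⟩ := Subgroup.mem_zpowers_iff.mp m2
    have h1 : π ⁅g1, g2⁆ = 1 := by
      rw [map_commutatorElement, commutatorElement_eq_one_iff_commute, ← hk1, ← hk2]
      exact (Commute.refl (π b)).zpow_zpow k1 k2
    rw [hπdef, QuotientGroup.mk'_apply] at h1
    exact (QuotientGroup.eq_one_iff _).mp h1
  -- main proof
  apply le_antisymm
  · apply le_inf
    · rw [Subgroup.commutator_le]
      intro x hx y hy
      have h2 : y * x⁻¹ * y⁻¹ ∈ Subgroup.zpowers b :=
        (Subgroup.mem_normalizer_iff.mp hy x⁻¹).mp (inv_mem hx)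
      have h3 : ⁅x, y⁆ = x * (y * x⁻¹ * y⁻¹) := by group
      rw [h3]
      exact mul_mem hx h2
    · rw [commutator_def]
      exact Subgroup.commutator_mono le_top le_top
  · intro x hx
    rw [Subgroup.mem_inf] at hx
    obtain ⟨hxb, hxc⟩ := hx
    have hxa : x ∈ Subgroup.zpowers a := hcommle hxc
    obtain ⟨j, hj⟩ := Subgroup.mem_zpowers_iff.mp hxb
    have hob : 0 < orderOf b := orderOf_pos b
    set n : ℕ := (j % (orderOf b : ℤ)).toNat with hn
    have h0 : ((n : ℤ)) = j % (orderOf b : ℤ) :=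
      Int.toNat_of_nonneg (Int.emod_nonneg j (by exact_mod_cast hob.ne'))
    have hjn : b ^ j = b ^ n := by
      calc b ^ j = b ^ (j % (orderOf b : ℤ)) := (zpow_mod_orderOf b j).symm
        _ = b ^ ((n : ℤ)) := by rw [h0]
        _ = b ^ n := zpow_natCast b n
    have hbn : b ^ n ∈ Subgroup.zpowers a := by rw [← hjn, hj]; exact hxa
    obtain ⟨k, hk⟩ := (hordb n).mp hbn
    obtain ⟨t', ht'⟩ := Nat.gcd_dvd_right m t
    have hx' : ((a ^ g) ^ t') ^ k = x := by
      calc ((a ^ g) ^ t') ^ k = (a ^ (g * t')) ^ k := by rw [pow_mul]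
        _ = (a ^ t) ^ k := by rw [← ht']
        _ = (b ^ s) ^ k := by rw [hba]
        _ = b ^ (s * k) := by rw [pow_mul]
        _ = b ^ n := by rw [← hk]
        _ = b ^ j := hjn.symm
        _ = x := hj
    rw [← hx']
    exact pow_mem (pow_mem hgmemn t') k
end

section
/- Let G be a finite group with subgroups N, H, V, U satisfying: N is normal in G, N ∩ H = 1, NH = G; V is normal in G, V ∩ U = 1, VU = N and U ≤ N; U is contained in the centralizer of H in G; and G' ∩ N = V. Then the abelianization G/G' is isomorphic to the direct product U × (H/H'). -/
open scoped Pointwise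

/-- Let `G` be a finite group with subgroups `N, H, V, U` such that
`G = N ⋊ H` (internally), `N = V ⋊ U` with `V` normal in `G` and `U ≤ N`, `U` centralizes
`H`, and `G' ∩ N = V`. Then the abelianization `G/G'` is isomorphic to `U × (H/H')`. -/
theorem abelianization_iso_of_hall_decomposition {G : Type*} [Group G] [Fintype G]
    (N H V U : Subgroup G)
    (hNn : N.Normal) (hNH : N ⊓ H = ⊥) (hNHtop : (N : Set G) * (H : Set G) = Set.univ)
    (hVn : V.Normal) (hVU : V ⊓ U = ⊥) (hUN : U ≤ N)
    (hVUN : (V : Set G) * (U : Set G) = (N : Set G))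
    (hUC : U ≤ Subgroup.centralizer (H : Set G))
    (hGN : commutator G ⊓ N = V) :
    Nonempty ((G ⧸ commutator G) ≃* (U × (H ⧸ commutator H))) := by
  letI : CommGroup (G ⧸ commutator G) := inferInstanceAs (CommGroup (Abelianization G))
  -- elements of the commutator of H lie in the commutator of G
  have hsubH : ∀ x : H, x ∈ commutator H → (x : G) ∈ commutator G := by
    intro x hx
    have hmem : (x : G) ∈ Subgroup.map H.subtype (commutator H) :=
      Subgroup.mem_map_of_mem _ hx
    have hle : Subgroup.map H.subtype (commutator H) ≤ commutator G := by
      rw [commutator_def, Subgroup.map_commutator, commutator_def]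
      exact Subgroup.commutator_mono le_top le_top
    exact hle hmem
  have hVle : V ≤ commutator G := by
    rw [← hGN]; exact inf_le_left
  set q : G →* G ⧸ commutator G := QuotientGroup.mk' (commutator G) with hq
  have hker : ∀ x : H, x ∈ commutator H → (q.comp H.subtype) x = 1 := by
    intro x hx
    simpa [q, QuotientGroup.eq_one_iff] using hsubH x hx
  set fU : U →* G ⧸ commutator G := q.comp U.subtype with hfU
  set fH : H ⧸ commutator H →* G ⧸ commutator G :=
    QuotientGroup.lift (commutator H) (q.comp H.subtype) hker with hfH
  set f : U × (H ⧸ commutator H) →* G ⧸ commutator G := fU.coprod fH with hf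
  -- the projection mod N, restricted to H, is bijective in the relevant sense
  set π : G →* G ⧸ N := QuotientGroup.mk' N with hπ
  set πH : H →* G ⧸ N := π.comp H.subtype with hπH
  have hπH_surj : Function.Surjective πH := by
    intro x
    induction x using QuotientGroup.induction_on with
    | H g =>
      have hg : g ∈ (N : Set G) * (H : Set G) := by rw [hNHtop]; trivial
      obtain ⟨n, hn, h, hh, rfl⟩ := hg
      refine ⟨⟨h, hh⟩, ?_⟩
      show QuotientGroup.mk h = QuotientGroup.mk (n * h)
      rw [QuotientGroup.eq]
      have : h⁻¹ * n * h ∈ N := hNn.conj_mem' n hn h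
      simpa [mul_assoc] using this
  have hcomm_map : Subgroup.map πH (commutator H) = commutator (G ⧸ N) := by
    rw [commutator_def, Subgroup.map_commutator, commutator_def,
      Subgroup.map_top_of_surjective _ hπH_surj]
  have hcomm_mapG : Subgroup.map π (commutator G) = commutator (G ⧸ N) := by
    rw [commutator_def, Subgroup.map_commutator, commutator_def,
      Subgroup.map_top_of_surjective _ (QuotientGroup.mk'_surjective N)]
  -- injectivity
  have hinj : Function.Injective f := by
    rw [injective_iff_map_eq_one]
    rintro ⟨u, y⟩ h1
    induction y using QuotientGroup.induction_on with
    | H h =>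
      have h1' : q ((u : G) * (h : G)) = 1 := by
        rw [map_mul]
        exact h1
      have hUHcomm : (u : G) * (h : G) ∈ commutator G :=
        (QuotientGroup.eq_one_iff _).mp h1'
      -- project mod N
      have hπuh : π ((u : G) * (h : G)) ∈ commutator (G ⧸ N) := by
        rw [← hcomm_mapG]
        exact Subgroup.mem_map_of_mem _ hUHcomm
      have hπu : π (u : G) = 1 := by
        rw [hπ]
        simpa [QuotientGroup.eq_one_iff] using hUN u.2
      have hπh : πH h ∈ commutator (G ⧸ N) := by
        have : π ((u : G) * (h : G)) = πH h := by
          simp [hπH, map_mul, hπu]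
        rwa [this] at hπuh
      rw [← hcomm_map] at hπh
      obtain ⟨h', hh', heq⟩ := hπh
      have hπH_inj : Function.Injective πH := by
        rw [injective_iff_map_eq_one]
        intro x hx
        have hxN : (x : G) ∈ N := by
          rwa [hπH, hπ, MonoidHom.comp_apply, QuotientGroup.mk'_apply,
            QuotientGroup.eq_one_iff] at hx
        have : (x : G) ∈ N ⊓ H := ⟨hxN, x.2⟩
        rw [hNH] at this
        exact Subtype.ext this
      have hh'eq : h' = h := hπH_inj heq
      subst hh'eq
      -- now h ∈ commutator H
      have hhG : (h' : G) ∈ commutator G := hsubH h' hh'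
      have hqh : q (h' : G) = 1 := by
        rw [hq]; simpa [QuotientGroup.eq_one_iff] using hhG
      have hqu : q (u : G) = 1 := by
        have := h1'
        rw [map_mul, hqh, mul_one] at this
        exact this
      have huComm : (u : G) ∈ commutator G := by
        rwa [hq, QuotientGroup.mk'_apply, QuotientGroup.eq_one_iff] at hqu
      have huV : (u : G) ∈ V := by
        rw [← hGN]; exact ⟨huComm, hUN u.2⟩
      have huBot : (u : G) ∈ V ⊓ U := ⟨huV, u.2⟩
      rw [hVU] at huBot
      have hu1 : u = 1 := Subtype.ext huBot
      have hy1 : (QuotientGroup.mk h' : H ⧸ commutator H) = 1 :=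
        (QuotientGroup.eq_one_iff _).mpr hh'
      rw [hu1, hy1]; rfl
  -- surjectivity
  have hsurj : Function.Surjective f := by
    intro x
    induction x using QuotientGroup.induction_on with
    | H g =>
      have hg : g ∈ (N : Set G) * (H : Set G) := by rw [hNHtop]; trivial
      obtain ⟨n, hn, h, hh, rfl⟩ := hg
      have hn' : n ∈ (V : Set G) * (U : Set G) := by rw [hVUN]; exact hn
      obtain ⟨v, hv, u, hu, rfl⟩ := hn'
      refine ⟨(⟨u, hu⟩, QuotientGroup.mk ⟨h, hh⟩), ?_⟩
      have hqv : q v = 1 := by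
        rw [hq]; simpa [QuotientGroup.eq_one_iff] using hVle hv
      show fU ⟨u, hu⟩ * fH (QuotientGroup.mk ⟨h, hh⟩) = QuotientGroup.mk (v * u * h)
      have : fU ⟨u, hu⟩ * fH (QuotientGroup.mk ⟨h, hh⟩) = q u * q h := by
        simp [hfU, hfH]; rfl
      rw [this]
      have : (QuotientGroup.mk (v * u * h) : G ⧸ commutator G) = q (v * u * h) := rfl
      rw [this, map_mul, map_mul, hqv, one_mul]
  exact ⟨(MulEquiv.ofBijective f ⟨hinj, hsurj⟩).symm⟩
end

section
/- Let p be a prime and G a finite metacyclic p-group. Then there exist elements a, b ∈ G generating G such that ⟨a⟩ is normal in G, [⟨a⟩, N_G(⟨a⟩)] = ⟨a⟩ ∩ G', [⟨b⟩, N_G(⟨b⟩)] = ⟨b⟩ ∩ G', and the images A, B of ⟨a⟩, ⟨b⟩ in the abelianization G/G' satisfy A ∩ B = 1 and A·B = G/G'. (That is, the family formed by ⟨a⟩ and the conjugates of ⟨b⟩ in G is a generating, regular and independent family of cyclic subgroups.) -/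
open Subgroup
open scoped commutatorElement

section Helpers

variable {G : Type*} [Group G]


private lemma commute_mk {N : Subgroup G} [N.Normal] (x y : G) (h : ⁅x, y⁆ ∈ N) :
    (QuotientGroup.mk' N) x * (QuotientGroup.mk' N) y
      = (QuotientGroup.mk' N) y * (QuotientGroup.mk' N) x := by
  have h1 : (QuotientGroup.mk' N) ⁅x, y⁆ = 1 := by
    rwa [← MonoidHom.mem_ker, QuotientGroup.ker_mk'] at *
  rw [map_commutatorElement] at h1
  exact (commutatorElement_eq_one_iff_commute.mp h1).eq

private lemma quot_comm (x y : G ⧸ commutator G) : x * y = y * x := by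
  induction x using QuotientGroup.induction_on with | _ g =>
  induction y using QuotientGroup.induction_on with | _ h =>
  exact commute_mk g h (by rw [commutator_def]; exact commutator_mem_commutator (mem_top g) (mem_top h))

private lemma normal_of_commutator_le {H : Subgroup G} (h : commutator G ≤ H) : H.Normal := by
  constructor
  intro n hn g
  have h1 : ⁅g, n⁆ ∈ H := h (by rw [commutator_def]; exact commutator_mem_commutator (mem_top g) (mem_top n))
  have h2 : ⁅g, n⁆ * n ∈ H := mul_mem h1 hn
  have : ⁅g, n⁆ * n = g * n * g⁻¹ := by group
  rwa [this] at h2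

private lemma inf_eq_bot_of_card_le {Q : Type*} [Group Q] [Finite Q]
    (hc : ∀ x y : Q, x * y = y * x) (H₁ H₂ : Subgroup Q)
    (hsup : H₁ ⊔ H₂ = ⊤) (hcard : Nat.card H₁ * Nat.card H₂ ≤ Nat.card Q) :
    H₁ ⊓ H₂ = ⊥ := by
  let f : H₁ × H₂ →* Q := MonoidHom.mk' (fun p => (p.1 : Q) * p.2) (by
    rintro ⟨x₁, y₁⟩ ⟨x₂, y₂⟩
    show ((x₁ * x₂ : H₁) : Q) * ((y₁ * y₂ : H₂) : Q) = _
    push_cast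
    rw [mul_assoc, ← mul_assoc (x₂ : Q), hc (x₂ : Q) (y₁ : Q), mul_assoc, mul_assoc])
  have hrange : f.range = ⊤ := by
    rw [eq_top_iff, ← hsup]
    refine sup_le ?_ ?_
    · intro x hx; exact ⟨⟨⟨x, hx⟩, 1⟩, by simp [f]⟩
    · intro x hx; exact ⟨⟨1, ⟨x, hx⟩⟩, by simp [f]⟩
  have h1 : Nat.card (H₁ × H₂) = Nat.card ((H₁ × H₂) ⧸ f.ker) * Nat.card f.ker :=
    Subgroup.card_eq_card_quotient_mul_card_subgroup f.ker
  have h2 : Nat.card ((H₁ × H₂) ⧸ f.ker) = Nat.card Q := by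
    rw [Nat.card_congr (QuotientGroup.quotientKerEquivRange f).toEquiv, hrange]
    exact Nat.card_congr (Equiv.subtypeUnivEquiv (fun x => mem_top x))
  rw [Nat.card_prod] at h1
  have hQpos : 0 < Nat.card Q := Nat.card_pos
  have hker1 : Nat.card f.ker = 1 := by
    have hle : Nat.card Q * Nat.card f.ker ≤ Nat.card Q * 1 := by
      rw [mul_one]; rw [h2] at h1; omega
    have := Nat.le_of_mul_le_mul_left hle hQpos
    have : 0 < Nat.card f.ker := Nat.card_pos
    omega
  have hker : f.ker = ⊥ := Subgroup.card_eq_one.mp hker1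
  rw [eq_bot_iff]
  intro x hx
  have hmem : (⟨⟨x, hx.1⟩, ⟨x⁻¹, inv_mem hx.2⟩⟩ : H₁ × H₂) ∈ f.ker := by
    simp [MonoidHom.mem_ker, f]
  rw [hker, Subgroup.mem_bot] at hmem
  have := congrArg (fun z => ((Prod.fst z : H₁) : Q)) hmem
  simpa using this

private lemma subgroup_eq_of_le_of_card_le [Finite G] {H K : Subgroup G}
    (hle : H ≤ K) (hc : Nat.card K ≤ Nat.card H) : H = K := by
  apply SetLike.ext'
  refine Set.eq_of_subset_of_ncard_le hle ?_ (Set.toFinite _)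
  rwa [← Nat.card_coe_set_eq, ← Nat.card_coe_set_eq]

private lemma regular_pair [Finite G] (a b : G) (hn : (zpowers a).Normal)
    (hsup : zpowers a ⊔ zpowers b = ⊤) :
    commutator G ≤ zpowers a ∧
    ⁅zpowers a, normalizer (zpowers a : Set G)⁆ = zpowers a ⊓ commutator G ∧
    ⁅zpowers b, normalizer (zpowers b : Set G)⁆ = zpowers b ⊓ commutator G := by
  set M := zpowers a with hM
  have hMcomm : ∀ x ∈ M, ∀ y ∈ M, x * y = y * x := by
    rintro x ⟨i, rfl⟩ y ⟨jj, rfl⟩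
    exact ((Commute.refl a).zpow_zpow i jj).eq
  set φ : G → G := fun m => m * (b * m⁻¹ * b⁻¹) with hφ
  have hφmem : ∀ m ∈ M, φ m ∈ M := fun m hm =>
    mul_mem hm (hn.conj_mem _ (inv_mem hm) b)
  have hφcomm : ∀ m, φ m = ⁅m, b⁆ := by
    intro m; rw [commutatorElement_def, hφ]; group
  have key : ∀ m₁ ∈ M, ∀ m₂ ∈ M, φ m₁ * φ m₂ = φ (m₁ * m₂) := by
    intro m₁ h₁ m₂ h₂
    have hu : b * m₁⁻¹ * b⁻¹ ∈ M := hn.conj_mem _ (inv_mem h₁) b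
    have hv : b * m₂⁻¹ * b⁻¹ ∈ M := hn.conj_mem _ (inv_mem h₂) b
    have hk : (b * m₁⁻¹ * b⁻¹) * (m₂ * (b * m₂⁻¹ * b⁻¹))
        = (m₂ * (b * m₂⁻¹ * b⁻¹)) * (b * m₁⁻¹ * b⁻¹) :=
      hMcomm _ hu _ (mul_mem h₂ hv)
    calc (m₁ * (b * m₁⁻¹ * b⁻¹)) * (m₂ * (b * m₂⁻¹ * b⁻¹))
        = m₁ * ((b * m₁⁻¹ * b⁻¹) * (m₂ * (b * m₂⁻¹ * b⁻¹))) := by rw [mul_assoc]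
      _ = m₁ * ((m₂ * (b * m₂⁻¹ * b⁻¹)) * (b * m₁⁻¹ * b⁻¹)) := by rw [hk]
      _ = (m₁ * m₂) * (b * (m₁ * m₂)⁻¹ * b⁻¹) := by group
  have hφone : φ 1 = 1 := by simp [hφ]
  have hφinv : ∀ m ∈ M, (φ m)⁻¹ = φ m⁻¹ := by
    intro m hm
    have h1 := key m hm m⁻¹ (inv_mem hm)
    rw [mul_inv_cancel, hφone] at h1
    exact (eq_inv_of_mul_eq_one_right h1).symm
  let S : Subgroup G :=
  { carrier := {x | ∃ m ∈ M, φ m = x}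
    one_mem' := ⟨1, one_mem M, hφone⟩
    mul_mem' := by rintro x y ⟨m₁, h₁, rfl⟩ ⟨m₂, h₂, rfl⟩; exact ⟨m₁ * m₂, mul_mem h₁ h₂, (key m₁ h₁ m₂ h₂).symm⟩
    inv_mem' := by rintro x ⟨m, h, rfl⟩; exact ⟨m⁻¹, inv_mem h, (hφinv m h).symm⟩ }
  have hSmem : ∀ x, x ∈ S ↔ ∃ m ∈ M, φ m = x := fun x => Iff.rfl
  have conj_b : ∀ m, b * φ m * b⁻¹ = φ (b * m * b⁻¹) := by intro m; simp only [hφ]; group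
  have conj_binv : ∀ m, b⁻¹ * φ m * b = φ (b⁻¹ * m * b) := by intro m; simp only [hφ]; group
  have hfix : ∀ y ∈ S, ∀ x ∈ M, x * y * x⁻¹ = y := by
    rintro y ⟨m, hm, rfl⟩ x hx
    rw [hMcomm x hx _ (hφmem m hm), mul_assoc, mul_inv_cancel, mul_one]
  have hSnormal : S.Normal := by
    rw [← normalizer_eq_top_iff, eq_top_iff, ← hsup]
    refine sup_le ?_ ?_
    · intro x hx
      rw [Subgroup.mem_normalizer_iff]
      intro h
      constructor
      · intro hh; rw [hfix h hh x hx]; exact hh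
      · intro hh
        have h1 : x⁻¹ * (x * h * x⁻¹) * (x⁻¹)⁻¹ = x * h * x⁻¹ := hfix _ hh x⁻¹ (inv_mem hx)
        have h2 : x⁻¹ * (x * h * x⁻¹) * (x⁻¹)⁻¹ = h := by group
        rw [h2] at h1; rw [h1]; exact hh
    · rw [zpowers_le, Subgroup.mem_normalizer_iff]
      intro h
      constructor
      · rintro ⟨m, hm, rfl⟩
        exact ⟨b * m * b⁻¹, hn.conj_mem m hm b, (conj_b m).symm⟩
      · rintro ⟨m, hm, heq⟩
        have h1 : h = b⁻¹ * φ m * b := by rw [heq]; group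
        rw [h1, conj_binv]
        exact ⟨b⁻¹ * m * b, by simpa using hn.conj_mem m hm b⁻¹, rfl⟩
  haveI := hSnormal
  have hScomm : commutator G = S := by
    apply le_antisymm
    · set q := QuotientGroup.mk' S with hq
      have hab : q a * q b = q b * q a :=
        commute_mk a b ⟨a, mem_zpowers a, hφcomm a ▸ rfl⟩
      have hgen : zpowers (q a) ⊔ zpowers (q b) = ⊤ := by
        rw [← MonoidHom.map_zpowers, ← MonoidHom.map_zpowers, ← Subgroup.map_sup, hsup,
          Subgroup.map_top_of_surjective q (QuotientGroup.mk'_surjective S)]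
      have hcen : ∀ u : G ⧸ S, (u = q a ∨ u = q b) → ∀ x : G ⧸ S, u * x = x * u := by
        rintro u hu x
        have hx : x ∈ Subgroup.centralizer {u} := by
          have hle : (⊤ : Subgroup (G ⧸ S)) ≤ Subgroup.centralizer {u} := by
            rw [← hgen]
            refine sup_le (zpowers_le.mpr ?_) (zpowers_le.mpr ?_) <;>
              rw [Subgroup.mem_centralizer_iff] <;> rintro z rfl <;>
              rcases hu with rfl | rfl
            · rfl
            · exact hab.symm
            · exact hab
            · rfl
          exact hle (mem_top x)
        exact Subgroup.mem_centralizer_iff.mp hx u rfl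
      have hQcomm : ∀ x y : G ⧸ S, x * y = y * x := by
        intro x y
        have hy : x ∈ Subgroup.centralizer {y} := by
          have hle : (⊤ : Subgroup (G ⧸ S)) ≤ Subgroup.centralizer {y} := by
            rw [← hgen]
            refine sup_le (zpowers_le.mpr ?_) (zpowers_le.mpr ?_) <;>
              rw [Subgroup.mem_centralizer_iff] <;> rintro z rfl
            · exact (hcen (q a) (Or.inl rfl) z).symm
            · exact (hcen (q b) (Or.inr rfl) z).symm
          exact hle (mem_top x)
        exact (Subgroup.mem_centralizer_iff.mp hy y rfl).symm
      rw [_root_.commutator_def, Subgroup.commutator_le]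
      intro g₁ _ g₂ _
      rw [← QuotientGroup.ker_mk' S, MonoidHom.mem_ker, map_commutatorElement]
      exact commutatorElement_eq_one_iff_commute.mpr (hQcomm _ _)
    · rintro x ⟨m, hm, rfl⟩
      rw [hφcomm m, _root_.commutator_def]
      exact commutator_mem_commutator (mem_top m) (mem_top b)
  have o1 : commutator G ≤ M := by
    rw [hScomm]; rintro x ⟨m, hm, rfl⟩; exact hφmem m hm
  refine ⟨o1, ?_, ?_⟩
  · rw [Subgroup.normalizer_eq_top_iff.mpr hn, inf_eq_right.mpr o1]
    apply le_antisymm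
    · rw [_root_.commutator_def]
      exact Subgroup.commutator_mono le_top le_top
    · rw [hScomm]; rintro x ⟨m, hm, rfl⟩
      rw [hφcomm m]
      exact commutator_mem_commutator hm (mem_top b)
  · set F := zpowers b with hF
    apply le_antisymm
    · refine le_inf ?_ ?_
      · rw [Subgroup.commutator_le]
        intro g₁ h₁ g₂ h₂
        have h3 : g₂ * g₁⁻¹ * g₂⁻¹ ∈ F := (Subgroup.mem_normalizer_iff.mp h₂ g₁⁻¹).mp (inv_mem h₁)
        have h4 : g₁ * (g₂ * g₁⁻¹ * g₂⁻¹) ∈ F := mul_mem h₁ h3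
        have h5 : g₁ * (g₂ * g₁⁻¹ * g₂⁻¹) = ⁅g₁, g₂⁆ := by rw [commutatorElement_def]; group
        rwa [h5] at h4
      · calc ⁅F, normalizer (F : Set G)⁆ ≤ ⁅⊤, ⊤⁆ := Subgroup.commutator_mono le_top le_top
          _ = commutator G := (_root_.commutator_def G).symm
    · rintro x ⟨hxF, hxC⟩
      rw [hScomm] at hxC
      obtain ⟨m, hm, rfl⟩ := hxC
      have hconj : m * b * m⁻¹ ∈ F := by
        have h6 : φ m * b ∈ F := mul_mem hxF (mem_zpowers b)
        have he : φ m * b = m * b * m⁻¹ := by rw [hφ]; group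
        rwa [he] at h6
      have hmaple : F.map (MulAut.conj m).toMonoidHom ≤ F := by
        rw [hF, MonoidHom.map_zpowers, zpowers_le]
        simpa using hconj
      have hcards : Nat.card F ≤ Nat.card (F.map (MulAut.conj m).toMonoidHom) :=
        le_of_eq (Nat.card_congr (Subgroup.equivMapOfInjective F _ (MulAut.conj m).injective).toEquiv)
      have hmapeq : F.map (MulAut.conj m).toMonoidHom = F :=
        subgroup_eq_of_le_of_card_le hmaple hcards
      have hmn : m ∈ normalizer (F : Set G) := by
        rw [Subgroup.mem_normalizer_iff]
        intro h
        constructor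
        · intro hh
          have h7 : (MulAut.conj m).toMonoidHom h ∈ F.map (MulAut.conj m).toMonoidHom :=
            Subgroup.mem_map_of_mem _ hh
          rw [hmapeq] at h7
          simpa using h7
        · intro hh
          rw [← hmapeq] at hh
          obtain ⟨h', hh', heq⟩ := hh
          have h8 : h' = h := by
            have := heq
            simp only [MulEquiv.coe_toMonoidHom, MulAut.conj_apply] at this
            exact mul_left_cancel (mul_right_cancel this)
          rwa [← h8]
      have h9 : φ m ∈ ⁅normalizer (F : Set G), F⁆ := by
        rw [hφcomm m]
        exact commutator_mem_commutator hmn (mem_zpowers b)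
      rwa [Subgroup.commutator_comm] at h9

private lemma assemble [Finite G] (a b : G) (hn : (zpowers a).Normal)
    (hsup : zpowers a ⊔ zpowers b = ⊤)
    (hcard : orderOf ((QuotientGroup.mk' (commutator G)) a) *
        orderOf ((QuotientGroup.mk' (commutator G)) b) ≤ Nat.card (G ⧸ commutator G)) :
    Subgroup.closure ({a, b} : Set G) = ⊤ ∧
      (zpowers a).Normal ∧
      ⁅zpowers a, normalizer (zpowers a : Set G)⁆ = zpowers a ⊓ commutator G ∧
      ⁅zpowers b, normalizer (zpowers b : Set G)⁆ = zpowers b ⊓ commutator G ∧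
      (zpowers a).map (QuotientGroup.mk' (commutator G)) ⊓
          (zpowers b).map (QuotientGroup.mk' (commutator G)) = ⊥ ∧
      (zpowers a).map (QuotientGroup.mk' (commutator G)) ⊔
          (zpowers b).map (QuotientGroup.mk' (commutator G)) = ⊤ := by
  obtain ⟨o1, o2, o3⟩ := regular_pair a b hn hsup
  set π := QuotientGroup.mk' (commutator G) with hπ
  have hclosure : Subgroup.closure ({a, b} : Set G) = ⊤ := by
    rw [show ({a, b} : Set G) = {a} ∪ {b} by rfl, Subgroup.closure_union,
      ← Subgroup.zpowers_eq_closure, ← Subgroup.zpowers_eq_closure, hsup]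
  have hsupm : (zpowers a).map π ⊔ (zpowers b).map π = ⊤ := by
    rw [← Subgroup.map_sup, hsup, Subgroup.map_top_of_surjective _ (QuotientGroup.mk'_surjective _)]
  have hinfm : (zpowers a).map π ⊓ (zpowers b).map π = ⊥ := by
    apply inf_eq_bot_of_card_le quot_comm _ _ hsupm
    rw [MonoidHom.map_zpowers, MonoidHom.map_zpowers, Nat.card_zpowers, Nat.card_zpowers]
    exact hcard
  exact ⟨hclosure, hn, o2, o3, hinfm, hsupm⟩

end Helpers

/-- Let `p` be a prime and `G` a finite metacyclic `p`-group. Then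
there are generators `a, b` of `G` with `⟨a⟩` normal such that `⟨a⟩` and `⟨b⟩` are
regular (`[F, N_G(F)] = F ∩ G'`) and the images `A`, `B` of `⟨a⟩`, `⟨b⟩` in the
abelianization satisfy `A ∩ B = 1` and `A·B = G/G'`; i.e. the family formed by `⟨a⟩` and
the conjugates of `⟨b⟩` is a generating, regular and independent family of cyclic
subgroups. -/
theorem metacyclic_p_group_regular_independent_family {G : Type*} [Group G] [Fintype G]
    (p : ℕ) (hp : p.Prime) (hpG : IsPGroup p G)
    (K : Subgroup G) (hKn : K.Normal) (hKc : IsCyclic K) (hQc : IsCyclic (G ⧸ K)) :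
    ∃ a b : G, Subgroup.closure ({a, b} : Set G) = ⊤ ∧
      (Subgroup.zpowers a).Normal ∧
      ⁅Subgroup.zpowers a, Subgroup.normalizer (Subgroup.zpowers a : Set G)⁆ =
        Subgroup.zpowers a ⊓ commutator G ∧
      ⁅Subgroup.zpowers b, Subgroup.normalizer (Subgroup.zpowers b : Set G)⁆ =
        Subgroup.zpowers b ⊓ commutator G ∧
      (Subgroup.zpowers a).map (QuotientGroup.mk' (commutator G)) ⊓
          (Subgroup.zpowers b).map (QuotientGroup.mk' (commutator G)) = ⊥ ∧
      (Subgroup.zpowers a).map (QuotientGroup.mk' (commutator G)) ⊔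
          (Subgroup.zpowers b).map (QuotientGroup.mk' (commutator G)) = ⊤ := by
  classical
  haveI : Fact p.Prime := ⟨hp⟩
  haveI := hKn
  obtain ⟨gK, hgK⟩ := hKc.exists_generator
  set k : G := (gK : G) with hk
  have hK : zpowers k = K := by
    apply le_antisymm (zpowers_le.mpr gK.2)
    intro x hx
    obtain ⟨i, hi⟩ := hgK ⟨x, hx⟩
    refine ⟨i, ?_⟩
    have := congrArg Subtype.val hi
    simpa using this
  obtain ⟨gQ, hgQ⟩ := hQc.exists_generator
  obtain ⟨t, ht⟩ := QuotientGroup.mk'_surjective K gQ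
  set q : ℕ := Nat.card (G ⧸ K) with hq
  have hordgQ : orderOf gQ = q := orderOf_eq_card_of_forall_mem_zpowers hgQ
  have htq : t ^ q ∈ K := by
    have h1 : (QuotientGroup.mk' K) (t ^ q) = 1 := by
      rw [map_pow, ht, ← hordgQ, pow_orderOf_eq_one]
    rwa [← MonoidHom.mem_ker, QuotientGroup.ker_mk'] at h1
  obtain ⟨j, hj⟩ : ∃ j : ℤ, k ^ j = t ^ q := by rw [← hK] at htq; exact htq
  set π := QuotientGroup.mk' (commutator G) with hπ
  set d : ℕ := orderOf (π k) with hd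
  have hDK : commutator G ≤ K := by
    rw [_root_.commutator_def, Subgroup.commutator_le]
    intro g₁ _ g₂ _
    rw [← QuotientGroup.ker_mk' K, MonoidHom.mem_ker, map_commutatorElement]
    apply commutatorElement_eq_one_iff_commute.mpr
    obtain ⟨i₁, e₁⟩ := hgQ ((QuotientGroup.mk' K) g₁)
    obtain ⟨i₂, e₂⟩ := hgQ ((QuotientGroup.mk' K) g₂)
    have e₁' : gQ ^ i₁ = (QuotientGroup.mk' K) g₁ := e₁
    have e₂' : gQ ^ i₂ = (QuotientGroup.mk' K) g₂ := e₂
    rw [← e₁', ← e₂']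
    exact (Commute.refl gQ).zpow_zpow i₁ i₂
  have horderk : orderOf k = Nat.card K :=
    (orderOf_injective K.subtype K.subtype_injective gK).trans
      (orderOf_eq_card_of_forall_mem_zpowers hgK)
  have hKcard : Nat.card K = d * Nat.card (commutator G) := by
    have h1 : Nat.card K = Nat.card (K ⧸ (commutator G).subgroupOf K) *
        Nat.card ((commutator G).subgroupOf K) :=
      Subgroup.card_eq_card_quotient_mul_card_subgroup _
    have e1 : Nat.card ((commutator G).subgroupOf K) = Nat.card (commutator G) :=
      Nat.card_congr (Subgroup.subgroupOfEquivOfLe hDK).toEquiv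
    have hker : (π.comp K.subtype).ker = (commutator G).subgroupOf K := by
      ext y
      rw [MonoidHom.mem_ker, MonoidHom.comp_apply, Subgroup.mem_subgroupOf]
      exact QuotientGroup.eq_one_iff _
    have hrange : (π.comp K.subtype).range = zpowers (π k) := by
      rw [MonoidHom.range_comp, Subgroup.range_subtype, ← hK, MonoidHom.map_zpowers]
    have e2 : Nat.card (K ⧸ (commutator G).subgroupOf K) = d := by
      calc Nat.card (K ⧸ (commutator G).subgroupOf K)
          = Nat.card (π.comp K.subtype).range := by
            rw [← hker]
            exact Nat.card_congr (QuotientGroup.quotientKerEquivRange _).toEquiv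
        _ = d := by rw [hrange, Nat.card_zpowers]
    rw [h1, e1, e2]
  have hDpos : 0 < Nat.card (commutator G) := Nat.card_pos
  have hqpos : 0 < q := Nat.card_pos
  have hdpos : 0 < d := orderOf_pos (π k)
  have hAbcard : Nat.card (G ⧸ commutator G) = d * q := by
    have h1 : Nat.card G = Nat.card (G ⧸ commutator G) * Nat.card (commutator G) :=
      Subgroup.card_eq_card_quotient_mul_card_subgroup _
    have h2 : Nat.card G = Nat.card (G ⧸ K) * Nat.card K :=
      Subgroup.card_eq_card_quotient_mul_card_subgroup _
    rw [hKcard, ← hq] at h2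
    have h3 : Nat.card (G ⧸ commutator G) * Nat.card (commutator G)
        = (d * q) * Nat.card (commutator G) := by
      rw [← h1, h2]; ring
    exact Nat.eq_of_mul_eq_mul_right hDpos h3
  have hAbpos : 0 < Nat.card (G ⧸ commutator G) := Nat.card_pos
  obtain ⟨un, hqpow⟩ : ∃ n, q = p ^ n := (hpG.to_quotient K).exists_card_eq
  obtain ⟨kn, hkpow⟩ : ∃ n, Nat.card K = p ^ n := (hpG.to_subgroup K).exists_card_eq
  obtain ⟨sn, hdpow⟩ : ∃ n, d = p ^ n := by
    have hdvd : d ∣ Nat.card K := ⟨Nat.card (commutator G), hKcard⟩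
    rw [hkpow] at hdvd
    obtain ⟨i, _, hi⟩ := (Nat.dvd_prime_pow hp).mp hdvd
    exact ⟨i, hi⟩
  -- the common sup fact
  have hsupkt : zpowers k ⊔ zpowers t = ⊤ := by
    rw [eq_top_iff]
    intro x _
    obtain ⟨i, hi⟩ := hgQ ((QuotientGroup.mk' K) x)
    have hmem : x * (t ^ i)⁻¹ ∈ K := by
      have : (QuotientGroup.mk' K) (x * (t ^ i)⁻¹) = 1 := by
        have hi' : gQ ^ i = (QuotientGroup.mk' K) x := hi
        rw [map_mul, map_inv, map_zpow, ht, hi', mul_inv_cancel]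
      rwa [← MonoidHom.mem_ker, QuotientGroup.ker_mk'] at this
    have : x = (x * (t ^ i)⁻¹) * t ^ i := by group
    rw [this]
    exact mul_mem (le_sup_left (α := Subgroup G) (by rwa [hK]))
      (le_sup_right (α := Subgroup G) (zpow_mem (mem_zpowers t) i))
  by_cases hI : ∃ c : ℤ, (d : ℤ) ∣ j - c * q
  · obtain ⟨c, hc⟩ := hI
    set b := t * k ^ (-c) with hb
    have hnA : (zpowers k).Normal := by rw [hK]; exact hKn
    have hsupab : zpowers k ⊔ zpowers b = ⊤ := by
      rw [eq_top_iff, ← hsupkt]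
      refine sup_le le_sup_left (zpowers_le.mpr ?_)
      have ht' : t = b * k ^ c := by rw [hb]; group
      rw [ht']
      exact mul_mem (mem_sup_right (mem_zpowers b)) (mem_sup_left (zpow_mem (mem_zpowers k) c))
    have hordb : (π b) ^ q = 1 := by
      have hbq : π b = π t * (π k) ^ (-c) := by rw [hb, map_mul, map_zpow]
      have hcom : Commute (π t) ((π k) ^ (-c)) := quot_comm _ _
      have h1 : (π t) ^ q = (π k) ^ j := by rw [← map_pow, ← hj, map_zpow]
      have h2 : ((π k) ^ (-c)) ^ q = (π k) ^ (-c * (q:ℤ)) := by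
        rw [← zpow_natCast ((π k) ^ (-c)) q, ← zpow_mul]
      rw [hbq, hcom.mul_pow, h1, h2, ← zpow_add]
      apply orderOf_dvd_iff_zpow_eq_one.mp
      rw [← hd]
      have hee : j + -c * (q:ℤ) = j - c * (q:ℤ) := by ring
      rw [hee]; exact hc
    have hordbdvd : orderOf (π b) ∣ q := orderOf_dvd_of_pow_eq_one hordb
    have hcard : orderOf (π k) * orderOf (π b) ≤ Nat.card (G ⧸ _root_.commutator G) := by
      rw [hAbcard, ← hd]
      exact Nat.mul_le_mul_left d (Nat.le_of_dvd hqpos hordbdvd)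
    exact ⟨k, b, assemble k b hnA hsupab hcard⟩
  · set g : ℕ := Int.gcd j (d:ℤ) with hg
    have hgj : ((g:ℤ)) ∣ j := Int.gcd_dvd_left _ _
    have hgd : g ∣ d := by
      have h1 : ((g:ℤ)) ∣ ((d:ℤ)) := Int.gcd_dvd_right _ _
      exact_mod_cast h1
    have hnotdj : ¬ ((d:ℤ) ∣ j) := fun h => hI ⟨0, by simpa using h⟩
    have hnotqj : ¬ ((q:ℤ) ∣ j) := by
      rintro ⟨c, hc⟩
      refine hI ⟨c, ?_⟩
      rw [hc]; ring_nf; exact dvd_zero _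
    obtain ⟨w, hw, hgw⟩ := (Nat.dvd_prime_pow hp).mp (hdpow ▸ hgd)
    have hwlt : w < sn := by
      rcases Nat.lt_or_ge w sn with h | h
      · exact h
      · exfalso
        apply hnotdj
        refine dvd_trans ?_ hgj
        have h2 : d ∣ g := by rw [hdpow, hgw]; exact pow_dvd_pow p h
        exact_mod_cast h2
    have hgq : g ∣ q := by
      by_contra h
      have hlt : un < w := by
        by_contra h2
        exact h (by rw [hgw, hqpow]; exact pow_dvd_pow p (Nat.le_of_not_lt h2))
      apply hnotqj
      refine dvd_trans ?_ hgj
      have h2 : q ∣ g := by rw [hgw, hqpow]; exact pow_dvd_pow p hlt.le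
      exact_mod_cast h2
    have hgpos : 0 < g := by rw [hgw]; exact pow_pos hp.pos w
    set x : ℤ := Int.gcdA j (d:ℤ) with hxx
    have hbez : ((g:ℤ)) = j * x + (d:ℤ) * Int.gcdB j (d:ℤ) := Int.gcd_eq_gcd_ab j (d:ℤ)
    have hdvd_gjx : (d:ℤ) ∣ (g:ℤ) - j * x := ⟨Int.gcdB j (d:ℤ), by linarith⟩
    have hDt : _root_.commutator G ≤ zpowers t := by
      have hsolv : ((Int.gcd j ((Nat.card K : ℤ)) : ℤ)) ∣ (d:ℤ) := by
        set G₀ : ℕ := Int.gcd j ((Nat.card K : ℤ)) with hG0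
        have h1 : G₀ ∣ Nat.card K := by
          have h2 : ((G₀:ℤ)) ∣ ((Nat.card K : ℤ)) := Int.gcd_dvd_right _ _
          exact_mod_cast h2
        obtain ⟨w', _, hw'⟩ := (Nat.dvd_prime_pow hp).mp (hkpow ▸ h1)
        have hw'le : w' ≤ w := by
          by_contra h2
          have d1 : ((p:ℤ)) ^ (w+1) ∣ j := by
            refine dvd_trans ?_ (Int.gcd_dvd_left (a := j) (b := ((Nat.card K : ℤ))))
            have h3 : (p:ℕ) ^ (w+1) ∣ G₀ := by
              rw [hw']; exact pow_dvd_pow p (Nat.succ_le_of_lt (Nat.lt_of_not_le h2))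
            exact_mod_cast h3
          have d2 : ((p:ℤ)) ^ (w+1) ∣ ((d:ℤ)) := by
            have h3 : (p:ℕ) ^ (w+1) ∣ d := by
              rw [hdpow]; exact pow_dvd_pow p (Nat.succ_le_of_lt hwlt)
            exact_mod_cast h3
          have d3 : (p:ℕ) ^ (w+1) ∣ g := by
            have h4 := Int.dvd_gcd d1 d2
            exact_mod_cast h4
          rw [hgw] at d3
          have := (Nat.pow_dvd_pow_iff_le_right hp.one_lt).mp d3
          omega
        have h5 : ((G₀:ℤ)) ∣ (g:ℤ) := by
          have h6 : G₀ ∣ g := by rw [hw', hgw]; exact pow_dvd_pow p hw'le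
          exact_mod_cast h6
        exact dvd_trans h5 (by exact_mod_cast hgd)
      obtain ⟨z, hz⟩ : ∃ z : ℤ, (Nat.card K : ℤ) ∣ j * z - (d:ℤ) := by
        obtain ⟨e, he⟩ := hsolv
        refine ⟨Int.gcdA j ((Nat.card K : ℤ)) * e, ?_⟩
        have hb2 : ((Int.gcd j ((Nat.card K : ℤ)) : ℤ)) =
            j * Int.gcdA j ((Nat.card K : ℤ)) + (Nat.card K) * Int.gcdB j ((Nat.card K : ℤ)) :=
          Int.gcd_eq_gcd_ab _ _
        refine ⟨-(Int.gcdB j ((Nat.card K : ℤ)) * e), ?_⟩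
        linear_combination -e * hb2 - he
      have hkd : k ^ (d:ℤ) ∈ zpowers t := by
        have h1 : (t ^ q) ^ z ∈ zpowers t := zpow_mem (pow_mem (mem_zpowers t) q) z
        have h2 : (t ^ q) ^ z = k ^ (d:ℤ) := by
          have h3 : k ^ (j * z - (d:ℤ)) = 1 := by
            apply orderOf_dvd_iff_zpow_eq_one.mp
            rw [horderk]; exact hz
          rw [zpow_sub] at h3
          rw [← hj, ← zpow_mul]
          exact mul_inv_eq_one.mp h3
        rwa [h2] at h1
      intro δ hδ
      have hδK : δ ∈ zpowers k := by rw [hK]; exact hDK hδ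
      obtain ⟨i, hi⟩ := hδK
      have hi' : k ^ i = δ := hi
      have hδpow : δ ^ Nat.card (_root_.commutator G) = 1 := by
        have h4 : (((⟨δ, hδ⟩ : _root_.commutator G) ^ Nat.card (_root_.commutator G) :
            _root_.commutator G) : G) = 1 := by rw [pow_card_eq_one']; rfl
        rwa [SubgroupClass.coe_pow] at h4
      have h5 : (orderOf k : ℤ) ∣ i * (Nat.card (_root_.commutator G) : ℤ) := by
        apply orderOf_dvd_iff_zpow_eq_one.mpr
        rw [zpow_mul, hi', zpow_natCast, hδpow]
      rw [horderk, hKcard] at h5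
      have hdi : (d:ℤ) ∣ i := by
        obtain ⟨e, he⟩ := h5
        refine ⟨e, ?_⟩
        have hcD : ((Nat.card (_root_.commutator G) : ℤ)) ≠ 0 := by
          exact_mod_cast hDpos.ne'
        apply mul_right_cancel₀ hcD
        push_cast at he ⊢
        linarith [he]
      obtain ⟨e, he⟩ := hdi
      have h6 : δ = (k ^ (d:ℤ)) ^ e := by rw [← zpow_mul, ← he, hi']
      rw [h6]
      exact zpow_mem hkd e
    have hnA : (zpowers t).Normal := normal_of_commutator_le hDt
    set b := k * t ^ (-(((q / g : ℕ) : ℤ) * x)) with hb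
    have hsupab : zpowers t ⊔ zpowers b = ⊤ := by
      rw [eq_top_iff, ← hsupkt]
      refine sup_le (zpowers_le.mpr ?_) le_sup_left
      have hk' : k = b * t ^ ((((q / g : ℕ) : ℤ)) * x) := by rw [hb]; group
      rw [hk']
      exact mul_mem (mem_sup_right (mem_zpowers b)) (mem_sup_left (zpow_mem (mem_zpowers t) _))
    have hqgg : ((q / g : ℕ) : ℤ) * (g:ℤ) = (q:ℤ) := by
      exact_mod_cast congrArg (Nat.cast : ℕ → ℤ) (Nat.div_mul_cancel hgq)
    have h1 : (π t) ^ q = (π k) ^ j := by rw [← map_pow, ← hj, map_zpow]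
    have hordb : (π b) ^ g = 1 := by
      have hbq : π b = π k * (π t) ^ (-(((q / g : ℕ) : ℤ) * x)) := by rw [hb, map_mul, map_zpow]
      have hcom : Commute (π k) ((π t) ^ (-(((q / g : ℕ) : ℤ) * x))) := quot_comm _ _
      have h2 : ((π t) ^ (-(((q / g : ℕ) : ℤ) * x))) ^ g = (π k) ^ (-(j * x)) := by
        rw [← zpow_natCast ((π t) ^ (-(((q / g : ℕ) : ℤ) * x))) g, ← zpow_mul]
        have hexp : (-(((q / g : ℕ) : ℤ) * x)) * (g:ℤ) = (q:ℤ) * (-x) := by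
          have h3 : (-(((q / g : ℕ) : ℤ) * x)) * (g:ℤ) = -(x * (((q / g : ℕ) : ℤ) * (g:ℤ))) := by
            ring
          rw [h3, hqgg]; ring
        rw [hexp, zpow_mul, zpow_natCast, h1, ← zpow_mul]
        congr 1; ring
      rw [hbq, hcom.mul_pow, h2, ← zpow_natCast (π k) g, ← zpow_add]
      apply orderOf_dvd_iff_zpow_eq_one.mp
      rw [← hd]
      have hee : (g:ℤ) + -(j * x) = (g:ℤ) - j * x := by ring
      rw [hee]; exact hdvd_gjx
    have horda : (π t) ^ (q * (d / g)) = 1 := by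
      obtain ⟨j₀, hj₀⟩ := hgj
      rw [pow_mul, h1, ← zpow_natCast ((π k) ^ j) (d / g), ← zpow_mul]
      have hdg : ((d / g : ℕ) : ℤ) * (g:ℤ) = (d:ℤ) := by
        exact_mod_cast congrArg (Nat.cast : ℕ → ℤ) (Nat.div_mul_cancel hgd)
      have hexp : j * ((d / g : ℕ) : ℤ) = (d:ℤ) * j₀ := by
        rw [hj₀]; linear_combination j₀ * hdg
      rw [hexp, zpow_mul, zpow_natCast]
      have h7 : (π k) ^ d = 1 := by rw [hd]; exact pow_orderOf_eq_one _
      rw [h7, one_zpow]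
    have hcard : orderOf (π t) * orderOf (π b) ≤ Nat.card (G ⧸ _root_.commutator G) := by
      have da : orderOf (π t) ∣ q * (d / g) := orderOf_dvd_of_pow_eq_one horda
      have db : orderOf (π b) ∣ g := orderOf_dvd_of_pow_eq_one hordb
      have hdgpos : 0 < d / g := Nat.div_pos (Nat.le_of_dvd hdpos hgd) hgpos
      have hprod : (q * (d / g)) * g = d * q := by
        rw [mul_assoc, Nat.div_mul_cancel hgd]; ring
      rw [hAbcard, ← hprod]
      exact Nat.mul_le_mul (Nat.le_of_dvd (Nat.mul_pos hqpos hdgpos) da)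
        (Nat.le_of_dvd hgpos db)
    exact ⟨t, b, assemble t b hnA hsupab hcard⟩
end
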